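/- arXiv:1305.5443 — 5 statements merged into one kernel-verified Lean document; each statement's English description precedes it below -/
import Mathlib

section
/- Let S be a set of primes, let χ : ℕ → ℝ be a multiplicative function taking values in {0,1} that is characteristic on S, and let A = {n ∈ ℕ : χ(n) = 1}. Then: (i) if S has a Dirichlet density δ(S), then the limit lim_{z→1⁺} log(D_χ(z)) / log(ζ(z)) (over real z > 1, where D_χ(z) ≥ 1 and ζ(z) > 1 are real for real z > 1) exists and equals δ(S); (ii) if A has a Dedekind-Dirichlet density δ(A), then lim_{z→1⁺} D_χ(z)/ζ(z) exists and equals δ(A). -/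
open Filter Topology

private lemma log_one_add_ge {x : ℝ} (hx : 0 ≤ x) : x - x ^ 2 ≤ Real.log (1 + x) := by
  have h1 : (0:ℝ) < 1 + x := by linarith
  have h2 : Real.log (1 + x)⁻¹ ≤ (1 + x)⁻¹ - 1 := Real.log_le_sub_one_of_pos (by positivity)
  rw [Real.log_inv] at h2
  have h3 : 1 - (1 + x)⁻¹ ≤ Real.log (1 + x) := by linarith
  have h4 : x - x ^ 2 ≤ 1 - (1 + x)⁻¹ := by
    have : 1 - (1 + x)⁻¹ = x / (1 + x) := by field_simp; ring
    rw [this, le_div_iff₀ h1]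
    nlinarith
  linarith

/-- The zeta sum written with `(n:ℝ) ^ (-z)` has residue 1 at `z = 1`. -/
private lemma tendsto_sub_mul_zeta :
    Tendsto (fun z : ℝ => (z - 1) * ∑' n : ℕ, (n : ℝ) ^ (-z)) (𝓝[>] 1) (𝓝 1) := by
  have := tendsto_sub_mul_tsum_nat_rpow
  refine this.congr fun z => ?_
  congr 1
  refine tsum_congr fun n => ?_
  rw [Real.rpow_neg (Nat.cast_nonneg n), one_div]

set_option maxHeartbeats 1000000 in
private lemma key_bound (S : Set ℕ) (hS : ∀ p ∈ S, Nat.Prime p)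
    (χ : ℕ → ℝ) (hχ1 : χ 1 = 1)
    (hχmul : ∀ m n : ℕ, Nat.Coprime m n → χ (m * n) = χ m * χ n)
    (hχval : ∀ n : ℕ, χ n = 0 ∨ χ n = 1)
    (hchar : ∀ p : ℕ, Nat.Prime p → (χ p = 1 ↔ p ∈ S)) :
    ∃ C : ℝ, ∀ z : ℝ, 1 < z →
      |Real.log (∑' n : ℕ, χ n * (n : ℝ) ^ (-z)) - ∑' p : S, ((p : ℕ) : ℝ) ^ (-z)| ≤ C := by
  classical
  have hg0 : Summable (fun n : ℕ => 2 * (((n : ℕ) : ℝ) ^ 2)⁻¹) := by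
    have : Summable (fun n : ℕ => ((n : ℝ) ^ 2)⁻¹) := by
      simpa [one_div] using Real.summable_one_div_nat_pow.mpr (by norm_num : 2 ≤ 2)
    exact this.mul_left 2
  have hgsum : Summable (fun p : Nat.Primes => 2 * (((p : ℕ) : ℝ) ^ 2)⁻¹) :=
    hg0.comp_injective Subtype.val_injective
  refine ⟨∑' p : Nat.Primes, 2 * (((p : ℕ) : ℝ) ^ 2)⁻¹, fun z hz => ?_⟩
  have hz0 : -z ≠ 0 := by intro h; nlinarith [neg_eq_zero.mp h]
  have hχnn : ∀ n, 0 ≤ χ n := fun n => by rcases hχval n with h | h <;> simp [h]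
  have hχle : ∀ n, χ n ≤ 1 := fun n => by rcases hχval n with h | h <;> simp [h]
  have hnn : ∀ n : ℕ, 0 ≤ (n : ℝ) ^ (-z) := fun n => Real.rpow_nonneg (Nat.cast_nonneg n) _
  set f : ℕ → ℝ := fun n => χ n * (n : ℝ) ^ (-z) with hfdef
  have hf0 : f 0 = 0 := by simp [hfdef, Real.zero_rpow hz0]
  have hf1 : f 1 = 1 := by simp [hfdef, hχ1]
  have hfnonneg : ∀ n, 0 ≤ f n := fun n => mul_nonneg (hχnn n) (hnn n)
  have hfle : ∀ n, f n ≤ (n : ℝ) ^ (-z) := fun n =>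
    mul_le_of_le_one_left (hnn n) (hχle n)
  have hZsum : Summable (fun n : ℕ => (n : ℝ) ^ (-z)) :=
    Real.summable_nat_rpow.mpr (by linarith)
  have hfsum : Summable f := Summable.of_nonneg_of_le hfnonneg hfle hZsum
  have hfnorm : Summable (fun n => ‖f n‖) := by
    refine hfsum.congr fun n => ?_
    rw [Real.norm_eq_abs, abs_of_nonneg (hfnonneg n)]
  have hfmul : ∀ {m n : ℕ}, Nat.Coprime m n → f (m * n) = f m * f n := by
    intro m n hmn
    simp only [hfdef, hχmul m n hmn, Nat.cast_mul]
    rw [Real.mul_rpow (Nat.cast_nonneg m) (Nat.cast_nonneg n)]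
    ring
  have hD1 : 1 ≤ ∑' n, f n := by
    have := Summable.le_tsum hfsum 1 fun j _ => hfnonneg j
    rwa [hf1] at this
  have hD0 : (0:ℝ) < ∑' n, f n := lt_of_lt_of_le one_pos hD1
  have hprod : HasProd (fun p : Nat.Primes => ∑' e : ℕ, f ((p : ℕ) ^ e)) (∑' n, f n) :=
    EulerProduct.eulerProduct_hasProd hf1 hfmul hfnorm hf0
  -- per-prime facts
  have hper : ∀ p : Nat.Primes, 1 ≤ (∑' e : ℕ, f ((p : ℕ) ^ e)) ∧
      |Real.log (∑' e : ℕ, f ((p : ℕ) ^ e)) - χ (p : ℕ) * ((p : ℕ) : ℝ) ^ (-z)|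
        ≤ 2 * (((p : ℕ) : ℝ) ^ 2)⁻¹ := by
    intro p
    obtain ⟨q, hq⟩ := p
    simp only
    set t : ℝ := ((q : ℕ) : ℝ) ^ (-z) with htdef
    have hq2 : 2 ≤ q := hq.two_le
    have hq1R : (1:ℝ) ≤ (q : ℝ) := by exact_mod_cast hq.one_lt.le
    have hq0R : (0:ℝ) < (q : ℝ) := by positivity
    have ht0 : 0 < t := Real.rpow_pos_of_pos hq0R _
    have htinv : t ≤ (q : ℝ)⁻¹ := by
      have h1 : t ≤ (q : ℝ) ^ (-1 : ℝ) :=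
        Real.rpow_le_rpow_of_exponent_le hq1R (by linarith)
      rwa [Real.rpow_neg_one] at h1
    have ht12 : t ≤ 1 / 2 := by
      refine htinv.trans ?_
      rw [one_div]
      exact inv_anti₀ (by norm_num) (by exact_mod_cast hq2)
    have ht1 : t < 1 := by linarith
    have hpe : ∀ e : ℕ, ((q ^ e : ℕ) : ℝ) ^ (-z) = t ^ e := by
      intro e
      push_cast
      rw [← Real.rpow_natCast ((q : ℝ) ^ (-z)) e, ← Real.rpow_natCast (q : ℝ) e,
        ← Real.rpow_mul hq0R.le, ← Real.rpow_mul hq0R.le, mul_comm]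
    set g : ℕ → ℝ := fun e => f (q ^ e) with hgdef
    have hgnn : ∀ e, 0 ≤ g e := fun e => hfnonneg _
    have hgle : ∀ e, g e ≤ t ^ e := fun e => by
      have := hfle (q ^ e); rwa [hpe e] at this
    have hgeo : Summable (fun e : ℕ => t ^ e) := summable_geometric_of_lt_one ht0.le ht1
    have hgsum' : Summable g := Summable.of_nonneg_of_le hgnn hgle hgeo
    have hg0' : g 0 = 1 := by simp [hgdef, hf1]
    have hg1' : g 1 = χ q * t := by simp [hgdef, hfdef, htdef]
    have hF1 : 1 ≤ ∑' e, g e := by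
      have := Summable.le_tsum hgsum' 0 fun j _ => hgnn j
      rwa [hg0'] at this
    have hFpos : (0:ℝ) < ∑' e, g e := lt_of_lt_of_le one_pos hF1
    have hgs1 : Summable (fun e => g (e + 1)) := by
      rwa [summable_nat_add_iff 1]
    have hgs2 : Summable (fun e => g (e + 2)) := by
      rwa [summable_nat_add_iff 2]
    have e1 : ∑' e, g e = g 0 + ∑' e, g (e + 1) := Summable.tsum_eq_zero_add hgsum'
    have e2 : ∑' e, g (e + 1) = g 1 + ∑' e, g (e + 2) := by
      have := Summable.tsum_eq_zero_add hgs1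
      simpa using this
    have htail : ∑' e, g (e + 2) ≤ 2 * t ^ 2 := by
      have h1 : ∑' e, g (e + 2) ≤ ∑' e : ℕ, t ^ (e + 2) := by
        refine Summable.tsum_le_tsum (fun e => hgle (e + 2)) hgs2 ?_
        · exact (summable_nat_add_iff 2).mpr hgeo
      have h2 : ∑' e : ℕ, t ^ (e + 2) = t ^ 2 * (1 - t)⁻¹ := by
        have : ∀ e : ℕ, t ^ (e + 2) = t ^ 2 * t ^ e := fun e => by ring
        rw [tsum_congr this, tsum_mul_left, tsum_geometric_of_lt_one ht0.le ht1]
      have h3 : (1 - t)⁻¹ ≤ 2 := by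
        rw [inv_le_comm₀ (by linarith) (by norm_num)]
        linarith
      calc ∑' e, g (e + 2) ≤ t ^ 2 * (1 - t)⁻¹ := by rw [← h2]; exact h1
        _ ≤ t ^ 2 * 2 := by nlinarith
        _ = 2 * t ^ 2 := by ring
    have hFle : ∑' e, g e ≤ 1 + χ q * t + 2 * t ^ 2 := by
      rw [e1, e2, hg0', hg1']
      linarith
    have hFge : 1 + χ q * t ≤ ∑' e, g e := by
      have hs : ∑ e ∈ Finset.range 2, g e ≤ ∑' e, g e :=
        Summable.sum_le_tsum _ (fun i _ => hgnn i) hgsum'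
      rwa [Finset.sum_range_succ, Finset.sum_range_one, hg0', hg1'] at hs
    have hlogup : Real.log (∑' e, g e) ≤ χ q * t + 2 * t ^ 2 := by
      have := Real.log_le_sub_one_of_pos hFpos
      linarith
    have hloglo : χ q * t - t ^ 2 ≤ Real.log (∑' e, g e) := by
      have hx0 : 0 ≤ χ q * t := mul_nonneg (hχnn q) ht0.le
      have h1 : Real.log (1 + χ q * t) ≤ Real.log (∑' e, g e) :=
        Real.log_le_log (by positivity) hFge
      have h2 : χ q * t - (χ q * t) ^ 2 ≤ Real.log (1 + χ q * t) := log_one_add_ge hx0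
      have h3 : (χ q * t) ^ 2 ≤ t ^ 2 := by
        nlinarith [mul_nonneg (mul_nonneg (sub_nonneg.mpr (hχle q))
          (by linarith [hχnn q] : (0:ℝ) ≤ 1 + χ q)) (sq_nonneg t)]
      linarith
    have habs : |Real.log (∑' e, g e) - χ q * t| ≤ 2 * t ^ 2 :=
      abs_le.mpr ⟨by linarith, by linarith⟩
    have hbnd : 2 * t ^ 2 ≤ 2 * ((q : ℝ) ^ 2)⁻¹ := by
      have h1 : t ^ 2 ≤ ((q : ℝ)⁻¹) ^ 2 := by
        exact pow_le_pow_left₀ ht0.le htinv 2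
      rw [← inv_pow]
      linarith
    exact ⟨hF1, habs.trans hbnd⟩
  -- from HasProd to HasSum of logs
  have hFpos : ∀ p : Nat.Primes, (0:ℝ) < ∑' e : ℕ, f ((p : ℕ) ^ e) :=
    fun p => lt_of_lt_of_le one_pos (hper p).1
  have hlogsum : HasSum (fun p : Nat.Primes => Real.log (∑' e : ℕ, f ((p : ℕ) ^ e)))
      (Real.log (∑' n, f n)) := by
    have hcont : Tendsto (fun s : Finset Nat.Primes =>
        Real.log (∏ p ∈ s, ∑' e : ℕ, f ((p : ℕ) ^ e))) atTop (𝓝 (Real.log (∑' n, f n))) :=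
      ((Real.continuousAt_log hD0.ne').tendsto).comp hprod
    refine hcont.congr fun s => ?_
    exact Real.log_prod fun p _ => (hFpos p).ne'
  have hχpsum : Summable (fun p : Nat.Primes => χ (p : ℕ) * ((p : ℕ) : ℝ) ^ (-z)) :=
    hfsum.comp_injective Subtype.val_injective
  have hlsummable : Summable (fun p : Nat.Primes => Real.log (∑' e : ℕ, f ((p : ℕ) ^ e))) :=
    hlogsum.summable
  have hEsum : Summable (fun p : Nat.Primes =>
      Real.log (∑' e : ℕ, f ((p : ℕ) ^ e)) - χ (p : ℕ) * ((p : ℕ) : ℝ) ^ (-z)) :=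
    hlsummable.sub hχpsum
  have hPeq : ∑' p : Nat.Primes, χ (p : ℕ) * ((p : ℕ) : ℝ) ^ (-z)
      = ∑' p : S, ((p : ℕ) : ℝ) ^ (-z) := by
    have h1 : ∑' p : Nat.Primes, χ (p : ℕ) * ((p : ℕ) : ℝ) ^ (-z)
        = ∑' n : ℕ, ({n : ℕ | Nat.Prime n}).indicator (fun n => χ n * (n : ℝ) ^ (-z)) n :=
      tsum_subtype {n : ℕ | Nat.Prime n} (fun n => χ n * (n : ℝ) ^ (-z))
    have h2 : ∑' p : S, ((p : ℕ) : ℝ) ^ (-z)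
        = ∑' n : ℕ, S.indicator (fun n => (n : ℝ) ^ (-z)) n :=
      tsum_subtype S (fun n => (n : ℝ) ^ (-z))
    rw [h1, h2]
    refine tsum_congr fun n => ?_
    rw [Set.indicator_apply, Set.indicator_apply]
    by_cases hn : n ∈ {n : ℕ | Nat.Prime n}
    · by_cases hnS : n ∈ S
      · rw [if_pos hn, if_pos hnS, (hchar n (hS n hnS)).2 hnS, one_mul]
      · rw [if_pos hn, if_neg hnS]
        rcases hχval n with h | h
        · rw [h, zero_mul]
        · exact absurd ((hchar n hn).1 h) hnS
    · rw [if_neg hn, if_neg (fun h => hn (hS n h))]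
  have hdiff : Real.log (∑' n : ℕ, χ n * (n : ℝ) ^ (-z)) - ∑' p : S, ((p : ℕ) : ℝ) ^ (-z)
      = ∑' p : Nat.Primes,
        (Real.log (∑' e : ℕ, f ((p : ℕ) ^ e)) - χ (p : ℕ) * ((p : ℕ) : ℝ) ^ (-z)) := by
    rw [Summable.tsum_sub hlsummable hχpsum, hlogsum.tsum_eq, hPeq]
  rw [hdiff]
  have habssum : Summable (fun p : Nat.Primes =>
      |Real.log (∑' e : ℕ, f ((p : ℕ) ^ e)) - χ (p : ℕ) * ((p : ℕ) : ℝ) ^ (-z)|) :=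
    Summable.of_nonneg_of_le (fun p => abs_nonneg _) (fun p => (hper p).2) hgsum
  calc |∑' p : Nat.Primes,
        (Real.log (∑' e : ℕ, f ((p : ℕ) ^ e)) - χ (p : ℕ) * ((p : ℕ) : ℝ) ^ (-z))|
      ≤ ∑' p : Nat.Primes,
        |Real.log (∑' e : ℕ, f ((p : ℕ) ^ e)) - χ (p : ℕ) * ((p : ℕ) : ℝ) ^ (-z)| := by
        rw [← Real.norm_eq_abs]
        refine (norm_tsum_le_tsum_norm ?_).trans_eq ?_
        · simpa only [Real.norm_eq_abs] using habssum
        · simp only [Real.norm_eq_abs]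
    _ ≤ ∑' p : Nat.Primes, 2 * (((p : ℕ) : ℝ) ^ 2)⁻¹ :=
        Summable.tsum_le_tsum (fun p => (hper p).2) habssum hgsum

/-- Let `S` be a set of primes, `χ : ℕ → ℝ` a multiplicative function with
values in `{0,1}` that is characteristic on `S`, and `A = {n | χ n = 1}`.
(i) If `S` has Dirichlet density `δS`, then `lim_{z→1⁺} log D_χ(z) / log ζ(z) = δS`.
(ii) If `A` has Dedekind-Dirichlet density `δA`, then `lim_{z→1⁺} D_χ(z)/ζ(z) = δA`. -/
theorem dirichlet_density_via_log_Dchi_and_dedekind_density_via_Dchi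
    (S : Set ℕ) (hS : ∀ p ∈ S, Nat.Prime p)
    (χ : ℕ → ℝ) (hχ1 : χ 1 = 1)
    (hχmul : ∀ m n : ℕ, Nat.Coprime m n → χ (m * n) = χ m * χ n)
    (hχval : ∀ n : ℕ, χ n = 0 ∨ χ n = 1)
    (hchar : ∀ p : ℕ, Nat.Prime p → (χ p = 1 ↔ p ∈ S)) :
    (∀ δS : ℝ,
      Tendsto (fun z : ℝ => (∑' p : S, ((p : ℕ) : ℝ) ^ (-z)) / Real.log (1 / (z - 1)))
        (𝓝[>] 1) (𝓝 δS) →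
      Tendsto (fun z : ℝ =>
          Real.log (∑' n : ℕ, χ n * (n : ℝ) ^ (-z)) / Real.log (∑' n : ℕ, (n : ℝ) ^ (-z)))
        (𝓝[>] 1) (𝓝 δS)) ∧
    (∀ δA : ℝ,
      Tendsto (fun z : ℝ => (z - 1) * ∑' n : {n : ℕ | χ n = 1}, ((n : ℕ) : ℝ) ^ (-z))
        (𝓝[>] 1) (𝓝 δA) →
      Tendsto (fun z : ℝ =>
          (∑' n : ℕ, χ n * (n : ℝ) ^ (-z)) / (∑' n : ℕ, (n : ℝ) ^ (-z)))
        (𝓝[>] 1) (𝓝 δA)) := by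
  classical
  -- notation
  set D : ℝ → ℝ := fun z => ∑' n : ℕ, χ n * (n : ℝ) ^ (-z) with hDdef
  set Z : ℝ → ℝ := fun z => ∑' n : ℕ, (n : ℝ) ^ (-z) with hZdef
  set P : ℝ → ℝ := fun z => ∑' p : S, ((p : ℕ) : ℝ) ^ (-z) with hPdef
  set L : ℝ → ℝ := fun z => Real.log (1 / (z - 1)) with hLdef
  -- A-sum equals D
  have hkey : ∀ z : ℝ, D z = ∑' n : {n : ℕ | χ n = 1}, ((n : ℕ) : ℝ) ^ (-z) := by
    intro z
    rw [hDdef]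
    simp only
    rw [tsum_subtype {n : ℕ | χ n = 1} (fun n => (n : ℝ) ^ (-z))]
    refine tsum_congr fun n => ?_
    rcases hχval n with h | h
    · rw [h, zero_mul, Set.indicator_of_notMem (by simp [Set.mem_setOf_eq, h])]
    · rw [h, one_mul, Set.indicator_of_mem (by simpa [Set.mem_setOf_eq] using h)]
  have hzeta : Tendsto (fun z : ℝ => (z - 1) * Z z) (𝓝[>] 1) (𝓝 1) := tendsto_sub_mul_zeta
  -- L tends to infinity
  have hL : Tendsto L (𝓝[>] 1) atTop := by
    have h1 : Tendsto (fun z : ℝ => z - 1) (𝓝[>] 1) (𝓝[>] 0) := by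
      refine tendsto_nhdsWithin_of_tendsto_nhds_of_eventually_within _ ?_ ?_
      · have h0 := (continuous_sub_right (1:ℝ)).tendsto 1
        simpa using h0.mono_left nhdsWithin_le_nhds
      · filter_upwards [self_mem_nhdsWithin] with z hz
        simpa [Set.mem_Ioi] using sub_pos.mpr (show (1:ℝ) < z from hz)
    have h2 : Tendsto (fun z : ℝ => 1 / (z - 1)) (𝓝[>] 1) atTop := by
      simpa [one_div, Function.comp_def] using tendsto_inv_nhdsGT_zero.comp h1
    exact Real.tendsto_log_atTop.comp h2
  -- basic positivity facts for z > 1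
  have hZsum : ∀ z : ℝ, 1 < z → Summable (fun n : ℕ => (n : ℝ) ^ (-z)) :=
    fun z hz => Real.summable_nat_rpow.mpr (by linarith)
  have hZ1 : ∀ z : ℝ, 1 < z → 1 ≤ Z z := by
    intro z hz
    have := Summable.le_tsum (hZsum z hz) 1 fun j _ => Real.rpow_nonneg (Nat.cast_nonneg j) _
    simpa using this
  -- log Z - L → 0
  have hlogZL : Tendsto (fun z : ℝ => Real.log (Z z) - L z) (𝓝[>] 1) (𝓝 0) := by
    have h1 : Tendsto (fun z : ℝ => Real.log ((z - 1) * Z z)) (𝓝[>] 1) (𝓝 0) := by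
      have hc : ContinuousAt Real.log 1 := Real.continuousAt_log one_ne_zero
      have := hc.tendsto.comp hzeta
      simpa [Function.comp_def] using this
    refine h1.congr' ?_
    filter_upwards [self_mem_nhdsWithin] with z hz
    have hz1 : (0:ℝ) < z - 1 := sub_pos.mpr hz
    have hZpos : (0:ℝ) < Z z := lt_of_lt_of_le one_pos (hZ1 z hz)
    rw [Real.log_mul hz1.ne' hZpos.ne', hLdef]
    simp only
    rw [one_div, Real.log_inv]
    ring
  constructor
  · -- Part (i)
    intro δS hP
    obtain ⟨C, hC⟩ := key_bound S hS χ hχ1 hχmul hχval hchar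
    -- E/L → 0 where E = log D - P
    have hEL : Tendsto (fun z : ℝ => (Real.log (D z) - P z) / L z) (𝓝[>] 1) (𝓝 0) := by
      have hCL : Tendsto (fun z : ℝ => C / L z) (𝓝[>] 1) (𝓝 0) :=
        Tendsto.div_atTop tendsto_const_nhds hL
      refine squeeze_zero_norm' ?_ hCL
      filter_upwards [self_mem_nhdsWithin, hL.eventually_gt_atTop 0] with z hz hLz
      rw [Real.norm_eq_abs, abs_div, abs_of_pos hLz]
      exact (div_le_div_iff_of_pos_right hLz).mpr (hC z hz)
    -- log Z / L → 1
    have hZLdiv : Tendsto (fun z : ℝ => Real.log (Z z) / L z) (𝓝[>] 1) (𝓝 1) := by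
      have h0 : Tendsto (fun z : ℝ => (Real.log (Z z) - L z) / L z) (𝓝[>] 1) (𝓝 0) :=
        Tendsto.div_atTop hlogZL hL
      have h1 : Tendsto (fun z : ℝ => (Real.log (Z z) - L z) / L z + 1) (𝓝[>] 1) (𝓝 1) := by
        simpa using h0.add tendsto_const_nhds
      refine h1.congr' ?_
      filter_upwards [hL.eventually_gt_atTop 0] with z hLz
      field_simp
      ring
    -- log D / L → δS
    have hnum : Tendsto (fun z : ℝ => Real.log (D z) / L z) (𝓝[>] 1) (𝓝 δS) := by
      have h2 := hP.add hEL
      rw [add_zero] at h2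
      refine h2.congr fun z => ?_
      rw [← add_div]
      congr 1
      ring
    have h3 := hnum.div hZLdiv one_ne_zero
    rw [div_one] at h3
    refine h3.congr' ?_
    filter_upwards [hL.eventually_gt_atTop 0] with z hLz
    show (Real.log (D z) / L z) / (Real.log (Z z) / L z) = Real.log (D z) / Real.log (Z z)
    rcases eq_or_ne (Real.log (Z z)) 0 with h | h
    · simp [h]
    · rw [div_div_div_cancel_right₀ (ne_of_gt hLz)]
  · -- Part (ii)
    intro δA hA
    have hA' : Tendsto (fun z : ℝ => (z - 1) * D z) (𝓝[>] 1) (𝓝 δA) := by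
      refine hA.congr fun z => ?_
      rw [hkey z]
    have := hA'.div hzeta one_ne_zero
    rw [div_one] at this
    refine this.congr' ?_
    filter_upwards [self_mem_nhdsWithin] with z hz
    have hz1 : z - 1 ≠ 0 := sub_ne_zero.mpr (ne_of_gt hz)
    show ((z - 1) * D z) / ((z - 1) * Z z) = D z / Z z
    rw [mul_div_mul_left _ _ hz1]
end

section
/- Let S be a weakly regular set of primes, let χ : ℕ → ℝ be a multiplicative function taking values in {0,1} that is characteristic on S, and let A = {n ∈ ℕ : χ(n) = 1}. Then A has a Dedekind-Dirichlet density δ(A) with δ(A) ≠ 0 if and only if S has Dirichlet density 1. -/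
open Filter Topology

/-- A set of primes `S` is *weakly regular* (with constant `a`, which is then its Dirichlet
density) if `P_S(z) = a·log(1/(z-1)) + g(z)` on `{Re z > 1}` for some function `g` holomorphic
on `{Re z > 1}` and continuous on `{Re z ≥ 1}`. -/
def WeaklyRegular (S : Set ℕ) (a : ℝ) : Prop :=
  ∃ g : ℂ → ℂ, DifferentiableOn ℂ g {z : ℂ | 1 < z.re} ∧
    ContinuousOn g {z : ℂ | 1 ≤ z.re} ∧
    ∀ z : ℂ, 1 < z.re →
      (∑' p : S, ((p : ℕ) : ℂ) ^ (-z)) = (a : ℂ) * Complex.log (1 / (z - 1)) + g z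

section Aux

variable {χ : ℕ → ℝ}

/-- The local Euler factor at `p` (written with ratio `r = p^{-z}`). -/
noncomputable def locF (χ : ℕ → ℝ) (p : ℕ) (z : ℝ) : ℝ :=
  ∑' e : ℕ, χ (p ^ e) * ((p : ℝ) ^ (-z)) ^ e

lemma abs_chi_le_one (hχval : ∀ n : ℕ, χ n = 0 ∨ χ n = 1) (n : ℕ) : |χ n| ≤ 1 := by
  rcases hχval n with h | h <;> simp [h]

lemma chi_nonneg (hχval : ∀ n : ℕ, χ n = 0 ∨ χ n = 1) (n : ℕ) : 0 ≤ χ n := by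
  rcases hχval n with h | h <;> simp [h]

lemma chi_le_one (hχval : ∀ n : ℕ, χ n = 0 ∨ χ n = 1) (n : ℕ) : χ n ≤ 1 := by
  rcases hχval n with h | h <;> simp [h]

lemma rpow_pow_eq {p : ℕ} (hp : 0 < p) (z : ℝ) (e : ℕ) :
    (((p ^ e : ℕ) : ℝ)) ^ (-z) = ((p : ℝ) ^ (-z)) ^ e := by
  have hp0 : (0:ℝ) ≤ (p:ℝ) := by positivity
  rw [Nat.cast_pow, ← Real.rpow_natCast ((p:ℝ)) e, ← Real.rpow_mul hp0,
    ← Real.rpow_natCast ((p:ℝ) ^ (-z)) e, ← Real.rpow_mul hp0, mul_comm]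

lemma r_lt_one {p : ℕ} (hp : 2 ≤ p) {z : ℝ} (hz : 1 ≤ z) : (p : ℝ) ^ (-z) < 1 :=
  Real.rpow_lt_one_of_one_lt_of_neg (by exact_mod_cast hp.trans_lt' one_lt_two) (by linarith)

lemma r_le_inv {p : ℕ} (hp : 2 ≤ p) {z : ℝ} (hz : 1 ≤ z) : (p : ℝ) ^ (-z) ≤ (p : ℝ)⁻¹ := by
  have h1 : (1:ℝ) < (p:ℝ) := by exact_mod_cast hp.trans_lt' one_lt_two
  calc (p : ℝ) ^ (-z) ≤ (p : ℝ) ^ (-1 : ℝ) :=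
        Real.rpow_le_rpow_left_iff h1 |>.mpr (by linarith)
    _ = (p : ℝ)⁻¹ := by rw [Real.rpow_neg_one]

lemma r_nonneg (p : ℕ) (z : ℝ) : 0 ≤ (p : ℝ) ^ (-z) := Real.rpow_nonneg (by positivity) _

lemma r_le_half {p : ℕ} (hp : 2 ≤ p) {z : ℝ} (hz : 1 ≤ z) : (p : ℝ) ^ (-z) ≤ 1/2 := by
  refine (r_le_inv hp hz).trans ?_
  rw [inv_le_comm₀ (by exact_mod_cast hp.trans_lt' two_pos) (by norm_num)]
  norm_num; exact_mod_cast hp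

lemma summable_loc (hχval : ∀ n : ℕ, χ n = 0 ∨ χ n = 1) {p : ℕ} (hp : 2 ≤ p) {z : ℝ}
    (hz : 1 ≤ z) :
    Summable (fun e : ℕ => χ (p ^ e) * ((p : ℝ) ^ (-z)) ^ e) := by
  refine Summable.of_norm ?_
  refine Summable.of_nonneg_of_le (fun e => norm_nonneg _) (fun e => ?_)
    (summable_geometric_of_lt_one (r_nonneg p z) (r_lt_one hp hz))
  rw [norm_mul, Real.norm_eq_abs, Real.norm_eq_abs,
    abs_of_nonneg (pow_nonneg (r_nonneg p z) e)]
  exact mul_le_of_le_one_left (pow_nonneg (r_nonneg p z) e) (abs_chi_le_one hχval _)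

lemma one_le_locF (hχ1 : χ 1 = 1) (hχval : ∀ n : ℕ, χ n = 0 ∨ χ n = 1) {p : ℕ} (hp : 2 ≤ p)
    {z : ℝ} (hz : 1 ≤ z) : 1 ≤ locF χ p z := by
  have hs := summable_loc hχval hp hz (z := z)
  have h0 : χ (p ^ 0) * ((p : ℝ) ^ (-z)) ^ 0 = 1 := by simp [hχ1]
  calc (1:ℝ) = χ (p ^ 0) * ((p : ℝ) ^ (-z)) ^ 0 := h0.symm
    _ ≤ locF χ p z := Summable.le_tsum hs 0 (fun e _ =>
        mul_nonneg (chi_nonneg hχval _) (pow_nonneg (r_nonneg p z) e))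

/-- The key local estimate. -/
lemma abs_log_locF_sub (hχ1 : χ 1 = 1) (hχval : ∀ n : ℕ, χ n = 0 ∨ χ n = 1) {p : ℕ}
    (hp : 2 ≤ p) {z : ℝ} (hz : 1 ≤ z) :
    |Real.log (locF χ p z) - χ p * (p : ℝ) ^ (-z)| ≤ 6 * ((p : ℝ) ^ 2)⁻¹ := by
  set r : ℝ := (p : ℝ) ^ (-z) with hrdef
  have hr0 : 0 ≤ r := r_nonneg p z
  have hrhalf : r ≤ 1/2 := r_le_half hp hz
  have hrinv : r ≤ (p:ℝ)⁻¹ := r_le_inv hp hz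
  have hs := summable_loc hχval hp hz (z := z)
  set R : ℝ := ∑' e : ℕ, χ (p ^ (e + 2)) * r ^ (e + 2) with hRdef
  have hs2 : Summable (fun e : ℕ => χ (p ^ (e + 2)) * r ^ (e + 2)) := by
    exact_mod_cast (summable_nat_add_iff 2).mpr hs
  have hgeom : Summable (fun e : ℕ => r ^ (e + 2)) := by
    exact_mod_cast (summable_nat_add_iff 2).mpr
      (summable_geometric_of_lt_one hr0 (r_lt_one hp hz))
  have hdecomp : locF χ p z = 1 + (χ p * r + R) := by
    rw [locF, Summable.tsum_eq_zero_add hs, Summable.tsum_eq_zero_add ((summable_nat_add_iff 1).mpr hs)]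
    simp only [pow_zero, pow_one, hχ1, mul_one, one_mul]
    norm_num
    rfl
  have hR0 : 0 ≤ R := tsum_nonneg (fun e =>
    mul_nonneg (chi_nonneg hχval _) (pow_nonneg hr0 _))
  have hR : R ≤ 2 * r ^ 2 := by
    have h1 : R ≤ ∑' e : ℕ, r ^ (e + 2) := by
      refine Summable.tsum_le_tsum (fun e => ?_) hs2 hgeom
      exact mul_le_of_le_one_left (pow_nonneg hr0 _) (chi_le_one hχval _)
    have h2 : ∑' e : ℕ, r ^ (e + 2) ≤ 2 * r ^ 2 := by
      have heq : (fun e : ℕ => r ^ (e + 2)) = fun e : ℕ => r ^ 2 * r ^ e := by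
        funext e; ring
      rw [heq, tsum_mul_left, tsum_geometric_of_lt_one hr0 (r_lt_one hp hz)]
      have h3 : (1 - r)⁻¹ ≤ 2 := by
        rw [inv_le_comm₀ (by linarith) (by norm_num)]; linarith
      nlinarith [sq_nonneg r]
    linarith
  set c : ℝ := χ p * r with hcdef
  have hc0 : 0 ≤ c := mul_nonneg (chi_nonneg hχval _) hr0
  have hcr : c ≤ r := mul_le_of_le_one_left hr0 (chi_le_one hχval _)
  set x : ℝ := c + R with hxdef
  have hx0 : 0 ≤ x := add_nonneg hc0 hR0
  have hx2r : x ≤ 2 * r := by nlinarith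
  have h1x : (0:ℝ) < 1 + x := by linarith
  have hup : Real.log (1 + x) ≤ x := by
    have := Real.log_le_sub_one_of_pos h1x; linarith
  have hlow : x - x ^ 2 ≤ Real.log (1 + x) := by
    have hlow' := Real.one_sub_inv_le_log_of_pos h1x
    have hinv : (1 + x) * (1 + x)⁻¹ = 1 := mul_inv_cancel₀ (ne_of_gt h1x)
    have key : x - x ^ 2 ≤ 1 - (1 + x)⁻¹ := by nlinarith [inv_nonneg.mpr h1x.le]
    exact key.trans hlow'
  have hr2 : r ^ 2 ≤ ((p:ℝ) ^ 2)⁻¹ := by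
    rw [← inv_pow]; exact pow_le_pow_left₀ hr0 hrinv 2
  rw [hdecomp, abs_le]
  constructor
  · have : c - Real.log (1 + x) ≤ x ^ 2 := by nlinarith
    nlinarith
  · have : Real.log (1 + x) - c ≤ R := by linarith
    nlinarith

/-- Continuity of the local factor from the right at `z = 1`. -/
lemma tendsto_locF (hχval : ∀ n : ℕ, χ n = 0 ∨ χ n = 1) {p : ℕ} (hp : 2 ≤ p) :
    Tendsto (fun z : ℝ => locF χ p z) (𝓝[>] (1:ℝ)) (𝓝 (locF χ p 1)) := by
  have hp0 : (p:ℝ) ≠ 0 := by positivity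
  have hp1 : (1:ℝ) < (p:ℝ) := by exact_mod_cast hp.trans_lt' one_lt_two
  refine tendsto_tsum_of_dominated_convergence (bound := fun e : ℕ => ((p:ℝ)⁻¹) ^ e)
    (summable_geometric_of_lt_one (by positivity) (by
      rw [inv_lt_one_iff₀]; right; exact hp1)) (fun e => ?_) ?_
  · have h1 : ContinuousAt (fun z : ℝ => (p : ℝ) ^ (-z)) 1 :=
      (Real.continuousAt_const_rpow hp0).comp (continuousAt_neg (x := (1:ℝ)))
    exact ((((h1.pow e).const_smul (χ (p ^ e))).tendsto).mono_left nhdsWithin_le_nhds)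
  · filter_upwards [self_mem_nhdsWithin] with z hz
    intro e
    have hz1 : (1:ℝ) ≤ z := (le_of_lt hz)
    rw [Real.norm_eq_abs, abs_mul, abs_of_nonneg (pow_nonneg (r_nonneg p z) e)]
    calc |χ (p ^ e)| * ((p:ℝ) ^ (-z)) ^ e ≤ 1 * ((p:ℝ) ^ (-z)) ^ e :=
          mul_le_mul_of_nonneg_right (abs_chi_le_one hχval _)
            (pow_nonneg (r_nonneg p z) e)
      _ = ((p:ℝ) ^ (-z)) ^ e := one_mul _
      _ ≤ ((p:ℝ)⁻¹) ^ e := pow_le_pow_left₀ (r_nonneg p z) (r_le_inv hp hz1) e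

/-- Right-continuity at `z = 1` of the local remainder term. -/
lemma tendsto_t (hχ1 : χ 1 = 1) (hχval : ∀ n : ℕ, χ n = 0 ∨ χ n = 1) {p : ℕ} (hp : 2 ≤ p) :
    Tendsto (fun z : ℝ => Real.log (locF χ p z) - χ p * (p : ℝ) ^ (-z)) (𝓝[>] (1:ℝ))
      (𝓝 (Real.log (locF χ p 1) - χ p * (p : ℝ) ^ (-(1:ℝ)))) := by
  have hp0 : (p:ℝ) ≠ 0 := by positivity
  have hpos : (0:ℝ) < locF χ p 1 :=
    lt_of_lt_of_le one_pos (one_le_locF hχ1 hχval hp le_rfl)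
  have h1 : Tendsto (fun z : ℝ => Real.log (locF χ p z)) (𝓝[>] (1:ℝ))
      (𝓝 (Real.log (locF χ p 1))) :=
    ((Real.continuousAt_log (ne_of_gt hpos)).tendsto).comp (tendsto_locF hχval hp)
  have h2 : Tendsto (fun z : ℝ => χ p * (p : ℝ) ^ (-z)) (𝓝[>] (1:ℝ))
      (𝓝 (χ p * (p : ℝ) ^ (-(1:ℝ)))) := by
    have hc : ContinuousAt (fun z : ℝ => (p : ℝ) ^ (-z)) 1 :=
      (Real.continuousAt_const_rpow hp0).comp (continuousAt_neg (x := (1:ℝ)))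
    exact ((hc.const_smul (χ p)).tendsto).mono_left nhdsWithin_le_nhds
  exact h1.sub h2

end Aux

/-- Let `S` be a weakly regular set of primes, `χ : ℕ → ℝ` a multiplicative
function with values in `{0,1}` characteristic on `S`, and `A = {n | χ n = 1}`. Then `A` has a
nonzero Dedekind-Dirichlet density if and only if `S` has Dirichlet density `1`. -/
theorem dedekind_density_ne_zero_iff_dirichlet_density_one_of_weaklyRegular
    (S : Set ℕ) (hS : ∀ p ∈ S, Nat.Prime p)
    (a : ℝ) (hreg : WeaklyRegular S a)
    (χ : ℕ → ℝ) (hχ1 : χ 1 = 1)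
    (hχmul : ∀ m n : ℕ, Nat.Coprime m n → χ (m * n) = χ m * χ n)
    (hχval : ∀ n : ℕ, χ n = 0 ∨ χ n = 1)
    (hchar : ∀ p : ℕ, Nat.Prime p → (χ p = 1 ↔ p ∈ S)) :
    (∃ δA : ℝ, δA ≠ 0 ∧
      Tendsto (fun z : ℝ => (z - 1) * ∑' n : {n : ℕ | χ n = 1}, ((n : ℕ) : ℝ) ^ (-z))
        (𝓝[>] 1) (𝓝 δA)) ↔
    Tendsto (fun z : ℝ => (∑' p : S, ((p : ℕ) : ℝ) ^ (-z)) / Real.log (1 / (z - 1)))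
      (𝓝[>] 1) (𝓝 1) := by
  obtain ⟨g, hgdiff, hgcont, hgeq⟩ := hreg
  -- notation
  set Fn : ℝ → ℝ := fun z => ∑' n : ℕ, χ n * (n : ℝ) ^ (-z) with hFndef
  set PS : ℝ → ℝ := fun z => ∑' p : S, ((p : ℕ) : ℝ) ^ (-z) with hPSdef
  set hfun : ℝ → ℝ := fun z =>
    ∑' p : Nat.Primes, (Real.log (locF χ (p : ℕ) z) - χ (p : ℕ) * ((p : ℕ) : ℝ) ^ (-z))
    with hhdef
  -- the sum over A equals the χ-weighted sum
  have hA : ∀ z : ℝ, (∑' n : {n : ℕ | χ n = 1}, ((n : ℕ) : ℝ) ^ (-z)) = Fn z := by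
    intro z
    rw [hFndef]
    rw [tsum_subtype {n : ℕ | χ n = 1} (fun n => (n : ℝ) ^ (-z))]
    refine tsum_congr fun n => ?_
    by_cases h : χ n = 1
    · rw [Set.indicator_of_mem (by exact h), h, one_mul]
    · rw [Set.indicator_of_notMem (by exact h)]
      rcases hχval n with h0 | h1
      · rw [h0, zero_mul]
      · exact absurd h1 h
  -- summability of the χ-weighted series for z > 1
  have hsumF : ∀ z : ℝ, 1 < z → Summable (fun n : ℕ => ‖χ n * (n : ℝ) ^ (-z)‖) := by
    intro z hz
    refine Summable.of_nonneg_of_le (fun n => norm_nonneg _) (fun n => ?_)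
      (Real.summable_nat_rpow.mpr (by linarith : -z < -1))
    rw [Real.norm_eq_abs, abs_mul, abs_of_nonneg (r_nonneg n z)]
    exact mul_le_of_le_one_left (r_nonneg n z) (abs_chi_le_one hχval n)
  have hFone : ∀ z : ℝ, 1 < z → 1 ≤ Fn z := by
    intro z hz
    have h1 : χ 1 * (1 : ℝ) ^ (-z) = 1 := by simp [hχ1]
    calc (1:ℝ) = χ 1 * ((1 : ℕ) : ℝ) ^ (-z) := by rw [Nat.cast_one]; exact h1.symm
      _ ≤ Fn z := Summable.le_tsum (hsumF z hz).of_norm 1 (fun n _ =>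
          mul_nonneg (chi_nonneg hχval _) (r_nonneg n z))
  have hFpos : ∀ z : ℝ, 1 < z → 0 < Fn z := fun z hz =>
    lt_of_lt_of_le one_pos (hFone z hz)
  -- Euler product: `HasSum` of the logs of the local factors
  have hEuler : ∀ z : ℝ, 1 < z →
      HasSum (fun p : Nat.Primes => Real.log (locF χ (p : ℕ) z)) (Real.log (Fn z)) := by
    intro z hz
    have hf₁ : χ 1 * ((1 : ℕ) : ℝ) ^ (-z) = 1 := by simp [hχ1]
    have hf₀ : χ 0 * ((0 : ℕ) : ℝ) ^ (-z) = 0 := by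
      rw [Nat.cast_zero, Real.zero_rpow (by linarith : -z ≠ 0), mul_zero]
    have hmul : ∀ {m n : ℕ}, Nat.Coprime m n →
        χ (m * n) * ((m * n : ℕ) : ℝ) ^ (-z)
          = (χ m * (m : ℝ) ^ (-z)) * (χ n * (n : ℝ) ^ (-z)) := by
      intro m n hmn
      rw [hχmul m n hmn, Nat.cast_mul, Real.mul_rpow (by positivity) (by positivity)]
      ring
    have hP := EulerProduct.eulerProduct_hasProd (f := fun n : ℕ => χ n * (n : ℝ) ^ (-z))
      hf₁ hmul (hsumF z hz) hf₀
    have hloc : (fun p : Nat.Primes => ∑' e : ℕ, χ ((p : ℕ) ^ e) * (((p : ℕ) ^ e : ℕ) : ℝ) ^ (-z))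
        = fun p : Nat.Primes => locF χ (p : ℕ) z := by
      funext p
      rw [locF]
      exact tsum_congr fun e => by rw [rpow_pow_eq p.prop.pos]
    rw [hloc] at hP
    have hlog : ContinuousAt Real.log (Fn z) := Real.continuousAt_log (ne_of_gt (hFpos z hz))
    have hcomp := hlog.tendsto.comp hP
    rw [HasSum]
    convert hcomp using 2 with s
    rw [Function.comp_apply, Real.log_prod]
    exact fun p _ => ne_of_gt (lt_of_lt_of_le one_pos
      (one_le_locF hχ1 hχval p.prop.two_le hz.le))
  -- summability of `χ p * p^{-z}` over primes
  have hsumP : ∀ z : ℝ, 1 < z →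
      Summable (fun p : Nat.Primes => χ (p : ℕ) * ((p : ℕ) : ℝ) ^ (-z)) := by
    intro z hz
    have := ((hsumF z hz).of_norm).subtype {n : ℕ | n.Prime}
    exact this
  -- the fundamental decomposition of `log Fn`
  have hlogF : ∀ z : ℝ, 1 < z →
      Real.log (Fn z) = (∑' p : Nat.Primes, χ (p : ℕ) * ((p : ℕ) : ℝ) ^ (-z)) + hfun z := by
    intro z hz
    have h1 := hEuler z hz
    have h2 := hsumP z hz
    have h3 : HasSum (fun p : Nat.Primes =>
        (Real.log (locF χ (p : ℕ) z) - χ (p : ℕ) * ((p : ℕ) : ℝ) ^ (-z)))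
        (Real.log (Fn z) - ∑' p : Nat.Primes, χ (p : ℕ) * ((p : ℕ) : ℝ) ^ (-z)) :=
      h1.sub h2.hasSum
    simp only [hhdef]
    rw [h3.tsum_eq]
    ring
  -- the prime sum equals the sum over S
  have hPSbridge : ∀ z : ℝ,
      (∑' p : Nat.Primes, χ (p : ℕ) * ((p : ℕ) : ℝ) ^ (-z)) = PS z := by
    intro z
    have h1 : (∑' p : Nat.Primes, χ (p : ℕ) * ((p : ℕ) : ℝ) ^ (-z))
        = ∑' n : ℕ, Set.indicator {n : ℕ | n.Prime} (fun n => χ n * (n : ℝ) ^ (-z)) n :=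
      tsum_subtype {n : ℕ | n.Prime} (fun n => χ n * (n : ℝ) ^ (-z))
    have h2 : PS z = ∑' n : ℕ, Set.indicator S (fun n => (n : ℝ) ^ (-z)) n :=
      tsum_subtype S (fun n => (n : ℝ) ^ (-z))
    rw [h1, h2]
    refine tsum_congr fun n => ?_
    by_cases hn : Nat.Prime n
    · rw [Set.indicator_of_mem (by exact hn)]
      by_cases hnS : n ∈ S
      · rw [Set.indicator_of_mem hnS, (hchar n hn).mpr hnS, one_mul]
      · rw [Set.indicator_of_notMem hnS]
        rcases hχval n with h | h
        · rw [h, zero_mul]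
        · exact absurd ((hchar n hn).mp h) hnS
    · rw [Set.indicator_of_notMem (by exact hn),
        Set.indicator_of_notMem (fun h => hn (hS n h))]
  -- `PS z` in terms of the weak regularity data
  have hPSval : ∀ z : ℝ, 1 < z →
      PS z = a * Real.log (1 / (z - 1)) + (g (z : ℂ)).re := by
    intro z hz
    have hzc : 1 < (z : ℂ).re := by simpa using hz
    have hcw := hgeq (z : ℂ) hzc
    have hbridge : (∑' p : S, ((p : ℕ) : ℂ) ^ (-(z : ℂ))) = ((PS z : ℝ) : ℂ) := by
      rw [hPSdef, Complex.ofReal_tsum]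
      refine tsum_congr fun p => ?_
      rw [Complex.ofReal_cpow (Nat.cast_nonneg _) (-z)]
      push_cast
      ring_nf
    have hlogc : Complex.log (1 / ((z : ℂ) - 1)) = ((Real.log (1 / (z - 1)) : ℝ) : ℂ) := by
      have he : (1 / ((z : ℂ) - 1)) = ((1 / (z - 1) : ℝ) : ℂ) := by push_cast; ring
      rw [he, Complex.ofReal_log (one_div_nonneg.mpr (by linarith))]
    rw [hbridge, hlogc] at hcw
    have := congrArg Complex.re hcw
    simpa [Complex.add_re, Complex.mul_re] using this
  -- the master identity
  have hmaster : ∀ z : ℝ, 1 < z →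
      Real.log ((z - 1) * Fn z)
        = (1 - a) * Real.log (z - 1) + ((g (z : ℂ)).re + hfun z) := by
    intro z hz
    have hz1 : (0:ℝ) < z - 1 := by linarith
    rw [Real.log_mul (ne_of_gt hz1) (ne_of_gt (hFpos z hz)), hlogF z hz, hPSbridge z,
      hPSval z hz, one_div, Real.log_inv]
    ring
  -- continuity of the `g`-part
  have hgre : Tendsto (fun z : ℝ => (g (z : ℂ)).re) (𝓝[>] (1:ℝ)) (𝓝 ((g 1).re)) := by
    have h1mem : (1 : ℂ) ∈ {z : ℂ | 1 ≤ z.re} := by simp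
    have hcw : Tendsto g (𝓝[{z : ℂ | 1 ≤ z.re}] 1) (𝓝 (g 1)) := hgcont 1 h1mem
    have hmap : Tendsto (fun z : ℝ => (z : ℂ)) (𝓝[>] (1:ℝ)) (𝓝[{z : ℂ | 1 ≤ z.re}] 1) := by
      rw [tendsto_nhdsWithin_iff]
      constructor
      · have := (Complex.continuous_ofReal.tendsto 1).mono_left
          (nhdsWithin_le_nhds (s := Set.Ioi (1:ℝ)))
        simpa using this
      · filter_upwards [self_mem_nhdsWithin] with x hx
        simp only [Set.mem_setOf_eq, Complex.ofReal_re]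
        exact le_of_lt hx
    exact (Complex.continuous_re.tendsto _).comp (hcw.comp hmap)
  -- convergence of the remainder term
  have htend : Tendsto hfun (𝓝[>] (1:ℝ)) (𝓝 (hfun 1)) := by
    rw [hhdef]
    refine tendsto_tsum_of_dominated_convergence
      (bound := fun p : Nat.Primes => 6 * (((p : ℕ) : ℝ) ^ 2)⁻¹) ?_ ?_ ?_
    · have hs : Summable (fun p : Nat.Primes => ((p : ℕ) : ℝ) ^ ((-2 : ℝ))) :=
        Nat.Primes.summable_rpow.mpr (by norm_num)
      have hs6 := hs.mul_left 6
      refine hs6.congr fun p => ?_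
      rw [show ((-2 : ℝ)) = -(2:ℝ) by norm_num, Real.rpow_neg (Nat.cast_nonneg _),
        Real.rpow_two]
    · intro p
      exact tendsto_t hχ1 hχval p.prop.two_le
    · filter_upwards [self_mem_nhdsWithin] with z hz
      intro p
      rw [Real.norm_eq_abs]
      exact abs_log_locF_sub hχ1 hχval p.prop.two_le (le_of_lt hz)
  -- the limit of the error part
  have hE : Tendsto (fun z : ℝ => (g (z : ℂ)).re + hfun z) (𝓝[>] (1:ℝ))
      (𝓝 ((g 1).re + hfun 1)) := hgre.add htend
  -- `log (z-1) → -∞`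
  have hlogbot : Tendsto (fun z : ℝ => Real.log (z - 1)) (𝓝[>] (1:ℝ)) atBot := by
    have h1 : Tendsto (fun z : ℝ => z - 1) (𝓝[>] (1:ℝ)) (𝓝[>] (0:ℝ)) := by
      rw [tendsto_nhdsWithin_iff]
      constructor
      · have : Tendsto (fun z : ℝ => z - 1) (𝓝 (1:ℝ)) (𝓝 0) := by
          simpa using (continuous_sub_right (1:ℝ)).tendsto 1
        exact this.mono_left nhdsWithin_le_nhds
      · filter_upwards [self_mem_nhdsWithin] with x hx
        simpa [Set.mem_Ioi] using (by linarith [Set.mem_Ioi.mp hx] : (0:ℝ) < x - 1)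
    exact Real.tendsto_log_nhdsGT_zero.comp h1
  -- `log (1/(z-1)) → +∞`
  have hLtop : Tendsto (fun z : ℝ => Real.log (1 / (z - 1))) (𝓝[>] (1:ℝ)) atTop := by
    have h3 : Tendsto (fun z : ℝ => -Real.log (z - 1)) (𝓝[>] (1:ℝ)) atTop :=
      tendsto_neg_atTop_iff.mpr hlogbot
    refine h3.congr fun z => ?_
    rw [one_div, Real.log_inv]
  -- `PS z / log(1/(z-1)) → a`
  have hPSdiva : Tendsto (fun z : ℝ => PS z / Real.log (1 / (z - 1))) (𝓝[>] (1:ℝ)) (𝓝 a) := by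
    have hnz : ∀ᶠ z in 𝓝[>] (1:ℝ), 1 ≤ Real.log (1 / (z - 1)) :=
      hLtop.eventually_ge_atTop 1
    have heq : ∀ᶠ (z : ℝ) in 𝓝[>] (1:ℝ),
        a + (g (z : ℂ)).re * (Real.log (1 / (z - 1)))⁻¹
          = PS z / Real.log (1 / (z - 1)) := by
      filter_upwards [hnz, self_mem_nhdsWithin] with z h1 h2
      have hzgt : (1:ℝ) < z := h2
      have hL0 : Real.log (1 / (z - 1)) ≠ 0 := by linarith
      rw [hPSval z hzgt]
      field_simp
    have hlim : Tendsto (fun z : ℝ => a + (g (z : ℂ)).re * (Real.log (1 / (z - 1)))⁻¹)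
        (𝓝[>] (1:ℝ)) (𝓝 (a + (g 1).re * 0)) := by
      refine tendsto_const_nhds.add (hgre.mul ?_)
      exact tendsto_inv_atTop_zero.comp hLtop
    rw [show a + (g 1).re * 0 = a by ring] at hlim
    exact hlim.congr' heq
  constructor
  · -- forward direction
    rintro ⟨δA, hδ0, hδA⟩
    have hΦ : Tendsto (fun z : ℝ => (z - 1) * Fn z) (𝓝[>] (1:ℝ)) (𝓝 δA) := by
      refine hδA.congr fun z => ?_
      rw [hA z]
    have hδnn : 0 ≤ δA := by
      refine ge_of_tendsto hΦ ?_
      filter_upwards [self_mem_nhdsWithin] with z hz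
      have hzgt : (1:ℝ) < z := hz
      exact mul_nonneg (by linarith) (hFpos z hzgt).le
    have hδpos : 0 < δA := lt_of_le_of_ne hδnn (Ne.symm hδ0)
    have hlogΦ : Tendsto (fun z : ℝ => Real.log ((z - 1) * Fn z)) (𝓝[>] (1:ℝ))
        (𝓝 (Real.log δA)) :=
      ((Real.continuousAt_log (ne_of_gt hδpos)).tendsto).comp hΦ
    -- `(1-a) * log (z-1)` converges
    have hconv : Tendsto (fun z : ℝ => (1 - a) * Real.log (z - 1)) (𝓝[>] (1:ℝ))
        (𝓝 (Real.log δA - ((g 1).re + hfun 1))) := by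
      have := hlogΦ.sub hE
      refine this.congr' ?_
      filter_upwards [self_mem_nhdsWithin] with z hz
      have hzgt : (1:ℝ) < z := hz
      rw [hmaster z hzgt]
      ring
    have ha1 : a = 1 := by
      by_contra ha
      rcases lt_or_gt_of_ne ha with hlt | hgt
      · -- a < 1 : `(1-a) * log(z-1) → -∞`
        have : Tendsto (fun z : ℝ => (1 - a) * Real.log (z - 1)) (𝓝[>] (1:ℝ)) atBot :=
          (tendsto_const_mul_atBot_of_pos (by linarith)).mpr hlogbot
        exact not_tendsto_nhds_of_tendsto_atBot this _ hconv
      · have : Tendsto (fun z : ℝ => (1 - a) * Real.log (z - 1)) (𝓝[>] (1:ℝ)) atTop :=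
          (tendsto_const_mul_atTop_of_neg (by linarith)).mpr hlogbot
        exact not_tendsto_nhds_of_tendsto_atTop this _ hconv
    exact ha1 ▸ hPSdiva
  · -- backward direction
    intro hRHS
    have ha1 : a = 1 := tendsto_nhds_unique hPSdiva hRHS
    -- hence `log Φ → (g 1).re + hfun 1`
    have hlogΦ : Tendsto (fun z : ℝ => Real.log ((z - 1) * Fn z)) (𝓝[>] (1:ℝ))
        (𝓝 ((g 1).re + hfun 1)) := by
      refine hE.congr' ?_
      filter_upwards [self_mem_nhdsWithin] with z hz
      have hzgt : (1:ℝ) < z := hz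
      rw [hmaster z hzgt, ha1]
      ring
    refine ⟨Real.exp ((g 1).re + hfun 1), (Real.exp_pos _).ne', ?_⟩
    have hΦ : Tendsto (fun z : ℝ => (z - 1) * Fn z) (𝓝[>] (1:ℝ))
        (𝓝 (Real.exp ((g 1).re + hfun 1))) := by
      have hcomp := (Real.continuous_exp.tendsto _).comp hlogΦ
      refine hcomp.congr' ?_
      filter_upwards [self_mem_nhdsWithin] with z hz
      have hzgt : (1:ℝ) < z := hz
      rw [Function.comp_apply, Real.exp_log (mul_pos (by linarith) (hFpos z hzgt))]
    refine hΦ.congr fun z => ?_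
    rw [hA z]
end

section
/- Let ℙ = ℙ₀ ⊔ ℙ₊ ⊔ ℙ₋ be a partition of the set of all primes into three weakly regular sets such that ℙ₀ has Dirichlet density 0 and the Dirichlet density of ℙ₋ is not zero. Let ψ : ℕ → ℝ be a multiplicative arithmetic function taking values in {0, 1, −1} such that for every prime p: ψ(p) = 0 if and only if p ∈ ℙ₀, ψ(p) = 1 if and only if p ∈ ℙ₊, and ψ(p) = −1 if and only if p ∈ ℙ₋. Then the set {n ∈ ℕ : ψ(n) ≠ 0} has a Dedekind-Dirichlet density d > 0, and both sets {n ∈ ℕ : ψ(n) > 0} and {n ∈ ℕ : ψ(n) < 0} have Dedekind-Dirichlet density equal to d/2. -/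
set_option maxHeartbeats 1000000


open Filter Topology

section Aux

lemma summable_rpow_neg {z : ℝ} (hz : 1 < z) : Summable (fun n : ℕ => (n:ℝ) ^ (-z)) := by
  refine (Real.summable_nat_rpow_inv.mpr hz).congr fun n => ?_
  rw [Real.rpow_neg (Nat.cast_nonneg n)]

lemma pow_rpow_neg (p : ℕ) (e : ℕ) (z : ℝ) :
    ((p ^ e : ℕ) : ℝ) ^ (-z) = (((p:ℕ):ℝ) ^ (-z)) ^ e := by
  rw [Nat.cast_pow, ← Real.rpow_natCast ((p:ℝ) ^ (-z)) e, ← Real.rpow_natCast (p:ℝ) e,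
    ← Real.rpow_mul (Nat.cast_nonneg p), ← Real.rpow_mul (Nat.cast_nonneg p), mul_comm]

-- geometric tail estimates
lemma tail_est (a : ℕ → ℝ) (ha : ∀ k, |a k| ≤ 1) (ha0 : a 0 = 1) {x : ℝ}
    (hx0 : 0 ≤ x) (hx : x ≤ 1/2) :
    Summable (fun k => a k * x ^ k) ∧
      |(∑' k, a k * x ^ k) - 1 - a 1 * x| ≤ 2 * x ^ 2 ∧
      ((∀ k, 0 ≤ a k) → 1 + a 1 * x ≤ ∑' k, a k * x ^ k) := by
  have hx1 : x < 1 := lt_of_le_of_lt hx (by norm_num)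
  have hgeo : Summable (fun k : ℕ => x ^ k) := summable_geometric_of_lt_one hx0 hx1
  have hdom : ∀ k, ‖a k * x ^ k‖ ≤ x ^ k := by
    intro k
    rw [norm_mul, norm_pow, Real.norm_eq_abs, Real.norm_eq_abs, abs_of_nonneg hx0]
    calc |a k| * x ^ k ≤ 1 * x ^ k := by gcongr; exact ha k
    _ = x ^ k := one_mul _
  have hsum : Summable (fun k : ℕ => a k * x ^ k) :=
    Summable.of_norm (hgeo.of_nonneg_of_le (fun k => norm_nonneg _) hdom)
  have hs1 : Summable (fun k : ℕ => a (k+1) * x ^ (k+1)) := by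
    exact (summable_nat_add_iff 1).mpr hsum
  have hs2 : Summable (fun k : ℕ => a (k+2) * x ^ (k+2)) := by
    exact (summable_nat_add_iff 2).mpr hsum
  set T := ∑' k, a (k+2) * x ^ (k+2) with hT
  have hkey : (∑' k, a k * x ^ k) = 1 + a 1 * x + T := by
    rw [Summable.tsum_eq_zero_add hsum, Summable.tsum_eq_zero_add hs1, ha0, hT]
    simp_rw [show ∀ b : ℕ, b + 1 + 1 = b + 2 from fun b => by omega]
    ring
  have htail : |T| ≤ 2 * x ^ 2 := by
    have h1 : |T| ≤ ∑' k : ℕ, x ^ (k+2) := by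
      rw [← Real.norm_eq_abs]
      refine (norm_tsum_le_tsum_norm hs2.norm).trans ?_
      exact Summable.tsum_le_tsum (fun k => hdom (k+2)) hs2.norm ((summable_nat_add_iff 2).mpr hgeo)
    refine h1.trans ?_
    have h2 : ∑' k : ℕ, x ^ (k+2) = (1-x)⁻¹ * x ^ 2 := by
      simp_rw [pow_add]
      rw [tsum_mul_right, tsum_geometric_of_lt_one hx0 hx1]
    rw [h2]
    have h3 : (1-x)⁻¹ ≤ 2 := by
      rw [inv_le_comm₀ (by linarith) (by norm_num)]
      linarith
    gcongr
  refine ⟨hsum, ?_, fun hnn => ?_⟩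
  · rw [hkey, show (1 + a 1 * x + T) - 1 - a 1 * x = T from by ring]
    exact htail
  · rw [hkey]
    have : 0 ≤ T := tsum_nonneg fun k => mul_nonneg (hnn _) (pow_nonneg hx0 _)
    linarith

lemma hasProd_of_hasSum_log {ι : Type*} {E : ι → ℝ} {S : ℝ} (hpos : ∀ i, 0 < E i)
    (h : HasSum (fun i => Real.log (E i)) S) : HasProd E (Real.exp S) := by
  have hprod : ∀ s : Finset ι, ∏ i ∈ s, E i = Real.exp (∑ i ∈ s, Real.log (E i)) := by
    intro s
    rw [Real.exp_sum]
    exact (Finset.prod_congr rfl fun i _ => (Real.exp_log (hpos i)).symm)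
  have := (Real.continuous_exp.tendsto S).comp h
  exact (this.congr fun s => (hprod s).symm)

lemma abs_tprod_le {ι : Type*} {E : ι → ℝ} {A : ℝ} {c : ι → ℝ} {S : ℝ}
    (hE : HasProd E A) (hc : HasSum c S) (hle : ∀ i, |E i| ≤ Real.exp (c i)) :
    |A| ≤ Real.exp S := by
  refine le_of_tendsto_of_tendsto' ((continuous_abs.tendsto A).comp hE)
    ((Real.continuous_exp.tendsto S).comp hc) (fun s => ?_)
  simp only [Function.comp_apply, Real.exp_sum, Finset.abs_prod]
  exact Finset.prod_le_prod (fun i _ => abs_nonneg _) (fun i _ => hle i)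

end Aux



lemma x_facts {p : ℕ} (hp : 2 ≤ p) {z : ℝ} (hz : 1 ≤ z) :
    0 < (p:ℝ) ^ (-z) ∧ (p:ℝ) ^ (-z) ≤ 1/2 ∧ ((p:ℝ) ^ (-z)) ^ 2 ≤ (p:ℝ) ^ (-(2:ℝ)) := by
  have hp0 : (0:ℝ) < p := by positivity
  have hp1 : (1:ℝ) ≤ p := by exact_mod_cast hp.trans' (by norm_num)
  refine ⟨Real.rpow_pos_of_pos hp0 _, ?_, ?_⟩
  · rw [Real.rpow_neg (le_of_lt hp0)]
    rw [show (1:ℝ)/2 = (2:ℝ)⁻¹ by norm_num, inv_le_inv₀ (Real.rpow_pos_of_pos hp0 _) (by norm_num)]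
    calc (2:ℝ) ≤ p := by exact_mod_cast hp
    _ = (p:ℝ) ^ (1:ℝ) := (Real.rpow_one _).symm
    _ ≤ (p:ℝ) ^ z := Real.rpow_le_rpow_of_exponent_le hp1 hz
  · rw [← Real.rpow_natCast ((p:ℝ) ^ (-z)) 2, ← Real.rpow_mul (le_of_lt hp0)]
    apply Real.rpow_le_rpow_of_exponent_le hp1
    push_cast
    nlinarith

lemma log_ge_aux {y : ℝ} (hy : 0 ≤ y) : y - y^2 ≤ Real.log (1 + y) := by
  have h1 : 0 < 1 + y := by linarith
  have h2 : Real.log (1+y)⁻¹ ≤ (1+y)⁻¹ - 1 := Real.log_le_sub_one_of_pos (by positivity)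
  rw [Real.log_inv] at h2
  have h3 : (1+y)⁻¹ = 1 - y/(1+y) := by field_simp; ring
  have h4 : y/(1+y) ≤ Real.log (1+y) := by rw [h3] at h2; linarith
  refine le_trans ?_ h4
  rw [div_eq_mul_inv, ← sub_nonneg]
  have : y * (1+y)⁻¹ - (y - y^2) = y^3 / (1+y) := by field_simp; ring
  rw [this]
  positivity

lemma neg_log_one_sub_bounds {x : ℝ} (hx0 : 0 < x) (hx : x ≤ 1/2) :
    x ≤ -Real.log (1 - x) ∧ -Real.log (1 - x) ≤ x + 2*x^2 := by
  have h1 : (0:ℝ) < 1 - x := by linarith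
  constructor
  · have := Real.log_le_sub_one_of_pos h1
    linarith
  · have h2 : -Real.log (1-x) = Real.log (1-x)⁻¹ := by rw [Real.log_inv]
    have h3 := Real.log_le_sub_one_of_pos (inv_pos.mpr h1)
    have h4 : (1-x)⁻¹ - 1 = x / (1-x) := by field_simp; ring
    have h5 : x / (1-x) ≤ x + 2*x^2 := by
      rw [div_le_iff₀ h1]
      nlinarith
    linarith [h2 ▸ h3, h4 ▸ h3]



noncomputable def Phi (c : ℕ → ℝ) (p : ℕ) (z : ℝ) : ℝ :=
  ∑' k : ℕ, c (p ^ k) * ((p:ℝ) ^ (-z)) ^ k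

lemma euler_hasProd (c : ℕ → ℝ) (hc1 : c 1 = 1)
    (hcmul : ∀ m n : ℕ, Nat.Coprime m n → c (m * n) = c m * c n)
    (hcb : ∀ n, |c n| ≤ 1) {z : ℝ} (hz : 1 < z) :
    HasProd (fun p : Nat.Primes => Phi c (p:ℕ) z) (∑' n : ℕ, c n * (n:ℝ) ^ (-z)) := by
  have hz0 : -z ≠ 0 := by intro h; simp at h; linarith
  have h := EulerProduct.eulerProduct_hasProd (f := fun n : ℕ => c n * (n:ℝ) ^ (-z))
    (by simp [hc1]) ?_ ?_ (by simp [Real.zero_rpow hz0])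
  · refine h.congr_fun fun p => ?_
    unfold Phi
    exact tsum_congr fun k => by rw [pow_rpow_neg]
  · intro m n hmn
    push_cast
    rw [Real.mul_rpow (Nat.cast_nonneg m) (Nat.cast_nonneg n), hcmul m n hmn]
    ring
  · refine (summable_rpow_neg hz).of_nonneg_of_le (fun n => norm_nonneg _) fun n => ?_
    rw [norm_mul, Real.norm_eq_abs, Real.norm_eq_abs,
      abs_of_nonneg (Real.rpow_nonneg (Nat.cast_nonneg n) _)]
    calc |c n| * (n:ℝ) ^ (-z) ≤ 1 * (n:ℝ) ^ (-z) :=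
      mul_le_mul_of_nonneg_right (hcb n) (Real.rpow_nonneg (Nat.cast_nonneg n) _)
    _ = (n:ℝ) ^ (-z) := one_mul _

lemma wr_real {S : Set ℕ} {a : ℝ} (h : WeaklyRegular S a) :
    ∃ G : ℝ → ℝ, Tendsto G (𝓝[>] 1) (𝓝 (G 1)) ∧
      ∀ z : ℝ, 1 < z →
        (∑' p : S, ((p : ℕ) : ℝ) ^ (-z)) = a * Real.log (1/(z-1)) + G z := by
  obtain ⟨g, _hdiff, hcont, heq⟩ := h
  refine ⟨fun z => (g z).re, ?_, ?_⟩
  · have h1 : Tendsto (fun z : ℝ => (z:ℂ)) (𝓝[>] (1:ℝ)) (𝓝[{z : ℂ | 1 ≤ z.re}] 1) := by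
      refine Complex.continuous_ofReal.continuousWithinAt.tendsto_nhdsWithin (fun x hx => ?_)
      simpa using le_of_lt hx
    have h2 := (hcont 1 (by simp)).tendsto
    have h3 := h2.comp h1
    exact (Complex.continuous_re.tendsto _).comp (by simpa [Function.comp_def] using h3)
  · intro z hz
    have hz1 : (0:ℝ) < z - 1 := by linarith
    have hz' : 1 < ((z:ℂ)).re := by simpa using hz
    have key := heq (z:ℂ) hz'
    have hlhs : (∑' p : S, ((p : ℕ) : ℂ) ^ (-(z:ℂ)))
        = ((∑' p : S, ((p : ℕ) : ℝ) ^ (-z) : ℝ) : ℂ) := by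
      rw [Complex.ofReal_tsum]
      refine tsum_congr fun p => ?_
      rw [Complex.ofReal_cpow (Nat.cast_nonneg _) (-z)]
      push_cast
      ring_nf
    have hlog : Complex.log (1 / ((z:ℂ) - 1)) = ((Real.log (1/(z-1)) : ℝ) : ℂ) := by
      rw [show ((z:ℂ) - 1) = ((z - 1 : ℝ) : ℂ) by push_cast; ring,
        show (1 / ((z - 1 : ℝ):ℂ)) = (((1/(z-1) : ℝ)) : ℂ) by push_cast; ring,
        ← Complex.ofReal_log (by positivity)]
    rw [hlhs, hlog] at key
    have := congrArg Complex.re key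
    simpa using this
section PhiEst

variable {c : ℕ → ℝ}

lemma phi_est (hc1 : c 1 = 1) (hcb : ∀ n, |c n| ≤ 1)
    {p : ℕ} (hp : 2 ≤ p) {z : ℝ} (hz : 1 ≤ z) :
    Summable (fun k : ℕ => c (p ^ k) * ((p:ℝ) ^ (-z)) ^ k) ∧
    |Phi c p z - 1 - c p * (p:ℝ) ^ (-z)| ≤ 2 * ((p:ℝ) ^ (-z)) ^ 2 ∧
    ((∀ n, 0 ≤ c n) → 1 + c p * (p:ℝ) ^ (-z) ≤ Phi c p z) := by
  obtain ⟨hx0, hxh, _⟩ := x_facts hp hz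
  have h := tail_est (fun k => c (p ^ k)) (fun k => hcb _) (by simpa using hc1)
    (le_of_lt hx0) hxh
  simp only [pow_one] at h
  exact ⟨h.1, h.2.1, fun hnn => h.2.2 fun k => hnn _⟩

lemma phi_log_bounds (hc1 : c 1 = 1) (hcb : ∀ n, |c n| ≤ 1) (hcnn : ∀ n, 0 ≤ c n)
    {p : ℕ} (hp : 2 ≤ p) {z : ℝ} (hz : 1 ≤ z) :
    1 ≤ Phi c p z ∧
    c p * (p:ℝ) ^ (-z) - ((p:ℝ) ^ (-z)) ^ 2 ≤ Real.log (Phi c p z) ∧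
    Real.log (Phi c p z) ≤ c p * (p:ℝ) ^ (-z) + 2 * ((p:ℝ) ^ (-z)) ^ 2 := by
  obtain ⟨hx0, hxh, _⟩ := x_facts hp hz
  obtain ⟨_, hest, hlow⟩ := phi_est hc1 hcb hp hz
  set x := (p:ℝ) ^ (-z)
  have hcpx : 0 ≤ c p * x := mul_nonneg (hcnn p) (le_of_lt hx0)
  have h1 : 1 ≤ Phi c p z := le_trans (by linarith) (hlow hcnn)
  have hub : Phi c p z ≤ 1 + c p * x + 2 * x ^ 2 := by
    have := abs_le.mp hest
    linarith [this.2]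
  refine ⟨h1, ?_, ?_⟩
  · have h2 : Real.log (1 + c p * x) ≤ Real.log (Phi c p z) :=
      Real.log_le_log (by linarith) (hlow hcnn)
    have h3 : c p * x - (c p * x)^2 ≤ Real.log (1 + c p * x) := log_ge_aux hcpx
    have h4 : (c p * x)^2 ≤ x^2 := by
      have hcp1 : c p ≤ 1 := le_trans (le_abs_self _) (hcb p)
      have hcp2 : c p ^ 2 ≤ 1 := pow_le_one₀ (hcnn p) hcp1
      calc (c p * x)^2 = c p ^ 2 * x ^ 2 := by ring
      _ ≤ 1 * x ^ 2 := mul_le_mul_of_nonneg_right hcp2 (sq_nonneg x)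
      _ = x ^ 2 := one_mul _
    linarith
  · have h5 : Real.log (Phi c p z) ≤ Phi c p z - 1 :=
      Real.log_le_sub_one_of_pos (by linarith)
    linarith

lemma phi_abs_le_exp (hc1 : c 1 = 1) (hcb : ∀ n, |c n| ≤ 1)
    {p : ℕ} (hp : 2 ≤ p) {z : ℝ} (hz : 1 ≤ z) :
    |Phi c p z| ≤ Real.exp (c p * (p:ℝ) ^ (-z) + 2 * ((p:ℝ) ^ (-z)) ^ 2) := by
  obtain ⟨hx0, hxh, _⟩ := x_facts hp hz
  obtain ⟨_, hest, _⟩ := phi_est hc1 hcb hp hz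
  set x := (p:ℝ) ^ (-z)
  have hcp : -1 ≤ c p ∧ c p ≤ 1 := abs_le.mp (hcb p)
  have h1 : |Phi c p z| ≤ 1 + c p * x + 2 * x ^ 2 := by
    have := abs_le.mp hest
    have h2 : 1 + c p * x ≥ 1 - x := by nlinarith [hcp.1]
    rw [abs_le]
    constructor <;> nlinarith [this.1, this.2]
  exact h1.trans (by linarith [Real.add_one_le_exp (c p * x + 2 * x ^ 2)])

lemma continuous_xp {p : ℕ} (hp : 2 ≤ p) : Continuous (fun z : ℝ => (p:ℝ) ^ (-z)) := by
  have hp0 : (0:ℝ) < p := by positivity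
  refine Continuous.congr (f := fun z : ℝ => Real.exp (Real.log p * (-z))) ?_ ?_
  · exact Real.continuous_exp.comp (by continuity)
  · exact fun z => (Real.rpow_def_of_pos hp0 (-z)).symm

lemma continuousOn_phi (hcb : ∀ n, |c n| ≤ 1) {p : ℕ} (hp : 2 ≤ p) :
    ContinuousOn (fun z => Phi c p z) (Set.Ici (1:ℝ)) := by
  refine continuousOn_tsum (u := fun k : ℕ => (1/2:ℝ) ^ k)
    (fun k => ((continuous_xp hp).pow k).continuousOn.const_smul (c (p^k)) |>.congr ?_)
    (summable_geometric_of_lt_one (by norm_num) (by norm_num)) (fun k z hz => ?_)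
  · intro z _; simp [smul_eq_mul]
  · obtain ⟨hx0, hxh, _⟩ := x_facts hp (hz : (1:ℝ) ≤ z)
    rw [norm_mul, norm_pow, Real.norm_eq_abs, Real.norm_eq_abs, abs_of_pos hx0]
    calc |c (p^k)| * ((p:ℝ)^(-z))^k ≤ 1 * ((1/2:ℝ))^k := by
          apply mul_le_mul (hcb _) (pow_le_pow_left₀ (le_of_lt hx0) hxh k)
            (pow_nonneg (le_of_lt hx0) k) zero_le_one
    _ = (1/2:ℝ)^k := one_mul _

end PhiEst
section ExpRep

variable {c : ℕ → ℝ}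

lemma summable_primes_rpow {z : ℝ} (hz : 1 < z) :
    Summable (fun p : Nat.Primes => ((p:ℕ):ℝ) ^ (-z)) :=
  (summable_rpow_neg hz).comp_injective Nat.Primes.coe_nat_injective

lemma summable_primes_sq : Summable (fun p : Nat.Primes => 2 * ((p:ℕ):ℝ) ^ (-(2:ℝ))) :=
  ((summable_rpow_neg (z := 2) (by norm_num)).comp_injective
    Nat.Primes.coe_nat_injective).mul_left 2

lemma summable_cx (hcb : ∀ n, |c n| ≤ 1) {z : ℝ} (hz : 1 < z) :
    Summable (fun p : Nat.Primes => c (p:ℕ) * ((p:ℕ):ℝ) ^ (-z)) := by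
  refine Summable.of_norm_bounded (summable_primes_rpow hz) (fun p => ?_)
  rw [norm_mul, Real.norm_eq_abs, Real.norm_eq_abs,
    abs_of_nonneg (Real.rpow_nonneg (Nat.cast_nonneg _) _)]
  calc |c (p:ℕ)| * ((p:ℕ):ℝ) ^ (-z) ≤ 1 * ((p:ℕ):ℝ) ^ (-z) :=
        mul_le_mul_of_nonneg_right (hcb _) (Real.rpow_nonneg (Nat.cast_nonneg _) _)
  _ = _ := one_mul _

lemma summable_r (hc1 : c 1 = 1) (hcb : ∀ n, |c n| ≤ 1) (hcnn : ∀ n, 0 ≤ c n)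
    {z : ℝ} (hz : 1 ≤ z) :
    Summable (fun p : Nat.Primes =>
      Real.log (Phi c (p:ℕ) z) - c (p:ℕ) * ((p:ℕ):ℝ) ^ (-z)) := by
  refine Summable.of_norm_bounded summable_primes_sq (fun p => ?_)
  obtain ⟨_, hl, hu⟩ := phi_log_bounds hc1 hcb hcnn p.prop.two_le hz
  obtain ⟨hx0, _, hx2⟩ := x_facts p.prop.two_le hz
  rw [Real.norm_eq_abs, abs_le]
  constructor <;> nlinarith [sq_nonneg (((p:ℕ):ℝ) ^ (-z))]

lemma summable_log_phi (hc1 : c 1 = 1) (hcb : ∀ n, |c n| ≤ 1) (hcnn : ∀ n, 0 ≤ c n)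
    {z : ℝ} (hz : 1 < z) :
    Summable (fun p : Nat.Primes => Real.log (Phi c (p:ℕ) z)) := by
  have h1 := (summable_cx hcb hz).add (summable_r hc1 hcb hcnn (le_of_lt hz))
  exact h1.congr fun p => by ring

lemma tsum_exp_rep (hc1 : c 1 = 1)
    (hcmul : ∀ m n : ℕ, Nat.Coprime m n → c (m * n) = c m * c n)
    (hcb : ∀ n, |c n| ≤ 1) (hcnn : ∀ n, 0 ≤ c n) {z : ℝ} (hz : 1 < z) :
    (∑' n : ℕ, c n * (n:ℝ) ^ (-z)) =
      Real.exp ((∑' p : Nat.Primes, c (p:ℕ) * ((p:ℕ):ℝ) ^ (-z)) +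
        ∑' p : Nat.Primes, (Real.log (Phi c (p:ℕ) z) - c (p:ℕ) * ((p:ℕ):ℝ) ^ (-z))) := by
  have hprod := euler_hasProd c hc1 hcmul hcb hz
  have hpos : ∀ p : Nat.Primes, 0 < Phi c (p:ℕ) z :=
    fun p => lt_of_lt_of_le one_pos (phi_log_bounds hc1 hcb hcnn p.prop.two_le (le_of_lt hz)).1
  have hlogsum := (summable_log_phi hc1 hcb hcnn hz).hasSum
  have hprod2 := hasProd_of_hasSum_log hpos hlogsum
  rw [hprod.unique hprod2]
  congr 1
  rw [← Summable.tsum_add (summable_cx hcb hz) (summable_r hc1 hcb hcnn (le_of_lt hz))]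
  exact tsum_congr fun p => by ring

lemma r_tendsto (hc1 : c 1 = 1) (hcb : ∀ n, |c n| ≤ 1) (hcnn : ∀ n, 0 ≤ c n) :
    Tendsto (fun z : ℝ => ∑' p : Nat.Primes,
        (Real.log (Phi c (p:ℕ) z) - c (p:ℕ) * ((p:ℕ):ℝ) ^ (-z)))
      (𝓝[>] 1) (𝓝 (∑' p : Nat.Primes,
        (Real.log (Phi c (p:ℕ) 1) - c (p:ℕ) * ((p:ℕ):ℝ) ^ (-(1:ℝ))))) := by
  have hcont : ContinuousOn (fun z : ℝ => ∑' p : Nat.Primes,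
      (Real.log (Phi c (p:ℕ) z) - c (p:ℕ) * ((p:ℕ):ℝ) ^ (-z))) (Set.Ici (1:ℝ)) := by
    refine continuousOn_tsum (fun p => ?_) summable_primes_sq (fun p z hz => ?_)
    · refine ContinuousOn.sub ?_ ?_
      · refine ((continuousOn_phi hcb p.prop.two_le).log (fun z hz => ?_))
        exact ne_of_gt (lt_of_lt_of_le one_pos
          (phi_log_bounds hc1 hcb hcnn p.prop.two_le hz).1)
      · exact ((continuous_xp p.prop.two_le).continuousOn).const_smul (c (p:ℕ)) |>.congr
          (fun z _ => by simp [smul_eq_mul])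
    · obtain ⟨_, hl, hu⟩ := phi_log_bounds hc1 hcb hcnn p.prop.two_le (hz : (1:ℝ) ≤ z)
      obtain ⟨hx0, _, hx2⟩ := x_facts p.prop.two_le (hz : (1:ℝ) ≤ z)
      rw [Real.norm_eq_abs, abs_le]
      constructor <;> nlinarith [sq_nonneg (((p:ℕ):ℝ) ^ (-z))]
  have h1 := (hcont 1 (Set.mem_Ici.mpr le_rfl)).tendsto
  exact h1.mono_left (nhdsWithin_mono 1 Set.Ioi_subset_Ici_self)

end ExpRep
section Signed

variable {c : ℕ → ℝ}

lemma summable_cu (hcb : ∀ n, |c n| ≤ 1) {z : ℝ} (hz : 1 < z) :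
    Summable (fun n : ℕ => c n * (n:ℝ) ^ (-z)) := by
  refine Summable.of_norm_bounded (summable_rpow_neg hz) (fun n => ?_)
  rw [norm_mul, Real.norm_eq_abs, Real.norm_eq_abs,
    abs_of_nonneg (Real.rpow_nonneg (Nat.cast_nonneg _) _)]
  calc |c n| * (n:ℝ) ^ (-z) ≤ 1 * (n:ℝ) ^ (-z) :=
        mul_le_mul_of_nonneg_right (hcb _) (Real.rpow_nonneg (Nat.cast_nonneg _) _)
  _ = _ := one_mul _

lemma summable_sq' {z : ℝ} (hz : 1 ≤ z) :
    Summable (fun p : Nat.Primes => 2 * (((p:ℕ):ℝ) ^ (-z)) ^ 2) := by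
  refine Summable.of_norm_bounded summable_primes_sq (fun p => ?_)
  obtain ⟨hx0, _, hx2⟩ := x_facts p.prop.two_le hz
  rw [Real.norm_eq_abs, abs_of_nonneg (by positivity)]
  linarith

lemma abs_tsum_le_exp (hc1 : c 1 = 1)
    (hcmul : ∀ m n : ℕ, Nat.Coprime m n → c (m * n) = c m * c n)
    (hcb : ∀ n, |c n| ≤ 1) {z : ℝ} (hz : 1 < z) :
    |∑' n : ℕ, c n * (n:ℝ) ^ (-z)| ≤
      Real.exp ((∑' p : Nat.Primes, c (p:ℕ) * ((p:ℕ):ℝ) ^ (-z)) +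
        ∑' p : Nat.Primes, 2 * (((p:ℕ):ℝ) ^ (-z)) ^ 2) := by
  have hprod := euler_hasProd c hc1 hcmul hcb hz
  have hsum : HasSum (fun p : Nat.Primes =>
      c (p:ℕ) * ((p:ℕ):ℝ) ^ (-z) + 2 * (((p:ℕ):ℝ) ^ (-z)) ^ 2)
      ((∑' p : Nat.Primes, c (p:ℕ) * ((p:ℕ):ℝ) ^ (-z)) +
        ∑' p : Nat.Primes, 2 * (((p:ℕ):ℝ) ^ (-z)) ^ 2) :=
    (summable_cx hcb hz).hasSum.add (summable_sq' (le_of_lt hz)).hasSum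
  exact abs_tprod_le hprod hsum
    (fun p => phi_abs_le_exp hc1 hcb p.prop.two_le (le_of_lt hz))

lemma tsum_primes_eq_indicator (F : ℕ → ℝ) :
    ∑' p : Nat.Primes, F (p:ℕ) = ∑' n : ℕ, Set.indicator {n : ℕ | Nat.Prime n} F n :=
  tsum_subtype {n : ℕ | Nat.Prime n} F

end Signed

/-- Let `ℙ = ℙ₀ ⊔ ℙ₊ ⊔ ℙ₋` be a partition of the primes into three weakly
regular sets, with `δ(ℙ₀) = 0` and `δ(ℙ₋) ≠ 0`. Let `ψ : ℕ → ℝ` be multiplicative with values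
in `{0,1,-1}` whose sign at each prime matches the partition. Then `{n : ψ(n) ≠ 0}` has a
positive Dedekind-Dirichlet density `d`, and both `{n : ψ(n) > 0}` and `{n : ψ(n) < 0}` have
Dedekind-Dirichlet density `d/2`. -/
theorem dedekind_density_equidistribution_of_weaklyRegular_partition
    (P0 Pp Pm : Set ℕ)
    (hsub0 : ∀ p ∈ P0, Nat.Prime p) (hsubp : ∀ p ∈ Pp, Nat.Prime p)
    (hsubm : ∀ p ∈ Pm, Nat.Prime p)
    (hd0p : Disjoint P0 Pp) (hd0m : Disjoint P0 Pm) (hdpm : Disjoint Pp Pm)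
    (hcover : P0 ∪ Pp ∪ Pm = {p : ℕ | Nat.Prime p})
    (hreg0 : WeaklyRegular P0 0)
    (ap : ℝ) (hregp : WeaklyRegular Pp ap)
    (am : ℝ) (hregm : WeaklyRegular Pm am) (ham : am ≠ 0)
    (ψ : ℕ → ℝ) (hψ1 : ψ 1 = 1)
    (hψmul : ∀ m n : ℕ, Nat.Coprime m n → ψ (m * n) = ψ m * ψ n)
    (hψval : ∀ n : ℕ, ψ n = 0 ∨ ψ n = 1 ∨ ψ n = -1)
    (hψp : ∀ p : ℕ, Nat.Prime p →
      (ψ p = 0 ↔ p ∈ P0) ∧ (ψ p = 1 ↔ p ∈ Pp) ∧ (ψ p = -1 ↔ p ∈ Pm)) :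
    ∃ d : ℝ, 0 < d ∧
      Tendsto (fun z : ℝ => (z - 1) * ∑' n : {n : ℕ | ψ n ≠ 0}, ((n : ℕ) : ℝ) ^ (-z))
        (𝓝[>] 1) (𝓝 d) ∧
      Tendsto (fun z : ℝ => (z - 1) * ∑' n : {n : ℕ | 0 < ψ n}, ((n : ℕ) : ℝ) ^ (-z))
        (𝓝[>] 1) (𝓝 (d / 2)) ∧
      Tendsto (fun z : ℝ => (z - 1) * ∑' n : {n : ℕ | ψ n < 0}, ((n : ℕ) : ℝ) ^ (-z))
        (𝓝[>] 1) (𝓝 (d / 2)) := by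
  classical
  obtain ⟨G0, hG0t, hG0⟩ := wr_real hreg0
  obtain ⟨Gp, hGpt, hGp⟩ := wr_real hregp
  obtain ⟨Gm, hGmt, hGm⟩ := wr_real hregm
  set L : ℝ → ℝ := fun z => Real.log (1/(z-1)) with hLdef
  set c1 : ℕ → ℝ := fun n => if n = 0 then 0 else 1 with hc1def
  set c2 : ℕ → ℝ := fun n => (ψ n)^2 with hc2def
  -- basic properties of ψ, c1, c2
  have hψb : ∀ n, |ψ n| ≤ 1 := by
    intro n; rcases hψval n with h|h|h <;> rw [h] <;> norm_num
  have hc21 : c2 1 = 1 := by simp [hc2def, hψ1]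
  have hc2b : ∀ n, |c2 n| ≤ 1 := by
    intro n; rcases hψval n with h|h|h <;> simp [hc2def, h] <;> norm_num
  have hc2nn : ∀ n, 0 ≤ c2 n := fun n => sq_nonneg _
  have hc2mul : ∀ m n : ℕ, Nat.Coprime m n → c2 (m * n) = c2 m * c2 n := by
    intro m n h; simp only [hc2def]; rw [hψmul m n h]; ring
  have hc11 : c1 1 = 1 := by simp [hc1def]
  have hc1b : ∀ n, |c1 n| ≤ 1 := by
    intro n; simp only [hc1def]; split <;> norm_num
  have hc1nn : ∀ n, 0 ≤ c1 n := by
    intro n; simp only [hc1def]; split <;> norm_num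
  have hc1mul : ∀ m n : ℕ, Nat.Coprime m n → c1 (m * n) = c1 m * c1 n := by
    intro m n _; simp only [hc1def, Nat.mul_eq_zero]
    rcases eq_or_ne m 0 with h|h <;> rcases eq_or_ne n 0 with h'|h' <;> simp [h, h']
  -- the trichotomy for each natural number
  have cases_n : ∀ n : ℕ,
      (n ∉ P0 ∧ n ∉ Pp ∧ n ∉ Pm ∧ ¬ Nat.Prime n) ∨
      (n ∈ P0 ∧ n ∉ Pp ∧ n ∉ Pm ∧ Nat.Prime n ∧ ψ n = 0) ∨
      (n ∉ P0 ∧ n ∈ Pp ∧ n ∉ Pm ∧ Nat.Prime n ∧ ψ n = 1) ∨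
      (n ∉ P0 ∧ n ∉ Pp ∧ n ∈ Pm ∧ Nat.Prime n ∧ ψ n = -1) := by
    intro n
    by_cases hn : Nat.Prime n
    · have hmem : n ∈ P0 ∪ Pp ∪ Pm := by rw [hcover]; exact hn
      rcases hmem with (h|h)|h
      · exact Or.inr <| Or.inl ⟨h, Set.disjoint_left.mp hd0p h,
          Set.disjoint_left.mp hd0m h, hn, (hψp n hn).1.mpr h⟩
      · exact Or.inr <| Or.inr <| Or.inl ⟨Set.disjoint_right.mp hd0p h, h,
          Set.disjoint_left.mp hdpm h, hn, (hψp n hn).2.1.mpr h⟩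
      · exact Or.inr <| Or.inr <| Or.inr ⟨Set.disjoint_right.mp hd0m h,
          Set.disjoint_right.mp hdpm h, h, hn, (hψp n hn).2.2.mpr h⟩
    · exact Or.inl ⟨fun h => hn (hsub0 n h), fun h => hn (hsubp n h),
        fun h => hn (hsubm n h), hn⟩
  -- summabilities
  have husum : ∀ z : ℝ, 1 < z → Summable (fun n : ℕ => (n:ℝ)^(-z)) :=
    fun z hz => summable_rpow_neg hz
  -- splitting of prime sums
  have hsplit2 : ∀ z : ℝ, 1 < z →
      ∑' p : Nat.Primes, c2 (p:ℕ) * ((p:ℕ):ℝ)^(-z) =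
        (∑' p : Pp, ((p:ℕ):ℝ)^(-z)) + ∑' p : Pm, ((p:ℕ):ℝ)^(-z) := by
    intro z hz
    rw [tsum_primes_eq_indicator (fun n => c2 n * (n:ℝ)^(-z)),
      tsum_subtype Pp (fun n : ℕ => (n:ℝ)^(-z)), tsum_subtype Pm (fun n : ℕ => (n:ℝ)^(-z)),
      ← Summable.tsum_add ((husum z hz).indicator Pp) ((husum z hz).indicator Pm)]
    refine tsum_congr fun n => ?_
    rcases cases_n n with ⟨h0,hp,hm,hnp⟩|⟨h0,hp,hm,hnp,hv⟩|⟨h0,hp,hm,hnp,hv⟩|⟨h0,hp,hm,hnp,hv⟩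
    · simp [Set.indicator_apply, h0, hp, hm, hnp, hc2def]
    · simp [Set.indicator_apply, h0, hp, hm, hnp, hc2def, hv]
    · simp [Set.indicator_apply, h0, hp, hm, hnp, hc2def, hv]
    · simp [Set.indicator_apply, h0, hp, hm, hnp, hc2def, hv]
  have hsplitψ : ∀ z : ℝ, 1 < z →
      ∑' p : Nat.Primes, ψ (p:ℕ) * ((p:ℕ):ℝ)^(-z) =
        (∑' p : Pp, ((p:ℕ):ℝ)^(-z)) - ∑' p : Pm, ((p:ℕ):ℝ)^(-z) := by
    intro z hz
    rw [tsum_primes_eq_indicator (fun n => ψ n * (n:ℝ)^(-z)),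
      tsum_subtype Pp (fun n : ℕ => (n:ℝ)^(-z)), tsum_subtype Pm (fun n : ℕ => (n:ℝ)^(-z)),
      ← Summable.tsum_sub ((husum z hz).indicator Pp) ((husum z hz).indicator Pm)]
    refine tsum_congr fun n => ?_
    rcases cases_n n with ⟨h0,hp,hm,hnp⟩|⟨h0,hp,hm,hnp,hv⟩|⟨h0,hp,hm,hnp,hv⟩|⟨h0,hp,hm,hnp,hv⟩
    · simp [Set.indicator_apply, h0, hp, hm, hnp]
    · simp [Set.indicator_apply, h0, hp, hm, hnp, hv]
    · simp [Set.indicator_apply, h0, hp, hm, hnp, hv]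
    · simp [Set.indicator_apply, h0, hp, hm, hnp, hv]
  have hsplit1 : ∀ z : ℝ, 1 < z →
      ∑' p : Nat.Primes, c1 (p:ℕ) * ((p:ℕ):ℝ)^(-z) =
        ((∑' p : P0, ((p:ℕ):ℝ)^(-z)) + ∑' p : Pp, ((p:ℕ):ℝ)^(-z))
          + ∑' p : Pm, ((p:ℕ):ℝ)^(-z) := by
    intro z hz
    rw [tsum_primes_eq_indicator (fun n => c1 n * (n:ℝ)^(-z)),
      tsum_subtype P0 (fun n : ℕ => (n:ℝ)^(-z)),
      tsum_subtype Pp (fun n : ℕ => (n:ℝ)^(-z)), tsum_subtype Pm (fun n : ℕ => (n:ℝ)^(-z)),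
      ← Summable.tsum_add ((husum z hz).indicator P0) ((husum z hz).indicator Pp),
      ← Summable.tsum_add (((husum z hz).indicator P0).add ((husum z hz).indicator Pp))
        ((husum z hz).indicator Pm)]
    refine tsum_congr fun n => ?_
    have hn0 : n ∈ ({n : ℕ | Nat.Prime n} : Set ℕ) → n ≠ 0 := fun h => h.pos.ne'
    rcases cases_n n with ⟨h0,hp,hm,hnp⟩|⟨h0,hp,hm,hnp,hv⟩|⟨h0,hp,hm,hnp,hv⟩|⟨h0,hp,hm,hnp,hv⟩
    · simp [Set.indicator_apply, h0, hp, hm, hnp]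
    · simp [Set.indicator_apply, h0, hp, hm, hnp, hc1def, hnp.pos.ne']
    · simp [Set.indicator_apply, h0, hp, hm, hnp, hc1def, hnp.pos.ne']
    · simp [Set.indicator_apply, h0, hp, hm, hnp, hc1def, hnp.pos.ne']
  -- prime sums via weak regularity
  have hprime_c2 : ∀ z : ℝ, 1 < z →
      ∑' p : Nat.Primes, c2 (p:ℕ) * ((p:ℕ):ℝ)^(-z) = (ap + am) * L z + (Gp z + Gm z) := by
    intro z hz
    rw [hsplit2 z hz, hGp z hz, hGm z hz]; ring
  have hprime_ψ : ∀ z : ℝ, 1 < z →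
      ∑' p : Nat.Primes, ψ (p:ℕ) * ((p:ℕ):ℝ)^(-z) = (ap - am) * L z + (Gp z - Gm z) := by
    intro z hz
    rw [hsplitψ z hz, hGp z hz, hGm z hz]; ring
  have hprime_c1 : ∀ z : ℝ, 1 < z →
      ∑' p : Nat.Primes, c1 (p:ℕ) * ((p:ℕ):ℝ)^(-z) =
        (ap + am) * L z + (G0 z + Gp z + Gm z) := by
    intro z hz
    rw [hsplit1 z hz, hG0 z hz, hGp z hz, hGm z hz]; ring
  -- L tends to infinity
  have hsub1 : Tendsto (fun z : ℝ => z - 1) (𝓝[>]1) (𝓝[>]0) := by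
    refine tendsto_nhdsWithin_of_tendsto_nhds_of_eventually_within _ ?_ ?_
    · have h0 : Tendsto (fun z : ℝ => z - 1) (𝓝 1) (𝓝 0) := by
        simpa using (continuous_sub_right (1:ℝ)).tendsto 1
      exact h0.mono_left nhdsWithin_le_nhds
    · filter_upwards [eventually_mem_nhdsWithin] with z hz
      simpa using (sub_pos.mpr (Set.mem_Ioi.mp hz))
  have hL_top : Tendsto L (𝓝[>]1) atTop := by
    have h1 : Tendsto (fun z : ℝ => Real.log (z-1)) (𝓝[>]1) atBot :=
      Real.tendsto_log_nhdsGT_zero.comp hsub1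
    have h2 := Filter.tendsto_neg_atTop_iff.mpr h1
    refine h2.congr fun z => ?_
    simp only [hLdef, one_div, Real.log_inv]
  have hLneg : ∀ z : ℝ, 1 < z → Real.log (z - 1) = - L z := by
    intro z hz; simp only [hLdef, one_div, Real.log_inv, neg_neg]
  -- representation of the full zeta sum
  have hZrep : ∀ z : ℝ, 1 < z → (∑' n : ℕ, (n:ℝ)^(-z)) =
      Real.exp ((ap + am) * L z + (G0 z + Gp z + Gm z) +
        ∑' p : Nat.Primes, (Real.log (Phi c1 (p:ℕ) z) - c1 (p:ℕ) * ((p:ℕ):ℝ)^(-z))) := by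
    intro z hz
    have h1 := tsum_exp_rep hc11 hc1mul hc1b hc1nn hz
    have h2 : (∑' n : ℕ, (n:ℝ)^(-z)) = ∑' n : ℕ, c1 n * (n:ℝ)^(-z) := by
      refine tsum_congr fun n => ?_
      rcases eq_or_ne n 0 with h|h
      · simp [h, hc1def, Real.zero_rpow (neg_ne_zero.mpr (by linarith : z ≠ 0))]
      · simp [hc1def, h]
    rw [h2, h1, hprime_c1 z hz]
  -- (z-1) * zeta sum tends to 1
  have hZlim : Tendsto (fun z : ℝ => (z-1) * ∑' n : ℕ, (n:ℝ)^(-z)) (𝓝[>]1) (𝓝 1) := by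
    refine tendsto_sub_mul_tsum_nat_rpow.congr fun z => ?_
    congr 1
    exact tsum_congr fun n => by
      rw [Real.rpow_neg (Nat.cast_nonneg n), one_div]
  have hloglim : Tendsto (fun z : ℝ => Real.log ((z-1) * ∑' n : ℕ, (n:ℝ)^(-z)))
      (𝓝[>]1) (𝓝 0) := by
    have := (Real.continuousAt_log (by norm_num : (1:ℝ) ≠ 0)).tendsto.comp hZlim
    simpa [Function.comp_def] using this
  -- ap + am = 1
  have hsum1 : ap + am = 1 := by
    set R1 : ℝ → ℝ := fun z =>
      ∑' p : Nat.Primes, (Real.log (Phi c1 (p:ℕ) z) - c1 (p:ℕ) * ((p:ℕ):ℝ)^(-z)) with hR1def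
    have hR1t : Tendsto R1 (𝓝[>]1) (𝓝 (R1 1)) := r_tendsto hc11 hc1b hc1nn
    have hid : ∀ᶠ z in 𝓝[>](1:ℝ), (ap + am - 1) * L z =
        Real.log ((z-1) * ∑' n : ℕ, (n:ℝ)^(-z)) - (G0 z + Gp z + Gm z) - R1 z := by
      filter_upwards [eventually_mem_nhdsWithin] with z hz
      have hz1 : (1:ℝ) < z := hz
      have hzpos : (0:ℝ) < z - 1 := by linarith
      have hZpos : (0:ℝ) < ∑' n : ℕ, (n:ℝ)^(-z) := by rw [hZrep z hz1]; positivity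
      rw [hZrep z hz1, Real.log_mul (ne_of_gt hzpos) (Real.exp_ne_zero _), Real.log_exp,
        hLneg z hz1]
      ring
    have hC : Tendsto (fun z => (ap + am - 1) * L z) (𝓝[>]1)
        (𝓝 (0 - (G0 1 + Gp 1 + Gm 1) - R1 1)) := by
      refine Tendsto.congr' (EventuallyEq.symm hid) ?_
      exact (hloglim.sub ((hG0t.add hGpt).add hGmt)).sub hR1t
    by_contra hne
    have hne' : ap + am - 1 ≠ 0 := fun h => hne (by linarith)
    have hLlim : Tendsto L (𝓝[>]1)
        (𝓝 ((ap + am - 1)⁻¹ * (0 - (G0 1 + Gp 1 + Gm 1) - R1 1))) := by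
      have := hC.const_mul (ap + am - 1)⁻¹
      refine this.congr fun z => ?_
      field_simp
    exact not_tendsto_nhds_of_tendsto_atTop hL_top _ hLlim
  -- am > 0
  have ham_pos : 0 < am := by
    rcases lt_trichotomy am 0 with h|h|h
    · exfalso
      have hsm_nonneg : ∀ᶠ z in 𝓝[>](1:ℝ), 0 ≤ am * L z + Gm z := by
        filter_upwards [eventually_mem_nhdsWithin] with z hz
        have hz1 : (1:ℝ) < z := hz
        rw [← hGm z hz1]
        exact tsum_nonneg fun p => Real.rpow_nonneg (Nat.cast_nonneg _) _
      have hbot : Tendsto (fun z => am * L z + Gm z) (𝓝[>]1) atBot := by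
        have h1 : Tendsto (fun z => am * L z) (𝓝[>]1) atBot := by
          have := hL_top.const_mul_atTop_of_neg h
          exact this
        exact h1.atBot_add hGmt
      have := (hbot.eventually (eventually_lt_atBot (0:ℝ))).and hsm_nonneg
      obtain ⟨z, hz1, hz2⟩ := this.exists
      linarith
    · exact absurd h ham
    · exact h
    -- the limit for A
  have hAlim : Tendsto (fun z : ℝ => (z-1) * ∑' n : ℕ, c2 n * (n:ℝ)^(-z)) (𝓝[>]1)
      (𝓝 (Real.exp (Gp 1 + Gm 1 +
        ∑' p : Nat.Primes, (Real.log (Phi c2 (p:ℕ) 1) - c2 (p:ℕ) * ((p:ℕ):ℝ)^(-(1:ℝ)))))) := by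
    have hTen : Tendsto (fun z : ℝ => Real.exp (Gp z + Gm z +
        ∑' p : Nat.Primes, (Real.log (Phi c2 (p:ℕ) z) - c2 (p:ℕ) * ((p:ℕ):ℝ)^(-z)))) (𝓝[>]1)
        (𝓝 (Real.exp (Gp 1 + Gm 1 +
        ∑' p : Nat.Primes, (Real.log (Phi c2 (p:ℕ) 1) - c2 (p:ℕ) * ((p:ℕ):ℝ)^(-(1:ℝ)))))) :=
      (Real.continuous_exp.tendsto _).comp
        ((hGpt.add hGmt).add (r_tendsto hc21 hc2b hc2nn))
    refine hTen.congr' ?_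
    filter_upwards [eventually_mem_nhdsWithin] with z hz
    have hz1 : (1:ℝ) < z := hz
    have hzpos : (0:ℝ) < z - 1 := by linarith
    rw [tsum_exp_rep hc21 hc2mul hc2b hc2nn hz1, hprime_c2 z hz1, hsum1, one_mul,
      ← Real.exp_log hzpos, hLneg z hz1, ← Real.exp_add]
    ring_nf
  -- the limit for B
  have hBlim : Tendsto (fun z : ℝ => (z-1) * ∑' n : ℕ, ψ n * (n:ℝ)^(-z)) (𝓝[>]1) (𝓝 0) := by
    set τC : ℝ := ∑' p : Nat.Primes, 2 * ((p:ℕ):ℝ)^(-(2:ℝ)) with hτCdef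
    refine squeeze_zero_norm'
      (a := fun z => Real.exp (-(2*am) * L z + ((Gp z - Gm z) + τC))) ?_ ?_
    · filter_upwards [eventually_mem_nhdsWithin] with z hz
      have hz1 : (1:ℝ) < z := hz
      have hzpos : (0:ℝ) < z - 1 := by linarith
      have hb := abs_tsum_le_exp hψ1 hψmul hψb hz1
      have hτ : (∑' p : Nat.Primes, 2 * (((p:ℕ):ℝ)^(-z))^2) ≤ τC := by
        refine Summable.tsum_le_tsum (fun p => ?_) (summable_sq' (le_of_lt hz1)) summable_primes_sq
        have := (x_facts p.prop.two_le (le_of_lt hz1)).2.2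
        linarith
      rw [Real.norm_eq_abs, abs_mul, abs_of_pos hzpos]
      calc (z-1) * |∑' n : ℕ, ψ n * (n:ℝ)^(-z)|
          ≤ (z-1) * Real.exp ((ap - am) * L z + (Gp z - Gm z) + τC) := by
            refine mul_le_mul_of_nonneg_left ?_ (le_of_lt hzpos)
            refine hb.trans ?_
            rw [hprime_ψ z hz1]
            exact Real.exp_le_exp.mpr (by linarith)
      _ = Real.exp (-(2*am) * L z + ((Gp z - Gm z) + τC)) := by
            rw [← Real.exp_log hzpos, hLneg z hz1, ← Real.exp_add]
            congr 1
            have hap : ap = 1 - am := by linarith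
            rw [hap]; ring
    · have h1 : Tendsto (fun z : ℝ => -(2*am) * L z) (𝓝[>]1) atBot :=
        hL_top.const_mul_atTop_of_neg (by linarith)
      have h2 : Tendsto (fun z : ℝ => -(2*am) * L z + ((Gp z - Gm z) + τC)) (𝓝[>]1) atBot :=
        h1.atBot_add ((hGpt.sub hGmt).add tendsto_const_nhds)
      exact Real.tendsto_exp_atBot.comp h2
  -- identify the subtype sums
  have hpt1 : ∀ z : ℝ, 1 < z →
      (∑' n : {n : ℕ | ψ n ≠ 0}, ((n:ℕ):ℝ)^(-z)) = ∑' n : ℕ, c2 n * (n:ℝ)^(-z) := by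
    intro z hz
    rw [tsum_subtype {n : ℕ | ψ n ≠ 0} (fun n : ℕ => (n:ℝ)^(-z))]
    refine tsum_congr fun n => ?_
    rcases hψval n with h|h|h <;>
      simp [Set.indicator_apply, Set.mem_setOf_eq, h, hc2def] <;> norm_num
  have hpt2 : ∀ z : ℝ, 1 < z →
      (∑' n : {n : ℕ | 0 < ψ n}, ((n:ℕ):ℝ)^(-z)) =
        ((∑' n : ℕ, c2 n * (n:ℝ)^(-z)) + ∑' n : ℕ, ψ n * (n:ℝ)^(-z))/2 := by
    intro z hz
    rw [← Summable.tsum_add (summable_cu hc2b hz) (summable_cu hψb hz),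
      tsum_subtype {n : ℕ | 0 < ψ n} (fun n : ℕ => (n:ℝ)^(-z)), ← tsum_div_const]
    refine tsum_congr fun n => ?_
    rcases hψval n with h|h|h <;>
      simp [Set.indicator_apply, Set.mem_setOf_eq, h, hc2def] <;> norm_num <;> ring
  have hpt3 : ∀ z : ℝ, 1 < z →
      (∑' n : {n : ℕ | ψ n < 0}, ((n:ℕ):ℝ)^(-z)) =
        ((∑' n : ℕ, c2 n * (n:ℝ)^(-z)) - ∑' n : ℕ, ψ n * (n:ℝ)^(-z))/2 := by
    intro z hz
    rw [← Summable.tsum_sub (summable_cu hc2b hz) (summable_cu hψb hz),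
      tsum_subtype {n : ℕ | ψ n < 0} (fun n : ℕ => (n:ℝ)^(-z)), ← tsum_div_const]
    refine tsum_congr fun n => ?_
    rcases hψval n with h|h|h <;>
      simp [Set.indicator_apply, Set.mem_setOf_eq, h, hc2def] <;> norm_num <;> ring
  -- assembly
  refine ⟨Real.exp (Gp 1 + Gm 1 +
      ∑' p : Nat.Primes, (Real.log (Phi c2 (p:ℕ) 1) - c2 (p:ℕ) * ((p:ℕ):ℝ)^(-(1:ℝ)))),
    Real.exp_pos _, ?_, ?_, ?_⟩
  · refine hAlim.congr' ?_
    filter_upwards [eventually_mem_nhdsWithin] with z hz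
    rw [hpt1 z hz]
  · have h := (hAlim.add hBlim).div_const 2
    rw [add_zero] at h
    refine h.congr' ?_
    filter_upwards [eventually_mem_nhdsWithin] with z hz
    rw [hpt2 z hz]
    ring
  · have h := (hAlim.sub hBlim).div_const 2
    rw [sub_zero] at h
    refine h.congr' ?_
    filter_upwards [eventually_mem_nhdsWithin] with z hz
    rw [hpt3 z hz]
    ring
end

section
/- Let S ⊆ ℙ be a set of primes of Dirichlet density 1 and let χ : ℕ → ℝ be a multiplicative function taking values in {0,1} that is characteristic on S. Define g(z) := P_S(z) − log(1/(z−1)) on {Re z > 1}. Assume that g extends to a continuous function on {Re z ≥ 1} and that the difference quotient φ(z) := (g(z) − g(1))/(z−1), defined for Re z > 1, also extends to a continuous function on {Re z ≥ 1}. Then there exist a real number a > 0 and a function h continuous on {Re z ≥ 1} such that D_χ(z) = a/(z−1) + h(z) for all z with Re z > 1. -/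
open Filter Topology

namespace DSP9

noncomputable def fE (χ : ℕ → ℝ) (z : ℂ) (n : ℕ) : ℂ := (χ n : ℂ) * (n : ℂ) ^ (-z)

noncomputable def Fp (χ : ℕ → ℝ) (p : ℕ) (z : ℂ) : ℂ := ∑' e : ℕ, fE χ z (p ^ e)

def two : Nat.Primes := ⟨2, Nat.prime_two⟩

noncomputable def ell (χ : ℕ → ℝ) (p : Nat.Primes) (z : ℂ) : ℂ :=
  if p = two then 0 else Complex.log (Fp χ (p : ℕ) z) - fE χ z (p : ℕ)

noncomputable def EE (χ : ℕ → ℝ) (z : ℂ) : ℂ := ∑' p : Nat.Primes, ell χ p z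

variable {χ : ℕ → ℝ} {z : ℂ} {p : ℕ}

lemma abs_chi_le (hχval : ∀ n, χ n = 0 ∨ χ n = 1) (n : ℕ) : |χ n| ≤ 1 := by
  rcases hχval n with h | h <;> simp [h]

lemma norm_natCast_cpow (n : ℕ) (hn : 0 < n) (z : ℂ) :
    ‖((n : ℕ) : ℂ) ^ (-z)‖ = (n : ℝ) ^ (-z.re) := by
  rw [show ((n : ℕ) : ℂ) = (((n : ℝ) : ℝ) : ℂ) by push_cast; ring]
  rw [Complex.norm_cpow_eq_rpow_re_of_pos (by exact_mod_cast hn)]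
  simp

lemma norm_fE_le (hχval : ∀ n, χ n = 0 ∨ χ n = 1) (n : ℕ) (hn : 0 < n) :
    ‖fE χ z n‖ ≤ (n : ℝ) ^ (-z.re) := by
  rw [fE, norm_mul, Complex.norm_real, ← norm_natCast_cpow n hn z]
  calc |χ n| * ‖((n : ℕ) : ℂ) ^ (-z)‖ ≤ 1 * ‖((n : ℕ) : ℂ) ^ (-z)‖ :=
        mul_le_mul_of_nonneg_right (abs_chi_le hχval n) (norm_nonneg _)
    _ = _ := one_mul _

lemma norm_fE_pow_le (hχval : ∀ n, χ n = 0 ∨ χ n = 1) (hp : 2 ≤ p) (m : ℕ) :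
    ‖fE χ z (p ^ m)‖ ≤ ((p : ℝ) ^ (-z.re)) ^ m := by
  have h1 : ‖fE χ z (p ^ m)‖ ≤ ((p ^ m : ℕ) : ℝ) ^ (-z.re) :=
    norm_fE_le hχval _ (pow_pos (by omega) m)
  refine h1.trans_eq ?_
  have hp0 : (0:ℝ) ≤ (p : ℝ) := by positivity
  rw [Nat.cast_pow, ← Real.rpow_natCast (p:ℝ) m, ← Real.rpow_mul hp0,
    mul_comm, Real.rpow_mul hp0, Real.rpow_natCast]

lemma r_nonneg (σ : ℝ) : (0:ℝ) ≤ (p : ℝ) ^ (-σ) := Real.rpow_nonneg (by positivity) _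

lemma r_lt_one (hp : 2 ≤ p) (hσ : (3:ℝ)/4 ≤ z.re) : (p : ℝ) ^ (-z.re) < 1 :=
  Real.rpow_lt_one_of_one_lt_of_neg (by exact_mod_cast hp.trans_lt' one_lt_two) (by linarith)

lemma r_le (hp : 3 ≤ p) (hσ : (3:ℝ)/4 ≤ z.re) : (p : ℝ) ^ (-z.re) ≤ 9/20 := by
  have h1 : (p : ℝ) ^ (-z.re) ≤ (p : ℝ) ^ (-(3/4 : ℝ)) :=
    Real.rpow_le_rpow_of_exponent_le (by exact_mod_cast hp.trans' (by norm_num)) (by linarith)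
  have h2 : (p : ℝ) ^ (-(3/4 : ℝ)) ≤ (3 : ℝ) ^ (-(3/4 : ℝ)) := by
    rw [Real.rpow_neg (by positivity), Real.rpow_neg (by norm_num)]
    refine inv_anti₀ (by positivity) ?_
    exact Real.rpow_le_rpow (by norm_num) (by exact_mod_cast hp) (by norm_num)
  have hcube : ((3:ℝ) ^ ((3:ℝ)/4)) ^ (4:ℕ) = 27 := by
    rw [← Real.rpow_natCast ((3:ℝ) ^ ((3:ℝ)/4)) 4, ← Real.rpow_mul (by norm_num)]
    rw [show ((3:ℝ)/4 * ((4:ℕ):ℝ)) = ((3:ℕ):ℝ) by push_cast; ring, Real.rpow_natCast]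
    norm_num
  have h3 : (3 : ℝ) ^ (-(3/4 : ℝ)) ≤ 9/20 := by
    rw [Real.rpow_neg (by norm_num)]
    rw [inv_le_comm₀ (by positivity) (by norm_num)]
    refine le_of_pow_le_pow_left₀ (n := 4) (by norm_num) (Real.rpow_nonneg (by norm_num) _) ?_
    rw [hcube]; norm_num
  linarith

lemma r_sq_le (hp : 2 ≤ p) (hσ : (3:ℝ)/4 ≤ z.re) :
    ((p : ℝ) ^ (-z.re)) ^ (2:ℕ) ≤ (p : ℝ) ^ (-(3/2 : ℝ)) := by
  have hp0 : (0:ℝ) ≤ (p:ℝ) := by positivity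
  rw [← Real.rpow_natCast ((p:ℝ) ^ (-z.re)) 2, ← Real.rpow_mul hp0]
  exact Real.rpow_le_rpow_of_exponent_le (by exact_mod_cast hp.trans' (by norm_num))
    (by push_cast; linarith)

lemma summable_pow (hχval : ∀ n, χ n = 0 ∨ χ n = 1) (hp : 2 ≤ p) (hσ : (3:ℝ)/4 ≤ z.re) :
    Summable (fun e : ℕ => fE χ z (p ^ e)) :=
  Summable.of_norm_bounded (summable_geometric_of_lt_one (r_nonneg _) (r_lt_one hp hσ))
    (fun m => norm_fE_pow_le hχval hp m)

lemma norm_tail_le (hχval : ∀ n, χ n = 0 ∨ χ n = 1) (hp : 2 ≤ p) (hσ : (3:ℝ)/4 ≤ z.re) (k : ℕ) :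
    ‖∑' e : ℕ, fE χ z (p ^ (e + k))‖ ≤
      ((p : ℝ) ^ (-z.re)) ^ k * (1 - (p : ℝ) ^ (-z.re))⁻¹ := by
  set r := (p : ℝ) ^ (-z.re) with hr
  have hr0 : 0 ≤ r := r_nonneg _
  have hr1 : r < 1 := r_lt_one hp hσ
  have hgeo : Summable (fun e : ℕ => r ^ (e + k)) :=
    (summable_nat_add_iff k).mpr (summable_geometric_of_lt_one hr0 hr1)
  have hnorm : Summable (fun e : ℕ => ‖fE χ z (p ^ (e + k))‖) :=
    Summable.of_nonneg_of_le (fun _ => norm_nonneg _)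
      (fun e => norm_fE_pow_le hχval hp _) hgeo
  calc ‖∑' e : ℕ, fE χ z (p ^ (e + k))‖ ≤ ∑' e : ℕ, ‖fE χ z (p ^ (e + k))‖ :=
        norm_tsum_le_tsum_norm hnorm
    _ ≤ ∑' e : ℕ, r ^ (e + k) :=
        Summable.tsum_le_tsum (fun e => norm_fE_pow_le hχval hp _) hnorm hgeo
    _ = r ^ k * (1 - r)⁻¹ := by
        simp_rw [pow_add]
        rw [tsum_mul_right, tsum_geometric_of_lt_one hr0 hr1, mul_comm]


set_option maxHeartbeats 1000000

lemma Fp_eq (hχ1 : χ 1 = 1) (hχval : ∀ n, χ n = 0 ∨ χ n = 1) (hp : 2 ≤ p)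
    (hσ : (3:ℝ)/4 ≤ z.re) :
    Fp χ p z = 1 + ∑' e : ℕ, fE χ z (p ^ (e + 1)) := by
  have h0 : fE χ z (p ^ 0) = 1 := by
    simp [fE, pow_zero, hχ1, Complex.one_cpow]
  have h := Summable.tsum_eq_zero_add (summable_pow hχval hp hσ (χ := χ) (z := z) (p := p))
  rw [h0] at h
  exact h

lemma tail1_eq (hχval : ∀ n, χ n = 0 ∨ χ n = 1) (hp : 2 ≤ p) (hσ : (3:ℝ)/4 ≤ z.re) :
    ∑' e : ℕ, fE χ z (p ^ (e + 1)) = fE χ z p + ∑' e : ℕ, fE χ z (p ^ (e + 2)) := by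
  have hs : Summable (fun e : ℕ => fE χ z (p ^ (e + 1))) :=
    (summable_nat_add_iff 1).mpr (summable_pow hχval hp hσ)
  rw [Summable.tsum_eq_zero_add hs]
  simp [pow_one]

lemma Fp_re_ge (hχ1 : χ 1 = 1) (hχval : ∀ n, χ n = 0 ∨ χ n = 1) (hp : 3 ≤ p)
    (hσ : (3:ℝ)/4 ≤ z.re) : (2:ℝ)/11 ≤ (Fp χ p z).re := by
  have hT : ‖∑' e : ℕ, fE χ z (p ^ (e + 1))‖ ≤ 9/11 := by
    have h1 := norm_tail_le hχval (show 2 ≤ p by omega) hσ (χ := χ) (z := z) 1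
    set r := (p : ℝ) ^ (-z.re) with hrdef
    have hr0 : 0 ≤ r := r_nonneg _
    have hr9 : r ≤ 9/20 := r_le hp hσ
    have hinv : (1 - r)⁻¹ ≤ 20/11 := by
      rw [inv_le_comm₀ (by linarith) (by norm_num), show ((20:ℝ)/11)⁻¹ = 11/20 by norm_num]
      linarith
    calc ‖∑' e : ℕ, fE χ z (p ^ (e + 1))‖ ≤ r ^ 1 * (1 - r)⁻¹ := h1
      _ ≤ (9/20) * (20/11) := by
          rw [pow_one]
          exact mul_le_mul hr9 hinv (inv_nonneg.mpr (by linarith)) (by norm_num)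
      _ = 9/11 := by norm_num
  rw [Fp_eq hχ1 hχval (show 2 ≤ p by omega) hσ]
  set T := ∑' e : ℕ, fE χ z (p ^ (e + 1))
  have habs : |T.re| ≤ 9/11 := (Complex.abs_re_le_norm T).trans hT
  have h2 := abs_le.mp habs
  simp only [Complex.add_re, Complex.one_re]
  linarith [h2.1]

lemma Fp_mem_slitPlane (hχ1 : χ 1 = 1) (hχval : ∀ n, χ n = 0 ∨ χ n = 1) (hp : 3 ≤ p)
    (hσ : (3:ℝ)/4 ≤ z.re) : Fp χ p z ∈ Complex.slitPlane :=
  Complex.mem_slitPlane_iff.mpr (Or.inl (lt_of_lt_of_le (by norm_num) (Fp_re_ge hχ1 hχval hp hσ)))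

lemma Fp_ne_zero (hχ1 : χ 1 = 1) (hχval : ∀ n, χ n = 0 ∨ χ n = 1) (hp : 3 ≤ p)
    (hσ : (3:ℝ)/4 ≤ z.re) : Fp χ p z ≠ 0 := by
  intro h
  have h2 := Fp_re_ge hχ1 hχval hp hσ (z := z)
  rw [h] at h2
  norm_num at h2

lemma prime_ne_two_ge (P : Nat.Primes) (hne : P ≠ two) : 3 ≤ (P : ℕ) := by
  have h2 := P.prop.two_le
  rcases Nat.lt_or_ge (P : ℕ) 3 with h | h
  · exfalso
    have h3 : (P : ℕ) = 2 := by omega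
    exact hne (Subtype.ext h3)
  · exact h

lemma ell_bound (hχ1 : χ 1 = 1) (hχval : ∀ n, χ n = 0 ∨ χ n = 1) (P : Nat.Primes)
    (hσ : (3:ℝ)/4 ≤ z.re) :
    ‖ell χ P z‖ ≤ 12 * ((P : ℕ) : ℝ) ^ (-(3/2 : ℝ)) := by
  rcases eq_or_ne P two with h | hne
  · have h0 : ell χ P z = 0 := by simp [ell, h]
    rw [h0, norm_zero]
    positivity
  have hp3 : 3 ≤ (P : ℕ) := prime_ne_two_ge P hne
  have hp2 : 2 ≤ (P : ℕ) := by omega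
  set p := (P : ℕ) with hpdef
  set r := (p : ℝ) ^ (-z.re) with hrdef
  have hr0 : 0 ≤ r := r_nonneg _
  have hr9 : r ≤ 9/20 := r_le hp3 hσ
  have hinv : (1 - r)⁻¹ ≤ 20/11 := by
    rw [inv_le_comm₀ (by linarith) (by norm_num), show ((20:ℝ)/11)⁻¹ = 11/20 by norm_num]
    linarith
  have hinv0 : 0 ≤ (1 - r)⁻¹ := inv_nonneg.mpr (by linarith)
  set T := ∑' e : ℕ, fE χ z (p ^ (e + 1)) with hTdef
  set T2 := ∑' e : ℕ, fE χ z (p ^ (e + 2)) with hT2def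
  have hT1 : ‖T‖ ≤ r * (1 - r)⁻¹ := by
    have := norm_tail_le hχval hp2 hσ (χ := χ) (z := z) 1
    rwa [pow_one] at this
  have hT2n : ‖T2‖ ≤ r ^ 2 * (1 - r)⁻¹ := norm_tail_le hχval hp2 hσ (χ := χ) (z := z) 2
  have hTle : ‖T‖ ≤ (20/11) * r := by
    calc ‖T‖ ≤ r * (1 - r)⁻¹ := hT1
      _ ≤ r * (20/11) := mul_le_mul_of_nonneg_left hinv hr0
      _ = (20/11) * r := mul_comm _ _
  have hT911 : ‖T‖ ≤ 9/11 := by nlinarith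
  have hTlt1 : ‖T‖ < 1 := lt_of_le_of_lt hT911 (by norm_num)
  have hlog : ‖Complex.log (1 + T) - T‖ ≤ ‖T‖ ^ 2 * (1 - ‖T‖)⁻¹ / 2 :=
    Complex.norm_log_one_add_sub_self_le hTlt1
  have hinvT : (1 - ‖T‖)⁻¹ ≤ 11/2 := by
    rw [inv_le_comm₀ (by linarith) (by norm_num), show ((11:ℝ)/2)⁻¹ = 2/11 by norm_num]
    linarith
  have hinvT0 : 0 ≤ (1 - ‖T‖)⁻¹ := inv_nonneg.mpr (by linarith)
  have hT12 : T = fE χ z p + T2 := by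
    rw [hTdef, hT2def]; exact tail1_eq hχval hp2 hσ
  have hellT : ell χ P z = (Complex.log (1 + T) - T) + T2 := by
    rw [ell, if_neg hne, Fp_eq hχ1 hχval hp2 hσ, ← hTdef]
    linear_combination hT12
  have hell : ‖ell χ P z‖ ≤ ‖Complex.log (1 + T) - T‖ + ‖T2‖ := by
    rw [hellT]; exact norm_add_le _ _
  have hrsq : r ^ (2:ℕ) ≤ (p : ℝ) ^ (-(3/2 : ℝ)) := r_sq_le hp2 hσ
  have hsq : ‖T‖ ^ 2 ≤ ((20/11) * r) ^ 2 := pow_le_pow_left₀ (norm_nonneg _) hTle 2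
  have h5 : ‖T‖ ^ 2 * (1 - ‖T‖)⁻¹ / 2 ≤ ((20/11) * r) ^ 2 * (11/2) / 2 := by
    have hm := mul_le_mul hsq hinvT hinvT0 (by positivity)
    linarith
  have h6 : r ^ 2 * (1 - r)⁻¹ ≤ r ^ 2 * (20/11) := mul_le_mul_of_nonneg_left hinv (by positivity)
  have hrp0 : (0:ℝ) ≤ (p : ℝ) ^ (-(3/2 : ℝ)) := Real.rpow_nonneg (by positivity) _
  nlinarith [sq_nonneg r]


lemma hOmega_open : IsOpen {z : ℂ | (3:ℝ)/4 < z.re} :=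
  isOpen_lt continuous_const Complex.continuous_re

lemma diff_fE_term (n : ℕ) (hn : 0 < n) : Differentiable ℂ (fun z : ℂ => fE χ z n) := by
  have h1 : Differentiable ℂ (fun z : ℂ => ((n : ℕ) : ℂ) ^ (-z)) :=
    Differentiable.const_cpow (differentiable_neg) (Or.inl (by exact_mod_cast Nat.pos_iff_ne_zero.mp hn))
  exact h1.const_mul _

lemma diff_Fp (hχval : ∀ n, χ n = 0 ∨ χ n = 1) (hp : 2 ≤ p) :
    DifferentiableOn ℂ (Fp χ p) {z : ℂ | (3:ℝ)/4 < z.re} := by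
  have hgeo : Summable (fun e : ℕ => ((p:ℝ) ^ (-((3:ℝ)/4))) ^ e) :=
    summable_geometric_of_lt_one (Real.rpow_nonneg (by positivity) _)
      (Real.rpow_lt_one_of_one_lt_of_neg (by exact_mod_cast hp.trans_lt' one_lt_two) (by norm_num))
  have := Complex.differentiableOn_tsum_of_summable_norm (F := fun (e : ℕ) (w : ℂ) => fE χ w (p ^ e))
    hgeo
    (fun e => (diff_fE_term (p ^ e) (pow_pos (by omega) e)).differentiableOn)
    hOmega_open
    (fun e w hw => by
      refine (norm_fE_pow_le hχval hp e).trans ?_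
      refine pow_le_pow_left₀ (r_nonneg _) ?_ e
      exact Real.rpow_le_rpow_of_exponent_le (by exact_mod_cast hp.trans' (by norm_num))
        (by simp only [Set.mem_setOf_eq] at hw; linarith))
  exact this

lemma summable_u : Summable (fun P : Nat.Primes => 12 * ((P : ℕ) : ℝ) ^ (-(3/2 : ℝ))) := by
  have h0 : Summable (fun n : ℕ => ((n:ℝ) ^ ((3:ℝ)/2))⁻¹) :=
    Real.summable_nat_rpow_inv.mpr (by norm_num)
  have h1 : Summable (fun n : ℕ => (n:ℝ) ^ (-(3/2 : ℝ))) := by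
    simp_rw [Real.rpow_neg (Nat.cast_nonneg _)]
    exact h0
  exact ((h1.mul_left 12).comp_injective Subtype.val_injective)

lemma summable_ell (hχ1 : χ 1 = 1) (hχval : ∀ n, χ n = 0 ∨ χ n = 1) (hσ : (3:ℝ)/4 ≤ z.re) :
    Summable (fun P : Nat.Primes => ell χ P z) :=
  Summable.of_norm_bounded summable_u (fun P => ell_bound hχ1 hχval P hσ)

lemma diff_ell (hχ1 : χ 1 = 1) (hχval : ∀ n, χ n = 0 ∨ χ n = 1) (P : Nat.Primes) :
    DifferentiableOn ℂ (fun z => ell χ P z) {z : ℂ | (3:ℝ)/4 < z.re} := by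
  rcases eq_or_ne P two with h | hne
  · have h0 : (fun z : ℂ => ell χ P z) = fun _ => 0 := funext fun z => by simp [ell, h]
    rw [h0]; exact differentiableOn_const 0
  · have h0 : (fun z : ℂ => ell χ P z) =
        fun z => Complex.log (Fp χ (P : ℕ) z) - fE χ z (P : ℕ) :=
      funext fun z => by rw [ell, if_neg hne]
    rw [h0]
    have hp3 : 3 ≤ (P : ℕ) := prime_ne_two_ge P hne
    refine DifferentiableOn.sub ?_ ((diff_fE_term (P : ℕ) (by omega)).differentiableOn)
    refine DifferentiableOn.clog (diff_Fp hχval (by omega)) ?_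
    intro x hx
    exact Fp_mem_slitPlane hχ1 hχval hp3 (le_of_lt hx)

lemma diff_EE (hχ1 : χ 1 = 1) (hχval : ∀ n, χ n = 0 ∨ χ n = 1) :
    DifferentiableOn ℂ (EE χ) {z : ℂ | (3:ℝ)/4 < z.re} := by
  have := Complex.differentiableOn_tsum_of_summable_norm
    (F := fun (P : Nat.Primes) (w : ℂ) => ell χ P w) summable_u
    (fun P => diff_ell hχ1 hχval P) hOmega_open
    (fun P w hw => ell_bound hχ1 hχval P (le_of_lt hw))
  exact this


lemma fE_zero (hz : z ≠ 0) : fE χ z 0 = 0 := by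
  simp only [fE, Nat.cast_zero]
  rw [Complex.zero_cpow (neg_ne_zero.mpr hz)]
  ring

lemma fE_one (hχ1 : χ 1 = 1) : fE χ z 1 = 1 := by
  simp [fE, hχ1]

lemma fE_mul (hχmul : ∀ m n : ℕ, Nat.Coprime m n → χ (m * n) = χ m * χ n)
    {m n : ℕ} (hmn : Nat.Coprime m n) : fE χ z (m * n) = fE χ z m * fE χ z n := by
  simp only [fE, hχmul m n hmn, Nat.cast_mul]
  have h1 : ((m : ℕ) : ℂ) = (((m : ℝ)) : ℂ) := by push_cast; ring
  have h2 : ((n : ℕ) : ℂ) = (((n : ℝ)) : ℂ) := by push_cast; ring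
  rw [h1, h2, Complex.mul_cpow_ofReal_nonneg (Nat.cast_nonneg m) (Nat.cast_nonneg n)]
  push_cast
  ring

lemma summable_norm_fE (hχval : ∀ n, χ n = 0 ∨ χ n = 1) (hz : 1 < z.re) :
    Summable (fun n : ℕ => ‖fE χ z n‖) := by
  have hmaj : Summable (fun n : ℕ => (n:ℝ) ^ (-z.re)) := by
    have h0 : Summable (fun n : ℕ => ((n:ℝ) ^ z.re)⁻¹) := Real.summable_nat_rpow_inv.mpr hz
    simp_rw [Real.rpow_neg (Nat.cast_nonneg _)]
    exact h0
  refine Summable.of_nonneg_of_le (fun _ => norm_nonneg _) (fun n => ?_) hmaj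
  rcases Nat.eq_zero_or_pos n with h | h
  · subst h
    rw [fE_zero (by intro h0; rw [h0] at hz; simp at hz; linarith), norm_zero]
    positivity
  · exact norm_fE_le hχval n h

lemma summable_fE (hχval : ∀ n, χ n = 0 ∨ χ n = 1) (hz : 1 < z.re) :
    Summable (fun n : ℕ => fE χ z n) :=
  (summable_norm_fE hχval hz).of_norm

lemma summable_fE_primes (hχval : ∀ n, χ n = 0 ∨ χ n = 1) (hz : 1 < z.re) :
    Summable (fun P : Nat.Primes => fE χ z (P : ℕ)) :=
  (summable_fE hχval hz).comp_injective Subtype.val_injective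

lemma euler_hasProd (hχ1 : χ 1 = 1)
    (hχmul : ∀ m n : ℕ, Nat.Coprime m n → χ (m * n) = χ m * χ n)
    (hχval : ∀ n, χ n = 0 ∨ χ n = 1) (hz : 1 < z.re) :
    HasProd (fun P : Nat.Primes => Fp χ (P : ℕ) z) (∑' n : ℕ, fE χ z n) :=
  EulerProduct.eulerProduct_hasProd (fE_one hχ1) (fun {m n} h => fE_mul hχmul h)
    (summable_norm_fE hχval hz)
    (fE_zero (by intro h0; rw [h0] at hz; simp at hz; linarith))

lemma summable_ite_fE (hχval : ∀ n, χ n = 0 ∨ χ n = 1) (hz : 1 < z.re) :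
    Summable (fun P : Nat.Primes => if P = two then 0 else fE χ z (P : ℕ)) := by
  refine ((summable_fE_primes hχval hz).update two 0).congr fun P => ?_
  by_cases h : P = two <;> simp [h, Function.update_apply]

lemma PS_eq (S : Set ℕ) (hS : ∀ q ∈ S, Nat.Prime q)
    (hχval : ∀ n, χ n = 0 ∨ χ n = 1)
    (hchar : ∀ q : ℕ, Nat.Prime q → (χ q = 1 ↔ q ∈ S)) (z : ℂ) :
    ∑' P : Nat.Primes, fE χ z (P : ℕ) = ∑' q : S, ((q : ℕ) : ℂ) ^ (-z) := by
  have h1 : ∑' P : Nat.Primes, fE χ z (P : ℕ) =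
      ∑' x : ℕ, ({p : ℕ | Nat.Prime p}).indicator (fun n => fE χ z n) x :=
    tsum_subtype {p : ℕ | Nat.Prime p} (fun n => fE χ z n)
  have h2 : ∑' q : S, ((q : ℕ) : ℂ) ^ (-z) =
      ∑' x : ℕ, S.indicator (fun n => ((n : ℕ) : ℂ) ^ (-z)) x :=
    tsum_subtype S (fun n => ((n : ℕ) : ℂ) ^ (-z))
  rw [h1, h2]
  refine tsum_congr fun n => ?_
  by_cases hn : Nat.Prime n
  · rw [Set.indicator_of_mem (by exact hn)]
    by_cases hnS : n ∈ S
    · rw [Set.indicator_of_mem hnS, fE, (hchar n hn).mpr hnS]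
      simp
    · rw [Set.indicator_of_notMem hnS, fE]
      have : χ n = 0 := by
        rcases hχval n with h | h
        · exact h
        · exact absurd ((hchar n hn).mp h) hnS
      rw [this]
      simp
  · rw [Set.indicator_of_notMem (by exact hn), Set.indicator_of_notMem (fun hnS => hn (hS n hnS))]

lemma D_eq (S : Set ℕ) (hS : ∀ q ∈ S, Nat.Prime q) (hχ1 : χ 1 = 1)
    (hχmul : ∀ m n : ℕ, Nat.Coprime m n → χ (m * n) = χ m * χ n)
    (hχval : ∀ n, χ n = 0 ∨ χ n = 1)
    (hchar : ∀ q : ℕ, Nat.Prime q → (χ q = 1 ↔ q ∈ S)) (hz : 1 < z.re) :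
    ∑' n : ℕ, fE χ z n =
      Fp χ 2 z * Complex.exp (EE χ z + (∑' q : S, ((q : ℕ) : ℂ) ^ (-z)) - fE χ z 2) := by
  have hσ : (3:ℝ)/4 ≤ z.re := by linarith
  have hprd := euler_hasProd hχ1 hχmul hχval hz
  -- log of factors
  have hlog_eq : ∀ w : {w : ℂ // 1 < w.re}, ∀ P : Nat.Primes,
      Complex.log (if P = two then 1 else Fp χ (P : ℕ) w.1) =
        ell χ P w.1 + (if P = two then 0 else fE χ w.1 (P : ℕ)) := by
    intro w P
    rcases eq_or_ne P two with h | hne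
    · simp [h, ell, Complex.log_one]
    · rw [if_neg hne, if_neg hne, ell, if_neg hne]
      ring
  have hsumlog : ∀ w : {w : ℂ // 1 < w.re},
      Summable (fun P : Nat.Primes => Complex.log (if P = two then 1 else Fp χ (P : ℕ) w.1)) := by
    intro w
    have heq : (fun P : Nat.Primes => Complex.log (if P = two then 1 else Fp χ (P : ℕ) w.1)) =
        fun P => ell χ P w.1 + (if P = two then 0 else fE χ w.1 (P : ℕ)) :=
      funext fun P => hlog_eq w P
    rw [heq]
    exact (summable_ell hχ1 hχval (by linarith [w.2])).add (summable_ite_fE hχval w.2)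
  have hfn : ∀ (w : {w : ℂ // 1 < w.re}) (P : Nat.Primes),
      (if P = two then 1 else Fp χ (P : ℕ) w.1) ≠ 0 := by
    intro w P
    rcases eq_or_ne P two with h | hne
    · rw [if_pos h]; exact one_ne_zero
    · rw [if_neg hne]
      exact Fp_ne_zero hχ1 hχval (prime_ne_two_ge P hne) (by linarith [w.2])
  have hmul_ite : Multipliable (fun P : Nat.Primes => if P = two then 1 else Fp χ (P : ℕ) z) :=
    Complex.multipliable_of_summable_log (hsumlog ⟨z, hz⟩)
  have hmul_upd : Multipliable
      (Function.update (fun P : Nat.Primes => Fp χ (P : ℕ) z) two 1) := by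
    refine hmul_ite.congr fun P => ?_
    by_cases h : P = two <;> simp [h, Function.update_apply]
  have h2v : ((two : Nat.Primes) : ℕ) = 2 := rfl
  have ht := Multipliable.tprod_eq_mul_tprod_ite' two hmul_upd
  rw [h2v] at ht
  have hsplit : ∑' n : ℕ, fE χ z n =
      Fp χ 2 z * ∏' P : Nat.Primes, (if P = two then 1 else Fp χ (P : ℕ) z) :=
    hprd.tprod_eq.symm.trans ht
  have hexp := Complex.cexp_tsum_eq_tprod
    (f := fun (P : Nat.Primes) => if P = two then 1 else Fp χ (P : ℕ) z)
    (hfn ⟨z, hz⟩) (hsumlog ⟨z, hz⟩)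
  have hexp' := hexp
  have hexp2 : Complex.exp (∑' P : Nat.Primes,
        Complex.log (if P = two then 1 else Fp χ (P : ℕ) z)) =
      ∏' P : Nat.Primes, (if P = two then 1 else Fp χ (P : ℕ) z) := hexp'
  -- compute the inner sum
  have hsum_decomp : ∑' P : Nat.Primes, Complex.log (if P = two then 1 else Fp χ (P : ℕ) z) =
      EE χ z + ((∑' q : S, ((q : ℕ) : ℂ) ^ (-z)) - fE χ z 2) := by
    have heq : (fun P : Nat.Primes => Complex.log (if P = two then 1 else Fp χ (P : ℕ) z)) =
        fun P => ell χ P z + (if P = two then 0 else fE χ z (P : ℕ)) :=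
      funext fun P => hlog_eq ⟨z, hz⟩ P
    rw [heq, Summable.tsum_add (summable_ell hχ1 hχval hσ) (summable_ite_fE hχval hz)]
    have h3 : ∑' P : Nat.Primes, fE χ z (P : ℕ) =
        fE χ z ((two : Nat.Primes) : ℕ) +
          ∑' P : Nat.Primes, (if P = two then 0 else fE χ z (P : ℕ)) :=
      Summable.tsum_eq_add_tsum_ite (summable_fE_primes hχval hz) two
    have h4 : ∑' P : Nat.Primes, (if P = two then 0 else fE χ z (P : ℕ)) =
        (∑' q : S, ((q : ℕ) : ℂ) ^ (-z)) - fE χ z 2 := by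
      rw [← PS_eq S hS hχval hchar z]
      have h5 : fE χ z ((two : Nat.Primes) : ℕ) = fE χ z 2 := rfl
      rw [← h5]
      linear_combination -h3
    rw [h4, EE]
  rw [hsplit, ← hexp2, hsum_decomp, add_sub_assoc]


lemma fE_ofReal (hχval : ∀ n, χ n = 0 ∨ χ n = 1) (x : ℝ) (n : ℕ) (hn : 0 < n) :
    fE χ (x : ℂ) n = ((χ n * (n : ℝ) ^ (-x) : ℝ) : ℂ) := by
  rw [fE, Complex.ofReal_mul, show -(x:ℂ) = ((-x : ℝ) : ℂ) from by push_cast; rfl,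
    show ((n : ℕ) : ℂ) = (((n : ℕ) : ℝ) : ℂ) from by push_cast; rfl,
    ← Complex.ofReal_cpow (Nat.cast_nonneg n) (-x)]

lemma Fp_ofReal (hχ1 : χ 1 = 1) (hχval : ∀ n, χ n = 0 ∨ χ n = 1) (hp : 2 ≤ p)
    {x : ℝ} (hx : (3:ℝ)/4 ≤ x) :
    ∃ r : ℝ, 1 ≤ r ∧ Fp χ p ((x : ℝ) : ℂ) = (r : ℂ) := by
  set t : ℕ → ℝ := fun e => χ (p ^ e) * ((p ^ e : ℕ) : ℝ) ^ (-x) with htdef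
  have hxre : ((x : ℂ)).re = x := Complex.ofReal_re x
  have hfe : ∀ e : ℕ, fE χ (x : ℂ) (p ^ e) = ((t e : ℝ) : ℂ) := fun e =>
    fE_ofReal hχval x (p ^ e) (pow_pos (by omega) e)
  have ht_nonneg : ∀ e, 0 ≤ t e := by
    intro e
    rcases hχval (p ^ e) with h | h <;> simp [htdef, h] <;> positivity
  have ht : Summable t := by
    have hsn : Summable (fun e : ℕ => ‖fE χ ((x : ℝ) : ℂ) (p ^ e)‖) := by
      refine Summable.of_nonneg_of_le (fun _ => norm_nonneg _) (fun e => ?_)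
        (summable_geometric_of_lt_one (r_nonneg _)
          (r_lt_one hp (by rw [hxre]; exact hx)))
      have := norm_fE_pow_le hχval hp (z := (x : ℂ)) e
      rwa [hxre] at this
    refine (summable_abs_iff.mp (hsn.congr fun e => ?_))
    rw [hfe e, Complex.norm_real, Real.norm_eq_abs]
  refine ⟨∑' e, t e, ?_, ?_⟩
  · have h0 : t 0 = 1 := by
      simp [htdef, hχ1]
    calc (1:ℝ) = t 0 := h0.symm
      _ ≤ ∑' e, t e := Summable.le_tsum ht 0 (fun e _ => ht_nonneg e)
  · rw [Fp, Complex.ofReal_tsum]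
    exact tsum_congr hfe

lemma ell_one_im (hχ1 : χ 1 = 1) (hχval : ∀ n, χ n = 0 ∨ χ n = 1) (P : Nat.Primes) :
    (ell χ P 1).im = 0 := by
  rcases eq_or_ne P two with h | hne
  · simp [ell, h]
  · rw [ell, if_neg hne]
    have hp3 : 3 ≤ (P : ℕ) := prime_ne_two_ge P hne
    have h1c : (1 : ℂ) = ((1 : ℝ) : ℂ) := by norm_num
    obtain ⟨r, hr1, hr⟩ := Fp_ofReal hχ1 hχval (p := (P : ℕ)) (by omega)
      (show (3:ℝ)/4 ≤ 1 by norm_num)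
    rw [h1c, hr, ← Complex.ofReal_log (by linarith),
      fE_ofReal hχval 1 (P : ℕ) (by omega)]
    simp

lemma EE_one_im (hχ1 : χ 1 = 1) (hχval : ∀ n, χ n = 0 ∨ χ n = 1) : (EE χ 1).im = 0 := by
  have hsum : Summable (fun P : Nat.Primes => ell χ P 1) :=
    summable_ell hχ1 hχval (by rw [Complex.one_re]; norm_num)
  have h2 := Complex.imCLM.map_tsum hsum
  have h1 : (EE χ 1).im = ∑' P : Nat.Primes, (ell χ P 1).im := by
    rw [EE]
    calc (∑' P : Nat.Primes, ell χ P 1).im = Complex.imCLM (∑' P : Nat.Primes, ell χ P 1) := rfl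
      _ = ∑' P : Nat.Primes, Complex.imCLM (ell χ P 1) := h2
      _ = ∑' P : Nat.Primes, (ell χ P 1).im := tsum_congr fun P => rfl
  rw [h1]
  have : ∀ P : Nat.Primes, (ell χ P 1).im = 0 := ell_one_im hχ1 hχval
  simp [this]

lemma summable_cpow_nat (hz : 1 < z.re) : Summable (fun n : ℕ => ((n : ℕ) : ℂ) ^ (-z)) := by
  have hmaj : Summable (fun n : ℕ => (n:ℝ) ^ (-z.re)) := by
    have h0 : Summable (fun n : ℕ => ((n:ℝ) ^ z.re)⁻¹) := Real.summable_nat_rpow_inv.mpr hz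
    simp_rw [Real.rpow_neg (Nat.cast_nonneg _)]
    exact h0
  refine Summable.of_norm ?_
  refine Summable.of_nonneg_of_le (fun _ => norm_nonneg _) (fun n => ?_) hmaj
  rcases Nat.eq_zero_or_pos n with h | h
  · subst h
    have hz0 : z ≠ 0 := by intro h0; rw [h0] at hz; simp at hz; linarith
    simp [Complex.zero_cpow (neg_ne_zero.mpr hz0)]
    positivity
  · exact le_of_eq (norm_natCast_cpow n h z)

end DSP9

open DSP9

/-- Let `S ⊆ ℙ` have Dirichlet density 1 and let `χ` be multiplicative with
values in `{0,1}`, characteristic on `S`. Suppose `g(z) = P_S(z) − log(1/(z−1))` extends to a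
continuous function `G` on `{Re z ≥ 1}`, and the difference quotient `(G(z)−G(1))/(z−1)` also
extends to a continuous function on `{Re z ≥ 1}`. Then there are `a > 0` and `h` continuous on
`{Re z ≥ 1}` such that `D_χ(z) = a/(z−1) + h(z)` for `Re z > 1`. -/
theorem dirichlet_series_simple_pole_of_differentiable_error
    (S : Set ℕ) (hS : ∀ p ∈ S, Nat.Prime p)
    (hdens : Tendsto
      (fun z : ℝ => (∑' p : S, ((p : ℕ) : ℝ) ^ (-z)) / Real.log (1 / (z - 1)))
      (𝓝[>] 1) (𝓝 1))
    (χ : ℕ → ℝ) (hχ1 : χ 1 = 1)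
    (hχmul : ∀ m n : ℕ, Nat.Coprime m n → χ (m * n) = χ m * χ n)
    (hχval : ∀ n : ℕ, χ n = 0 ∨ χ n = 1)
    (hchar : ∀ p : ℕ, Nat.Prime p → (χ p = 1 ↔ p ∈ S))
    (G : ℂ → ℂ) (hGcont : ContinuousOn G {z : ℂ | 1 ≤ z.re})
    (hGeq : ∀ z : ℂ, 1 < z.re →
      G z = (∑' p : S, ((p : ℕ) : ℂ) ^ (-z)) - Complex.log (1 / (z - 1)))
    (Φ : ℂ → ℂ) (hΦcont : ContinuousOn Φ {z : ℂ | 1 ≤ z.re})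
    (hΦeq : ∀ z : ℂ, 1 < z.re → Φ z = (G z - G 1) / (z - 1)) :
    ∃ a : ℝ, 0 < a ∧
      ∃ h : ℂ → ℂ, ContinuousOn h {z : ℂ | 1 ≤ z.re} ∧
        ∀ z : ℂ, 1 < z.re →
          (∑' n : ℕ, (χ n : ℂ) * (n : ℂ) ^ (-z)) = (a : ℂ) / (z - 1) + h z := by
  classical
  have hUΩ : {z : ℂ | 1 ≤ z.re} ⊆ {z : ℂ | (3:ℝ)/4 < z.re} := fun w hw => by
    simp only [Set.mem_setOf_eq] at *; linarith
  have h1U : (1:ℂ) ∈ {z : ℂ | 1 ≤ z.re} := by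
    simp only [Set.mem_setOf_eq, Complex.one_re, le_refl]
  have h1Ω : (1:ℂ) ∈ {z : ℂ | (3:ℝ)/4 < z.re} := by
    simp only [Set.mem_setOf_eq, Complex.one_re]; norm_num
  -- components
  set Cf : ℂ → ℂ := fun w => fE χ w 2 with hCfdef
  set Fp2 : ℂ → ℂ := Fp χ 2 with hF2def
  set W : ℂ → ℂ := fun w => EE χ w + G w - Cf w with hWdef
  set Q : ℂ → ℂ := dslope Complex.exp 0 with hQdef
  set dE : ℂ → ℂ := dslope (EE χ) 1 with hdEdef
  set dC : ℂ → ℂ := dslope Cf 1 with hdCdef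
  set dF2 : ℂ → ℂ := dslope Fp2 1 with hdF2def
  set Ψ : ℂ → ℂ := fun w => Φ w + dE w - dC w with hΨdef
  set hfun : ℂ → ℂ :=
    fun w => Complex.exp (W 1) * (Fp2 w * Q (W w - W 1) * Ψ w + dF2 w) with hhdef
  -- value of Fp2 at 1
  obtain ⟨r0, hr01, hr0⟩ := Fp_ofReal (χ := χ) hχ1 hχval (le_refl 2)
    (show (3:ℝ)/4 ≤ 1 by norm_num)
  rw [Complex.ofReal_one] at hr0
  -- imaginary part of G at 1
  have hPSim : ∀ x : ℝ, 1 < x → (∑' q : S, ((q:ℕ):ℂ) ^ (-((x:ℝ):ℂ))).im = 0 := by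
    intro x hx
    have hre : ((x:ℂ)).re = x := Complex.ofReal_re x
    have hsum : Summable (fun q : S => ((q:ℕ):ℂ) ^ (-(x:ℂ))) :=
      (summable_cpow_nat (by rw [hre]; exact hx)).comp_injective Subtype.val_injective
    have h2 := Complex.imCLM.map_tsum hsum
    have hterm : ∀ q : S, ((((q:ℕ):ℂ)) ^ (-(x:ℂ))).im = 0 := by
      intro q
      rw [show ((q:ℕ):ℂ) = ((((q:ℕ):ℝ)):ℂ) from by push_cast; rfl,
        show -(x:ℂ) = ((-x : ℝ):ℂ) from by push_cast; rfl,
        ← Complex.ofReal_cpow (Nat.cast_nonneg _) (-x)]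
      simp
    calc (∑' q : S, ((q:ℕ):ℂ) ^ (-(x:ℂ))).im
        = Complex.imCLM (∑' q : S, ((q:ℕ):ℂ) ^ (-(x:ℂ))) := rfl
      _ = ∑' q : S, Complex.imCLM (((q:ℕ):ℂ) ^ (-(x:ℂ))) := h2
      _ = ∑' q : S, (0:ℝ) := tsum_congr fun q => hterm q
      _ = 0 := tsum_zero
  have hGx : ∀ x : ℝ, 1 < x → (G x).im = 0 := by
    intro x hx
    have hre : ((x:ℂ)).re = x := Complex.ofReal_re x
    rw [hGeq x (by rw [hre]; exact hx), Complex.sub_im]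
    have hlg : (1 / ((x:ℂ) - 1)) = (((1/(x-1) : ℝ)) : ℂ) := by push_cast; ring
    have hpos : (0:ℝ) ≤ 1/(x-1) := div_nonneg zero_le_one (by linarith)
    rw [hlg, ← Complex.ofReal_log hpos]
    rw [hPSim x hx]
    simp
  have hG1im : (G 1).im = 0 := by
    have hmap : Tendsto (fun x : ℝ => (x:ℂ)) (𝓝[>] (1:ℝ)) (𝓝[{z : ℂ | 1 ≤ z.re}] (1:ℂ)) := by
      refine tendsto_nhdsWithin_of_tendsto_nhds_of_eventually_within _ ?_ ?_
      · have h0 := Complex.continuous_ofReal.tendsto (1:ℝ)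
        rw [Complex.ofReal_one] at h0
        exact h0.mono_left nhdsWithin_le_nhds
      · refine eventually_nhdsWithin_of_forall (fun x hx => ?_)
        simp only [Set.mem_setOf_eq, Complex.ofReal_re]
        exact le_of_lt hx
    have hGt : Tendsto (fun x : ℝ => G x) (𝓝[>] (1:ℝ)) (𝓝 (G 1)) :=
      ((hGcont 1 h1U).tendsto).comp hmap
    have hIm : Tendsto (fun x : ℝ => (G x).im) (𝓝[>] (1:ℝ)) (𝓝 (G 1).im) :=
      (Complex.continuous_im.tendsto _).comp hGt
    have hzero : Tendsto (fun x : ℝ => (G x).im) (𝓝[>] (1:ℝ)) (𝓝 0) := by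
      refine Tendsto.congr' ?_ tendsto_const_nhds
      filter_upwards [self_mem_nhdsWithin] with x hx
      exact (hGx x hx).symm
    exact tendsto_nhds_unique hIm hzero
  have hCf1im : (Cf 1).im = 0 := by
    rw [hCfdef]
    show (fE χ (1:ℂ) 2).im = 0
    rw [show (1:ℂ) = ((1:ℝ):ℂ) from (Complex.ofReal_one).symm,
      fE_ofReal hχval 1 2 (by norm_num)]
    simp
  have hW1im : (W 1).im = 0 := by
    rw [hWdef]
    show (EE χ 1 + G 1 - Cf 1).im = 0
    rw [Complex.sub_im, Complex.add_im, EE_one_im hχ1 hχval, hG1im, hCf1im]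
    ring
  have hW1eq : W 1 = (((W 1).re : ℝ) : ℂ) := by
    apply Complex.ext
    · simp
    · simp [hW1im]
  set a : ℝ := r0 * Real.exp ((W 1).re) with hadef
  have hapos : 0 < a := mul_pos (by linarith) (Real.exp_pos _)
  have haC : ((a : ℝ) : ℂ) = Fp2 1 * Complex.exp (W 1) := by
    rw [hadef, Complex.ofReal_mul, Complex.ofReal_exp, ← hW1eq, ← hr0]
  -- continuity
  have hF2cont : ContinuousOn Fp2 {z : ℂ | 1 ≤ z.re} :=
    ((diff_Fp hχval (le_refl 2)).continuousOn).mono hUΩ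
  have hEEcont : ContinuousOn (EE χ) {z : ℂ | 1 ≤ z.re} :=
    ((diff_EE hχ1 hχval).continuousOn).mono hUΩ
  have hCfcont : Continuous Cf := (diff_fE_term 2 (by norm_num)).continuous
  have hWcont : ContinuousOn W {z : ℂ | 1 ≤ z.re} :=
    (hEEcont.add hGcont).sub hCfcont.continuousOn
  have hEEat1 : DifferentiableAt ℂ (EE χ) 1 :=
    (diff_EE hχ1 hχval).differentiableAt (hOmega_open.mem_nhds h1Ω)
  have hF2at1 : DifferentiableAt ℂ Fp2 1 :=
    (diff_Fp hχval (le_refl 2)).differentiableAt (hOmega_open.mem_nhds h1Ω)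
  have hCfat1 : DifferentiableAt ℂ Cf 1 := (diff_fE_term 2 (by norm_num)).differentiableAt
  have hdslope_cont : ∀ f : ℂ → ℂ, ContinuousOn f {z : ℂ | 1 ≤ z.re} →
      DifferentiableAt ℂ f 1 → ContinuousOn (dslope f 1) {z : ℂ | 1 ≤ z.re} := by
    intro f hc hd w hw
    rcases eq_or_ne w 1 with h | h
    · subst h
      exact (continuousAt_dslope_same.mpr hd).continuousWithinAt
    · exact (continuousWithinAt_dslope_of_ne h).mpr (hc w hw)
  have hdEcont : ContinuousOn dE {z : ℂ | 1 ≤ z.re} := hdslope_cont _ hEEcont hEEat1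
  have hdCcont : ContinuousOn dC {z : ℂ | 1 ≤ z.re} := hdslope_cont _ hCfcont.continuousOn hCfat1
  have hdF2cont : ContinuousOn dF2 {z : ℂ | 1 ≤ z.re} := hdslope_cont _ hF2cont hF2at1
  have hQcont : Continuous Q := by
    rw [hQdef, continuous_iff_continuousAt]
    intro w
    rcases eq_or_ne w 0 with h | h
    · subst h
      exact continuousAt_dslope_same.mpr Complex.differentiable_exp.differentiableAt
    · exact (continuousAt_dslope_of_ne h).mpr Complex.continuous_exp.continuousAt
  have hΨcont : ContinuousOn Ψ {z : ℂ | 1 ≤ z.re} := (hΦcont.add hdEcont).sub hdCcont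
  have hhcont : ContinuousOn hfun {z : ℂ | 1 ≤ z.re} := by
    refine continuousOn_const.mul (ContinuousOn.add ?_ hdF2cont)
    refine (hF2cont.mul ?_).mul hΨcont
    exact hQcont.comp_continuousOn (hWcont.sub continuousOn_const)
  refine ⟨a, hapos, hfun, hhcont, ?_⟩
  intro z hz
  have hzne1 : z ≠ 1 := by
    intro h
    rw [h, Complex.one_re] at hz
    linarith
  have hz1ne : z - 1 ≠ 0 := sub_ne_zero.mpr hzne1
  have hD := D_eq S hS hχ1 hχmul hχval hchar hz
  have hPS : (∑' q : S, ((q:ℕ):ℂ) ^ (-z)) = G z + Complex.log (1/(z-1)) := by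
    rw [hGeq z hz]; ring
  have hlogexp : Complex.exp (Complex.log (1/(z-1))) = 1/(z-1) :=
    Complex.exp_log (one_div_ne_zero hz1ne)
  have hDz : (∑' n : ℕ, (χ n : ℂ) * (n:ℂ)^(-z)) = Fp2 z * Complex.exp (W z) * (1/(z-1)) := by
    have h0 : (∑' n : ℕ, (χ n : ℂ) * (n:ℂ)^(-z)) = ∑' n : ℕ, fE χ z n := rfl
    rw [h0, hD, hPS]
    have h1 : EE χ z + (G z + Complex.log (1/(z-1))) - fE χ z 2
        = W z + Complex.log (1/(z-1)) := by
      rw [hWdef]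
      show _ = EE χ z + G z - Cf z + Complex.log (1/(z-1))
      rw [hCfdef]
      ring
    rw [h1, Complex.exp_add, hlogexp]
    ring
  have hΨz : (z - 1) * Ψ z = W z - W 1 := by
    have h1 : (z - 1) * Φ z = G z - G 1 := by
      rw [hΦeq z hz]
      field_simp
    have h2 : (z - 1) * dE z = EE χ z - EE χ 1 := by
      have h := sub_smul_dslope (EE χ) 1 z
      rw [smul_eq_mul] at h
      rw [hdEdef]
      exact h
    have h3 : (z - 1) * dC z = Cf z - Cf 1 := by
      have h := sub_smul_dslope Cf 1 z
      rw [smul_eq_mul] at h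
      rw [hdCdef]
      exact h
    have h4 : Ψ z = Φ z + dE z - dC z := by rw [hΨdef]
    have h5 : W z = EE χ z + G z - Cf z := by rw [hWdef]
    have h6 : W 1 = EE χ 1 + G 1 - Cf 1 := by rw [hWdef]
    rw [h4, h5, h6]
    linear_combination h1 + h2 - h3
  have hQΔ : Q (W z - W 1) * (W z - W 1) = Complex.exp (W z - W 1) - 1 := by
    rcases eq_or_ne (W z - W 1) 0 with h | h
    · rw [h]
      simp
    · rw [hQdef, dslope_of_ne _ h, slope_def_field]
      rw [Complex.exp_zero, sub_zero]
      field_simp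
  have hF2d : (z - 1) * dF2 z = Fp2 z - Fp2 1 := by
    have h := sub_smul_dslope Fp2 1 z
    rw [smul_eq_mul] at h
    rw [hdF2def]
    exact h
  have hexpW : Complex.exp (W z) = Complex.exp (W 1) * Complex.exp (W z - W 1) := by
    rw [← Complex.exp_add]
    congr 1
    ring
  have he1 : (z - 1) * hfun z = Complex.exp (W 1) *
      (Fp2 z * (Q (W z - W 1) * ((z - 1) * Ψ z)) + ((z - 1) * dF2 z)) := by
    rw [hhdef]
    ring
  have he2 : (z - 1) * hfun z = Complex.exp (W 1) *
      (Fp2 z * (Complex.exp (W z - W 1) - 1) + (Fp2 z - Fp2 1)) := by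
    rw [he1, hΨz, hQΔ, hF2d]
  have hkey : Fp2 z * Complex.exp (W z) = (a:ℂ) + (z - 1) * hfun z := by
    rw [haC, he2, hexpW]
    ring
  rw [hDz, hkey]
  field_simp
end

section
/- Let χ be a Dirichlet character of order dividing 2 (so χ takes values in {−1, 0, 1} ⊂ ℝ on ℕ). Let B : ℙ → ℝ be a map, let y ∈ ℝ with y ≠ 0, and define A : ℙ → ℝ by A(p) := B(p) − χ(p)/(y√p). Let D = {x₁, …, x_n} ⊆ [−1,1] be a finite set. Let f : (−1,1) → ℝ_{≥0} be an integrable function and w₁, …, w_n ≥ 0, and define the Borel measure μ on [−1,1] by μ(E) := ∫_E f(t) dt + Σ_{i=1}^n w_i δ_{x_i}(E), where δ_{x_i} is the Dirac measure at x_i; assume μ([−1,1]) = 1. For an interval I ⊆ [−1,1], set S_I := {p ∈ ℙ : B(p) ∈ I} and T'_I := {p ∈ ℙ : A(p) ∈ I and B(p) ∉ D}. Assume that for every subinterval I ⊆ [−1,1] (open, closed or half-open) the set S_I has natural density μ(I). Then for every subinterval I ⊆ [−1,1] (open, closed or half-open), the set T'_I has natural density ∫_I f(t) dt. -/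
open Filter Topology MeasureTheory

private lemma primesUpTo_finite (X : ℝ) : {p : ℕ | Nat.Prime p ∧ (p:ℝ) ≤ X}.Finite := by
  apply (Set.finite_Iic (⌈X⌉₊)).subset
  rintro p ⟨-, hp⟩
  exact Nat.cast_le.mp (hp.trans (Nat.le_ceil X))

private lemma primesUpTo_tendsto :
    Tendsto (fun X : ℝ => (({p : ℕ | Nat.Prime p ∧ (p:ℝ) ≤ X}.ncard : ℝ))) atTop atTop := by
  rw [tendsto_atTop]
  intro b
  obtain ⟨s, hs, hcard⟩ := Nat.infinite_setOf_prime.exists_subset_card_eq ⌈b⌉₊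
  filter_upwards [eventually_ge_atTop ((s.sup id : ℕ) : ℝ)] with X hX
  have hsub : (↑s : Set ℕ) ⊆ {p : ℕ | Nat.Prime p ∧ (p:ℝ) ≤ X} := by
    intro p hp
    refine ⟨hs hp, ?_⟩
    have : p ≤ s.sup id := Finset.le_sup (f := id) hp
    exact le_trans (by exact_mod_cast this) hX
  have h1 : (⌈b⌉₊ : ℝ) ≤ ({p : ℕ | Nat.Prime p ∧ (p:ℝ) ≤ X}.ncard : ℝ) := by
    have := Set.ncard_le_ncard hsub (primesUpTo_finite X)
    rw [Set.ncard_coe_finset, hcard] at this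
    exact_mod_cast this
  exact (Nat.le_ceil b).trans h1

private lemma chi_abs_le_one {N : ℕ} (χ : DirichletCharacter ℝ N) (hχ2 : χ ^ 2 = 1)
    (m : ZMod N) : |χ m| ≤ 1 := by
  have h : (χ m) ^ 2 = (χ ^ 2) m := by
    rw [pow_two, pow_two, MulChar.mul_apply]
  rw [hχ2] at h
  rw [← sq_le_one_iff_abs_le_one, h]
  by_cases hm : IsUnit m
  · rw [MulChar.one_apply hm]
  · rw [MulChar.map_nonunit 1 hm]; norm_num

private lemma ncard_primes_filter (X : ℝ) (P : ℕ → Prop) [DecidablePred P] :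
    {p : ℕ | Nat.Prime p ∧ (p:ℝ) ≤ X ∧ P p}.ncard
      = (((primesUpTo_finite X).toFinset).filter P).card := by
  rw [← Set.ncard_coe_finset]
  congr 1
  ext p
  simp [Set.Finite.mem_toFinset, and_assoc]

private lemma density_without_atoms
    {n : ℕ} (x : Fin n → ℝ) (hx : ∀ i, x i ∈ Set.Icc (-1:ℝ) 1)
    (w : Fin n → ℝ) (B : ℕ → ℝ) (f : ℝ → ℝ)
    (hSdens : ∀ I : Set ℝ, I ⊆ Set.Icc (-1:ℝ) 1 → I.OrdConnected →
      Tendsto (fun X : ℝ => (({p : ℕ | Nat.Prime p ∧ (p:ℝ) ≤ X ∧ B p ∈ I}.ncard : ℝ)) /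
        (({p : ℕ | Nat.Prime p ∧ (p:ℝ) ≤ X}.ncard : ℝ))) atTop
        (𝓝 ((∫ t in I ∩ Set.Ioo (-1:ℝ) 1, f t) + ∑ i, Set.indicator I (fun _ => w i) (x i))))
    (J : Set ℝ) (hJ : J ⊆ Set.Icc (-1:ℝ) 1) (hJc : J.OrdConnected) :
    Tendsto (fun X : ℝ =>
      (({p : ℕ | Nat.Prime p ∧ (p:ℝ) ≤ X ∧ B p ∈ J ∧ B p ∉ Set.range x}.ncard : ℝ)) /
      (({p : ℕ | Nat.Prime p ∧ (p:ℝ) ≤ X}.ncard : ℝ))) atTop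
      (𝓝 (∫ t in J ∩ Set.Ioo (-1:ℝ) 1, f t)) := by
  classical
  set V : Finset ℝ := (Finset.univ.image x).filter (· ∈ J) with hV
  have hmemV : ∀ v, v ∈ V ↔ (∃ i, x i = v) ∧ v ∈ J := by
    intro v; simp [hV]
  have key : ∀ X : ℝ,
      {p : ℕ | Nat.Prime p ∧ (p:ℝ) ≤ X ∧ B p ∈ J}.ncard
        = {p : ℕ | Nat.Prime p ∧ (p:ℝ) ≤ X ∧ B p ∈ J ∧ B p ∉ Set.range x}.ncard
          + ∑ v ∈ V, {p : ℕ | Nat.Prime p ∧ (p:ℝ) ≤ X ∧ B p = v}.ncard := by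
    intro X
    rw [ncard_primes_filter X (fun p => B p ∈ J),
      ncard_primes_filter X (fun p => B p ∈ J ∧ B p ∉ Set.range x),
      Finset.sum_congr rfl (fun v _ => ncard_primes_filter X (fun p => B p = v))]
    set F := (primesUpTo_finite X).toFinset with hF
    have h1 := Finset.card_filter_add_card_filter_not
      (s := F.filter (fun p => B p ∈ J)) (p := fun p => B p ∉ Set.range x)
    rw [Finset.filter_filter, Finset.filter_filter] at h1
    have h3 : F.filter (fun p => B p ∈ J ∧ ¬ B p ∉ Set.range x)
        = V.biUnion (fun v => F.filter (fun p => B p = v)) := by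
      ext p
      simp only [Finset.mem_filter, Finset.mem_biUnion, not_not]
      constructor
      · rintro ⟨hpF, hpJ, i, hi⟩
        exact ⟨B p, (hmemV _).mpr ⟨⟨i, hi⟩, hpJ⟩, hpF, rfl⟩
      · rintro ⟨v, hv, hpF, hpv⟩
        obtain ⟨⟨i, hi⟩, hvJ⟩ := (hmemV v).mp hv
        exact ⟨hpF, hpv ▸ hvJ, i, hpv ▸ hi⟩
    rw [h3, Finset.card_biUnion] at h1
    · rw [← h1]
    · intro v hv u hu hvu
      rw [Function.onFun, Finset.disjoint_left]
      rintro p hp hq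
      exact hvu ((Finset.mem_filter.mp hp).2.symm.trans (Finset.mem_filter.mp hq).2)
  have hvlim : ∀ v ∈ V, Tendsto (fun X : ℝ =>
      (({p : ℕ | Nat.Prime p ∧ (p:ℝ) ≤ X ∧ B p = v}.ncard : ℝ)) /
      (({p : ℕ | Nat.Prime p ∧ (p:ℝ) ≤ X}.ncard : ℝ))) atTop
      (𝓝 (∑ i, Set.indicator {v} (fun _ => w i) (x i))) := by
    intro v hv
    obtain ⟨⟨i, hi⟩, hvJ⟩ := (hmemV v).mp hv
    have h := hSdens {v} (by rintro t rfl; exact hi ▸ hx i) Set.ordConnected_singleton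
    have hz : (∫ t in ({v} : Set ℝ) ∩ Set.Ioo (-1:ℝ) 1, f t) = 0 := by
      have h0 : (MeasureTheory.volume : Measure ℝ) (({v} : Set ℝ) ∩ Set.Ioo (-1:ℝ) 1) = 0 :=
        measure_mono_null Set.inter_subset_left (measure_singleton v)
      rw [MeasureTheory.Measure.restrict_eq_zero.mpr h0, MeasureTheory.integral_zero_measure]
    rw [hz, zero_add] at h
    simpa using h
  have hsum : Tendsto (fun X : ℝ =>
      ∑ v ∈ V, (({p : ℕ | Nat.Prime p ∧ (p:ℝ) ≤ X ∧ B p = v}.ncard : ℝ)) /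
      (({p : ℕ | Nat.Prime p ∧ (p:ℝ) ≤ X}.ncard : ℝ))) atTop
      (𝓝 (∑ v ∈ V, ∑ i, Set.indicator {v} (fun _ => w i) (x i))) :=
    tendsto_finset_sum _ hvlim
  have hmain := hSdens J hJ hJc
  have hfinal := hmain.sub hsum
  have hval : ((∫ t in J ∩ Set.Ioo (-1:ℝ) 1, f t) + ∑ i, Set.indicator J (fun _ => w i) (x i))
      - (∑ v ∈ V, ∑ i, Set.indicator {v} (fun _ => w i) (x i))
      = ∫ t in J ∩ Set.Ioo (-1:ℝ) 1, f t := by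
    have hswap : ∑ v ∈ V, ∑ i, Set.indicator {v} (fun _ => w i) (x i)
        = ∑ i, Set.indicator J (fun _ => w i) (x i) := by
      rw [Finset.sum_comm]
      congr 1
      ext i
      simp only [Set.indicator_apply, Set.mem_singleton_iff]
      rw [Finset.sum_ite_eq V (x i) (fun _ => w i)]
      congr 1
      · simp only [hmemV, eq_iff_iff]
        constructor
        · rintro ⟨-, h⟩; exact h
        · intro h; exact ⟨⟨i, rfl⟩, h⟩
    rw [hswap]; ring
  rw [hval] at hfinal
  apply hfinal.congr
  intro X
  have hc : ({p : ℕ | Nat.Prime p ∧ (p:ℝ) ≤ X ∧ B p ∈ J}.ncard : ℝ)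
      = ({p : ℕ | Nat.Prime p ∧ (p:ℝ) ≤ X ∧ B p ∈ J ∧ B p ∉ Set.range x}.ncard : ℝ)
        + ∑ v ∈ V, ({p : ℕ | Nat.Prime p ∧ (p:ℝ) ≤ X ∧ B p = v}.ncard : ℝ) := by
    exact_mod_cast congrArg (Nat.cast : ℕ → ℝ) (key X)
  rw [hc, add_div, Finset.sum_div]
  ring

private lemma out_density (B : ℕ → ℝ)
    (h1 : Tendsto (fun X : ℝ =>
        (({p : ℕ | Nat.Prime p ∧ (p:ℝ) ≤ X ∧ B p ∈ Set.Icc (-1:ℝ) 1}.ncard : ℝ)) /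
        (({p : ℕ | Nat.Prime p ∧ (p:ℝ) ≤ X}.ncard : ℝ))) atTop (𝓝 1)) :
    Tendsto (fun X : ℝ =>
        (({p : ℕ | Nat.Prime p ∧ (p:ℝ) ≤ X ∧ B p ∉ Set.Icc (-1:ℝ) 1}.ncard : ℝ)) /
        (({p : ℕ | Nat.Prime p ∧ (p:ℝ) ≤ X}.ncard : ℝ))) atTop (𝓝 0) := by
  classical
  have key : ∀ X : ℝ, {p : ℕ | Nat.Prime p ∧ (p:ℝ) ≤ X}.ncard
      = {p : ℕ | Nat.Prime p ∧ (p:ℝ) ≤ X ∧ B p ∈ Set.Icc (-1:ℝ) 1}.ncard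
        + {p : ℕ | Nat.Prime p ∧ (p:ℝ) ≤ X ∧ B p ∉ Set.Icc (-1:ℝ) 1}.ncard := by
    intro X
    rw [ncard_primes_filter X (fun p => B p ∈ Set.Icc (-1:ℝ) 1),
        ncard_primes_filter X (fun p => B p ∉ Set.Icc (-1:ℝ) 1)]
    have hπ : {p : ℕ | Nat.Prime p ∧ (p:ℝ) ≤ X}.ncard
        = (primesUpTo_finite X).toFinset.card := by
      rw [← Set.ncard_coe_finset, Set.Finite.coe_toFinset]
    rw [hπ, ← Finset.card_filter_add_card_filter_not
      (s := (primesUpTo_finite X).toFinset) (p := fun p => B p ∈ Set.Icc (-1:ℝ) 1)]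
  have hcongr : (fun X : ℝ => 1 -
      (({p : ℕ | Nat.Prime p ∧ (p:ℝ) ≤ X ∧ B p ∈ Set.Icc (-1:ℝ) 1}.ncard : ℝ)) /
      (({p : ℕ | Nat.Prime p ∧ (p:ℝ) ≤ X}.ncard : ℝ)))
      =ᶠ[atTop] (fun X : ℝ =>
      (({p : ℕ | Nat.Prime p ∧ (p:ℝ) ≤ X ∧ B p ∉ Set.Icc (-1:ℝ) 1}.ncard : ℝ)) /
      (({p : ℕ | Nat.Prime p ∧ (p:ℝ) ≤ X}.ncard : ℝ))) := by
    filter_upwards [primesUpTo_tendsto.eventually_gt_atTop 0] with X hX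
    have hπ0 : (({p : ℕ | Nat.Prime p ∧ (p:ℝ) ≤ X}.ncard : ℝ)) ≠ 0 := ne_of_gt hX
    have hc := congrArg (Nat.cast : ℕ → ℝ) (key X)
    push_cast at hc
    rw [eq_div_iff hπ0, sub_mul, div_mul_cancel₀ _ hπ0, one_mul]
    linarith
  have h2 : Tendsto (fun X : ℝ => 1 -
      (({p : ℕ | Nat.Prime p ∧ (p:ℝ) ≤ X ∧ B p ∈ Set.Icc (-1:ℝ) 1}.ncard : ℝ)) /
      (({p : ℕ | Nat.Prime p ∧ (p:ℝ) ≤ X}.ncard : ℝ))) atTop (𝓝 (1 - 1)) :=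
    tendsto_const_nhds.sub h1
  rw [sub_self] at h2
  exact h2.congr' hcongr
set_option maxHeartbeats 2000000

/-- Let `χ` be a Dirichlet character of order dividing 2, `B : ℙ → ℝ`,
`y ≠ 0`, and `A(p) := B(p) − χ(p)/(y√p)`. Let `D = {x₁,…,x_n} ⊆ [−1,1]`, let `f ≥ 0` be
integrable on `(−1,1)`, `w_i ≥ 0`, and let `μ(E) = ∫_E f + Σ w_i δ_{x_i}(E)` be the associated
probability measure on `[−1,1]`. If for every subinterval `I ⊆ [−1,1]` the set
`S_I = {p : B(p) ∈ I}` has natural density `μ(I)`, then for every subinterval `I ⊆ [−1,1]`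
the set `T'_I = {p : A(p) ∈ I, B(p) ∉ D}` has natural density `∫_I f`. -/
theorem perturbed_sequence_natural_density
    (N : ℕ) (χ : DirichletCharacter ℝ N) (hχ2 : χ ^ 2 = 1)
    (B : ℕ → ℝ) (y : ℝ) (hy : y ≠ 0)
    (n : ℕ) (x : Fin n → ℝ) (hx : ∀ i, x i ∈ Set.Icc (-1 : ℝ) 1)
    (f : ℝ → ℝ) (hf0 : ∀ t, 0 ≤ f t)
    (hfint : MeasureTheory.IntegrableOn f (Set.Ioo (-1 : ℝ) 1))
    (w : Fin n → ℝ) (hw : ∀ i, 0 ≤ w i)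
    (hnorm : (∫ t in Set.Ioo (-1 : ℝ) 1, f t) + ∑ i, w i = 1)
    (hSdens : ∀ I : Set ℝ, I ⊆ Set.Icc (-1 : ℝ) 1 → I.OrdConnected →
      Tendsto (fun X : ℝ =>
          ({p : ℕ | Nat.Prime p ∧ (p : ℝ) ≤ X ∧ B p ∈ I}.ncard : ℝ) /
            ({p : ℕ | Nat.Prime p ∧ (p : ℝ) ≤ X}.ncard : ℝ))
        atTop
        (𝓝 ((∫ t in I ∩ Set.Ioo (-1 : ℝ) 1, f t) +
          ∑ i, Set.indicator I (fun _ => w i) (x i)))) :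
    ∀ I : Set ℝ, I ⊆ Set.Icc (-1 : ℝ) 1 → I.OrdConnected →
      Tendsto (fun X : ℝ =>
          ({p : ℕ | Nat.Prime p ∧ (p : ℝ) ≤ X ∧
              B p - χ ((p : ℕ) : ZMod N) / (y * Real.sqrt p) ∈ I ∧
              B p ∉ Set.range x}.ncard : ℝ) /
            ({p : ℕ | Nat.Prime p ∧ (p : ℝ) ≤ X}.ncard : ℝ))
        atTop (𝓝 (∫ t in I ∩ Set.Ioo (-1 : ℝ) 1, f t)) := by
  intro I hI hIc
  classical
  by_cases hne : I.Nonempty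
  swap
  · rw [Set.not_nonempty_iff_eq_empty] at hne
    subst hne
    simp only [Set.mem_empty_iff_false, false_and, and_false, Set.setOf_false,
      Set.ncard_empty, Nat.cast_zero, zero_div, Set.empty_inter]
    rw [MeasureTheory.Measure.restrict_empty, MeasureTheory.integral_zero_measure]
    exact tendsto_const_nhds
  obtain ⟨t₀, ht₀⟩ := hne
  -- interval endpoints
  set a := sInf I with hadef
  set b := sSup I with hbdef
  have hbb : BddBelow I := BddBelow.mono hI (bddBelow_Icc : BddBelow (Set.Icc (-1:ℝ) 1))
  have hba : BddAbove I := BddAbove.mono hI (bddAbove_Icc (a := (-1:ℝ)) (b := 1))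
  have ha1 : (-1:ℝ) ≤ a := le_csInf ⟨t₀, ht₀⟩ fun t ht => (hI ht).1
  have hb1 : b ≤ 1 := csSup_le ⟨t₀, ht₀⟩ fun t ht => (hI ht).2
  have hIab : I ⊆ Set.Icc a b := fun t ht => ⟨csInf_le hbb ht, le_csSup hba ht⟩
  have hab : a ≤ b := (hIab ht₀).1.trans (hIab ht₀).2
  have hIooab : Set.Ioo a b ⊆ I := by
    rintro t ⟨h1, h2⟩
    obtain ⟨u, hu, hu2⟩ := (csInf_lt_iff hbb ⟨t₀, ht₀⟩).mp h1
    obtain ⟨v, hv, hv2⟩ := (lt_csSup_iff hba ⟨t₀, ht₀⟩).mp h2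
    exact hIc.out hu hv ⟨le_of_lt hu2, le_of_lt hv2⟩
  set L := ∫ t in I ∩ Set.Ioo (-1:ℝ) 1, f t with hLdef
  -- a.e.-equality of integrals over interval variants
  have hsub : ∀ s t : Set ℝ, Set.Ioo a b ⊆ s → s ⊆ Set.Icc a b →
      Set.Ioo a b ⊆ t → t ⊆ Set.Icc a b →
      (∫ u in s ∩ Set.Ioo (-1:ℝ) 1, f u) = ∫ u in t ∩ Set.Ioo (-1:ℝ) 1, f u := by
    have hdiff : ∀ s t : Set ℝ, s ⊆ Set.Icc a b → Set.Ioo a b ⊆ t →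
        MeasureTheory.volume ((s ∩ Set.Ioo (-1:ℝ) 1) \ (t ∩ Set.Ioo (-1:ℝ) 1)) = 0 := by
      intro s t hs2 ht1
      apply measure_mono_null _ (((Set.countable_singleton b).insert a).measure_zero
        MeasureTheory.volume)
      rintro r ⟨⟨hr1, hrO⟩, hr2⟩
      simp only [Set.mem_insert_iff, Set.mem_singleton_iff]
      by_contra hc
      push_neg at hc
      exact hr2 ⟨ht1 ⟨lt_of_le_of_ne (hs2 hr1).1 (Ne.symm hc.1),
        lt_of_le_of_ne (hs2 hr1).2 hc.2⟩, hrO⟩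
    intro s t hs1 hs2 ht1 ht2
    apply MeasureTheory.setIntegral_congr_set
    rw [MeasureTheory.ae_eq_set]
    exact ⟨hdiff s t hs2 ht1, hdiff t s ht2 hs1⟩
  -- out-of-Icc density is zero
  have hOut : Tendsto (fun X : ℝ =>
      (({p : ℕ | Nat.Prime p ∧ (p:ℝ) ≤ X ∧ B p ∉ Set.Icc (-1:ℝ) 1}.ncard : ℝ)) /
      (({p : ℕ | Nat.Prime p ∧ (p:ℝ) ≤ X}.ncard : ℝ))) atTop (𝓝 0) := by
    apply out_density
    have hIcc := hSdens (Set.Icc (-1:ℝ) 1) subset_rfl Set.ordConnected_Icc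
    have h1 : Set.Icc (-1:ℝ) 1 ∩ Set.Ioo (-1:ℝ) 1 = Set.Ioo (-1:ℝ) 1 :=
      Set.inter_eq_self_of_subset_right Set.Ioo_subset_Icc_self
    have h2 : ∑ i, Set.indicator (Set.Icc (-1:ℝ) 1) (fun _ => w i) (x i) = ∑ i, w i :=
      Finset.sum_congr rfl fun i _ => Set.indicator_of_mem (hx i) _
    rw [h1, h2, hnorm] at hIcc
    exact hIcc
  -- the two families of approximating integrals
  have hLm : Tendsto (fun k : ℕ =>
      ∫ t in Set.Icc (a + 1/(k+1)) (b - 1/(k+1)) ∩ Set.Ioo (-1:ℝ) 1, f t)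
      atTop (𝓝 L) := by
    have hU : (⋃ k : ℕ, Set.Icc (a + 1/(k+1)) (b - 1/(k+1)) ∩ Set.Ioo (-1:ℝ) 1)
        = Set.Ioo a b ∩ Set.Ioo (-1:ℝ) 1 := by
      rw [← Set.iUnion_inter]
      congr 1
      ext t
      simp only [Set.mem_iUnion, Set.mem_Icc, Set.mem_Ioo]
      constructor
      · rintro ⟨k, h1, h2⟩
        have hk : (0:ℝ) < 1/(k+1) := by positivity
        constructor <;> linarith
      · rintro ⟨h1, h2⟩
        obtain ⟨k, hk⟩ := exists_nat_one_div_lt (lt_min (sub_pos.mpr h1) (sub_pos.mpr h2))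
        exact ⟨k, by have := (lt_min_iff.mp hk).1; linarith,
          by have := (lt_min_iff.mp hk).2; linarith⟩
    have := MeasureTheory.tendsto_setIntegral_of_monotone
      (s := fun k : ℕ => Set.Icc (a + 1/(k+1)) (b - 1/(k+1)) ∩ Set.Ioo (-1:ℝ) 1)
      (fun k => measurableSet_Icc.inter measurableSet_Ioo)
      (by
        intro k l hkl
        apply Set.inter_subset_inter_left
        apply Set.Icc_subset_Icc
        · have : (1:ℝ)/(l+1) ≤ 1/(k+1) := by
            apply one_div_le_one_div_of_le (by positivity)
            push_cast
            linarith [(Nat.cast_le (α := ℝ)).mpr hkl]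
          linarith
        · have : (1:ℝ)/(l+1) ≤ 1/(k+1) := by
            apply one_div_le_one_div_of_le (by positivity)
            push_cast
            linarith [(Nat.cast_le (α := ℝ)).mpr hkl]
          linarith)
      (f := f) (μ := MeasureTheory.volume)
      (by rw [hU]; exact hfint.mono_set Set.inter_subset_right)
    rw [hU] at this
    rwa [hsub (Set.Ioo a b) I Set.Subset.rfl Set.Ioo_subset_Icc_self hIooab hIab] at this
  have hLp : Tendsto (fun k : ℕ =>
      ∫ t in Set.Icc (max (-1) (a - 1/(k+1))) (min 1 (b + 1/(k+1))) ∩ Set.Ioo (-1:ℝ) 1, f t)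
      atTop (𝓝 L) := by
    have hU : (⋂ k : ℕ, Set.Icc (max (-1) (a - 1/(k+1))) (min 1 (b + 1/(k+1)))
          ∩ Set.Ioo (-1:ℝ) 1)
        = Set.Icc a b ∩ Set.Ioo (-1:ℝ) 1 := by
      rw [← Set.iInter_inter]
      congr 1
      have hmaxa : max (-1:ℝ) a = a := max_eq_right ha1
      have hminb : min (1:ℝ) b = b := min_eq_right hb1
      ext t
      simp only [Set.mem_iInter, Set.mem_Icc]
      constructor
      · intro h
        have hm1 : (-1:ℝ) ≤ t := le_trans (le_max_left _ _) (h 0).1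
        have h1' : t ≤ 1 := (h 0).2.trans (min_le_left _ _)
        have ha' : a ≤ t := by
          by_contra hc
          push_neg at hc
          obtain ⟨k, hk⟩ := exists_nat_one_div_lt (sub_pos.mpr hc)
          have := le_trans (le_max_right (-1:ℝ) _) (h k).1
          linarith
        have hb' : t ≤ b := by
          by_contra hc
          push_neg at hc
          obtain ⟨k, hk⟩ := exists_nat_one_div_lt (sub_pos.mpr hc)
          have := (h k).2.trans (min_le_right (1:ℝ) _)
          linarith
        exact ⟨ha', hb'⟩
      · rintro ⟨h1, h2⟩ k
        have hk : (0:ℝ) < 1/(k+1) := by positivity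
        exact ⟨max_le (by linarith) (by linarith), le_min (by linarith) (by linarith)⟩
    have := MeasureTheory.tendsto_setIntegral_of_antitone
      (s := fun k : ℕ => Set.Icc (max (-1) (a - 1/(k+1))) (min 1 (b + 1/(k+1)))
        ∩ Set.Ioo (-1:ℝ) 1)
      (fun k => measurableSet_Icc.inter measurableSet_Ioo)
      (by
        intro k l hkl
        apply Set.inter_subset_inter_left
        apply Set.Icc_subset_Icc
        · have : (1:ℝ)/(l+1) ≤ 1/(k+1) := by
            apply one_div_le_one_div_of_le (by positivity)
            push_cast
            linarith [(Nat.cast_le (α := ℝ)).mpr hkl]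
          exact max_le_max le_rfl (by linarith)
        · have : (1:ℝ)/(l+1) ≤ 1/(k+1) := by
            apply one_div_le_one_div_of_le (by positivity)
            push_cast
            linarith [(Nat.cast_le (α := ℝ)).mpr hkl]
          exact min_le_min le_rfl (by linarith))
      (f := f) (μ := MeasureTheory.volume)
      ⟨0, hfint.mono_set Set.inter_subset_right⟩
    rw [hU] at this
    rwa [hsub (Set.Icc a b) I Set.Ioo_subset_Icc_self Set.Subset.rfl hIooab hIab] at this
  -- main ε-δ argument
  rw [Metric.tendsto_nhds]
  intro δ hδ
  have h8 : (0:ℝ) < δ/8 := by linarith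
  obtain ⟨k₁, hk₁⟩ := (hLm.eventually (eventually_gt_nhds (by linarith : L - δ/8 < L))).exists
  obtain ⟨k₂, hk₂⟩ := (hLp.eventually (eventually_lt_nhds (by linarith : L < L + δ/8))).exists
  set ε₁ : ℝ := 1/((k₁:ℝ)+1) with hε₁def
  set ε₂ : ℝ := 1/((k₂:ℝ)+1) with hε₂def
  have hε₁ : 0 < ε₁ := by positivity
  have hε₂ : 0 < ε₂ := by positivity
  set ε' : ℝ := min ε₁ ε₂ with hε'def
  have hε' : 0 < ε' := lt_min hε₁ hε₂
  set Jm : Set ℝ := Set.Icc (a + ε₁) (b - ε₁) with hJmdef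
  set Jp : Set ℝ := Set.Icc (max (-1) (a - ε₂)) (min 1 (b + ε₂)) with hJpdef
  have hJmsub : Jm ⊆ Set.Icc (-1:ℝ) 1 :=
    Set.Icc_subset_Icc (by linarith) (by linarith)
  have hJpsub : Jp ⊆ Set.Icc (-1:ℝ) 1 :=
    Set.Icc_subset_Icc (le_max_left _ _) (min_le_left _ _)
  have dm := density_without_atoms x hx w B f hSdens Jm hJmsub Set.ordConnected_Icc
  have dp := density_without_atoms x hx w B f hSdens Jp hJpsub Set.ordConnected_Icc
  -- choose the prime threshold P
  have hy' : (0:ℝ) < |y| := abs_pos.mpr hy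
  set c : ℝ := 1/(|y| * ε') with hcdef
  have hc0 : 0 ≤ c := by positivity
  set P : ℕ := ⌈c^2⌉₊ + 1 with hPdef
  have hP : ∀ p : ℕ, Nat.Prime p → (P:ℝ) ≤ p →
      |χ ((p : ℕ) : ZMod N) / (y * Real.sqrt p)| < ε' := by
    intro p hp hpP
    have hcp : c^2 < (p:ℝ) := by
      have h1 : (c^2 : ℝ) ≤ ⌈c^2⌉₊ := Nat.le_ceil _
      have h2 : ((⌈c^2⌉₊ : ℕ) : ℝ) + 1 ≤ (p:ℝ) := by
        rw [hPdef] at hpP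
        push_cast at hpP
        linarith
      linarith
    have hsq : c < Real.sqrt p :=
      (Real.lt_sqrt hc0).mpr hcp
    have hsp : 0 < Real.sqrt p := lt_of_le_of_lt hc0 hsq
    have hb1' : |χ ((p : ℕ) : ZMod N)| ≤ 1 := chi_abs_le_one χ hχ2 _
    have heq : |χ ((p : ℕ) : ZMod N) / (y * Real.sqrt p)|
        = |χ ((p : ℕ) : ZMod N)| / (|y| * Real.sqrt p) := by
      rw [abs_div, abs_mul, abs_of_nonneg (Real.sqrt_nonneg _)]
    rw [heq]
    have hstep : |χ ((p : ℕ) : ZMod N)| / (|y| * Real.sqrt p) ≤ 1 / (|y| * Real.sqrt p) := by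
      gcongr
    have hfin : 1 / (|y| * Real.sqrt p) < ε' := by
      rw [div_lt_iff₀ (by positivity)]
      have h1 : (|y| * ε') * c = 1 := by
        rw [hcdef]
        field_simp
      nlinarith [mul_pos (mul_pos hy' hε') (sub_pos.mpr hsq)]
    linarith
  -- counting inequalities
  have hPcard : ({p : ℕ | p < P}).ncard = P := by
    have h : {p : ℕ | p < P} = ↑(Finset.range P) := by ext p; simp
    rw [h, Set.ncard_coe_finset, Finset.card_range]
  have hTfin : ∀ X : ℝ, ({p : ℕ | Nat.Prime p ∧ (p : ℝ) ≤ X ∧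
      B p - χ ((p : ℕ) : ZMod N) / (y * Real.sqrt p) ∈ I ∧
      B p ∉ Set.range x}).Finite :=
    fun X => (primesUpTo_finite X).subset (fun p hp => ⟨hp.1, hp.2.1⟩)
  have n1 : ∀ X : ℝ,
      ({p : ℕ | Nat.Prime p ∧ (p:ℝ) ≤ X ∧ B p ∈ Jm ∧ B p ∉ Set.range x}.ncard : ℝ)
        ≤ ({p : ℕ | Nat.Prime p ∧ (p : ℝ) ≤ X ∧
            B p - χ ((p : ℕ) : ZMod N) / (y * Real.sqrt p) ∈ I ∧
            B p ∉ Set.range x}.ncard : ℝ) + P := by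
    intro X
    have hsubm : {p : ℕ | Nat.Prime p ∧ (p:ℝ) ≤ X ∧ B p ∈ Jm ∧ B p ∉ Set.range x}
        ⊆ {p : ℕ | Nat.Prime p ∧ (p : ℝ) ≤ X ∧
            B p - χ ((p : ℕ) : ZMod N) / (y * Real.sqrt p) ∈ I ∧
            B p ∉ Set.range x} ∪ {p : ℕ | p < P} := by
      rintro p ⟨hp1, hp2, hp3, hp4⟩
      rcases lt_or_ge p P with h | h
      · exact Or.inr h
      · left
        refine ⟨hp1, hp2, ?_, hp4⟩
        have hpert := hP p hp1 (by exact_mod_cast h)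
        have hper1 : |χ ((p : ℕ) : ZMod N) / (y * Real.sqrt p)| < ε₁ :=
          lt_of_lt_of_le hpert (min_le_left _ _)
        rw [hJmdef, Set.mem_Icc] at hp3
        rw [abs_lt] at hper1
        apply hIooab
        rw [Set.mem_Ioo]
        constructor <;> [linarith [hp3.1]; linarith [hp3.2]]
    calc ({p : ℕ | Nat.Prime p ∧ (p:ℝ) ≤ X ∧ B p ∈ Jm ∧ B p ∉ Set.range x}.ncard : ℝ)
        ≤ (({p : ℕ | Nat.Prime p ∧ (p : ℝ) ≤ X ∧
            B p - χ ((p : ℕ) : ZMod N) / (y * Real.sqrt p) ∈ I ∧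
            B p ∉ Set.range x} ∪ {p : ℕ | p < P}).ncard : ℝ) := by
          exact_mod_cast Set.ncard_le_ncard hsubm
            ((hTfin X).union (Set.finite_Iio P))
      _ ≤ ({p : ℕ | Nat.Prime p ∧ (p : ℝ) ≤ X ∧
            B p - χ ((p : ℕ) : ZMod N) / (y * Real.sqrt p) ∈ I ∧
            B p ∉ Set.range x}.ncard : ℝ) + ({p : ℕ | p < P}.ncard : ℝ) := by
          exact_mod_cast Set.ncard_union_le _ _
      _ = _ := by rw [hPcard]
  have n2 : ∀ X : ℝ,
      ({p : ℕ | Nat.Prime p ∧ (p : ℝ) ≤ X ∧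
          B p - χ ((p : ℕ) : ZMod N) / (y * Real.sqrt p) ∈ I ∧
          B p ∉ Set.range x}.ncard : ℝ)
        ≤ ({p : ℕ | Nat.Prime p ∧ (p:ℝ) ≤ X ∧ B p ∈ Jp ∧ B p ∉ Set.range x}.ncard : ℝ)
          + ({p : ℕ | Nat.Prime p ∧ (p:ℝ) ≤ X ∧ B p ∉ Set.Icc (-1:ℝ) 1}.ncard : ℝ) + P := by
    intro X
    have hsubp : {p : ℕ | Nat.Prime p ∧ (p : ℝ) ≤ X ∧
          B p - χ ((p : ℕ) : ZMod N) / (y * Real.sqrt p) ∈ I ∧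
          B p ∉ Set.range x}
        ⊆ ({p : ℕ | Nat.Prime p ∧ (p:ℝ) ≤ X ∧ B p ∈ Jp ∧ B p ∉ Set.range x}
          ∪ {p : ℕ | Nat.Prime p ∧ (p:ℝ) ≤ X ∧ B p ∉ Set.Icc (-1:ℝ) 1})
          ∪ {p : ℕ | p < P} := by
      rintro p ⟨hp1, hp2, hp3, hp4⟩
      rcases lt_or_ge p P with h | h
      · exact Or.inr h
      · left
        by_cases hBIcc : B p ∈ Set.Icc (-1:ℝ) 1
        · left
          refine ⟨hp1, hp2, ?_, hp4⟩
          have hpert := hP p hp1 (by exact_mod_cast h)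
          have hper2 : |χ ((p : ℕ) : ZMod N) / (y * Real.sqrt p)| < ε₂ :=
            lt_of_lt_of_le hpert (min_le_right _ _)
          rw [abs_lt] at hper2
          have hA := hIab hp3
          rw [Set.mem_Icc] at hA hBIcc
          rw [hJpdef, Set.mem_Icc]
          constructor
          · exact max_le (by linarith [hBIcc.1]) (by linarith [hA.1])
          · exact le_min (by linarith [hBIcc.2]) (by linarith [hA.2])
        · exact Or.inr ⟨hp1, hp2, hBIcc⟩
    calc ({p : ℕ | Nat.Prime p ∧ (p : ℝ) ≤ X ∧
          B p - χ ((p : ℕ) : ZMod N) / (y * Real.sqrt p) ∈ I ∧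
          B p ∉ Set.range x}.ncard : ℝ)
        ≤ ((({p : ℕ | Nat.Prime p ∧ (p:ℝ) ≤ X ∧ B p ∈ Jp ∧ B p ∉ Set.range x}
          ∪ {p : ℕ | Nat.Prime p ∧ (p:ℝ) ≤ X ∧ B p ∉ Set.Icc (-1:ℝ) 1})
          ∪ {p : ℕ | p < P}).ncard : ℝ) := by
          refine Nat.cast_le.mpr (Set.ncard_le_ncard hsubp ?_)
          exact (((primesUpTo_finite X).subset (fun p hp => ⟨hp.1, hp.2.1⟩)).union
            ((primesUpTo_finite X).subset (fun p hp => ⟨hp.1, hp.2.1⟩))).union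
            (Set.finite_Iio P)
      _ ≤ (({p : ℕ | Nat.Prime p ∧ (p:ℝ) ≤ X ∧ B p ∈ Jp ∧ B p ∉ Set.range x}
          ∪ {p : ℕ | Nat.Prime p ∧ (p:ℝ) ≤ X ∧ B p ∉ Set.Icc (-1:ℝ) 1}).ncard : ℝ)
          + ({p : ℕ | p < P}.ncard : ℝ) := by
          exact_mod_cast Set.ncard_union_le _ _
      _ ≤ ({p : ℕ | Nat.Prime p ∧ (p:ℝ) ≤ X ∧ B p ∈ Jp ∧ B p ∉ Set.range x}.ncard : ℝ)
          + ({p : ℕ | Nat.Prime p ∧ (p:ℝ) ≤ X ∧ B p ∉ Set.Icc (-1:ℝ) 1}.ncard : ℝ)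
          + ({p : ℕ | p < P}.ncard : ℝ) := by
          have := Set.ncard_union_le
            {p : ℕ | Nat.Prime p ∧ (p:ℝ) ≤ X ∧ B p ∈ Jp ∧ B p ∉ Set.range x}
            {p : ℕ | Nat.Prime p ∧ (p:ℝ) ≤ X ∧ B p ∉ Set.Icc (-1:ℝ) 1}
          have h5 := (Nat.cast_le (α := ℝ)).mpr this
          push_cast at h5 ⊢
          linarith
      _ = _ := by rw [hPcard]
  -- assemble
  have e1 := dm.eventually (eventually_gt_nhds hk₁)
  have e2 := dp.eventually (eventually_lt_nhds hk₂)
  have e3 := hOut.eventually (eventually_lt_nhds h8)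
  have e4 := ((tendsto_const_nhds (x := (P:ℝ))).div_atTop primesUpTo_tendsto).eventually
    (eventually_lt_nhds h8)
  have e5 := primesUpTo_tendsto.eventually_gt_atTop 0
  filter_upwards [e1, e2, e3, e4, e5] with X hX1 hX2 hX3 hX4 hX5
  rw [Real.dist_eq, abs_lt]
  have hπpos : (0:ℝ) < ({p : ℕ | Nat.Prime p ∧ (p:ℝ) ≤ X}.ncard : ℝ) := hX5
  have b1 : ({p : ℕ | Nat.Prime p ∧ (p:ℝ) ≤ X ∧ B p ∈ Jm ∧ B p ∉ Set.range x}.ncard : ℝ)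
      / ({p : ℕ | Nat.Prime p ∧ (p:ℝ) ≤ X}.ncard : ℝ)
      ≤ ({p : ℕ | Nat.Prime p ∧ (p : ℝ) ≤ X ∧
          B p - χ ((p : ℕ) : ZMod N) / (y * Real.sqrt p) ∈ I ∧
          B p ∉ Set.range x}.ncard : ℝ) / ({p : ℕ | Nat.Prime p ∧ (p:ℝ) ≤ X}.ncard : ℝ)
        + (P:ℝ) / ({p : ℕ | Nat.Prime p ∧ (p:ℝ) ≤ X}.ncard : ℝ) := by
    rw [← add_div]
    exact div_le_div_of_nonneg_right (n1 X) hπpos.le |>.trans_eq rfl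
  have b2 : ({p : ℕ | Nat.Prime p ∧ (p : ℝ) ≤ X ∧
          B p - χ ((p : ℕ) : ZMod N) / (y * Real.sqrt p) ∈ I ∧
          B p ∉ Set.range x}.ncard : ℝ) / ({p : ℕ | Nat.Prime p ∧ (p:ℝ) ≤ X}.ncard : ℝ)
      ≤ ({p : ℕ | Nat.Prime p ∧ (p:ℝ) ≤ X ∧ B p ∈ Jp ∧ B p ∉ Set.range x}.ncard : ℝ)
          / ({p : ℕ | Nat.Prime p ∧ (p:ℝ) ≤ X}.ncard : ℝ)
        + ({p : ℕ | Nat.Prime p ∧ (p:ℝ) ≤ X ∧ B p ∉ Set.Icc (-1:ℝ) 1}.ncard : ℝ)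
          / ({p : ℕ | Nat.Prime p ∧ (p:ℝ) ≤ X}.ncard : ℝ)
        + (P:ℝ) / ({p : ℕ | Nat.Prime p ∧ (p:ℝ) ≤ X}.ncard : ℝ) := by
    rw [← add_div, ← add_div]
    exact div_le_div_of_nonneg_right (n2 X) hπpos.le |>.trans_eq rfl
  constructor
  · linarith
  · linarith
end
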